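/- arXiv:2402.09232 — 7 statements merged into one kernel-verified Lean document; each statement's English description precedes it below -/
import Mathlib

section
/- For every integer d ≥ 0 there exists a sequence of nonempty strings (T_m) with |T_m| → ∞ such that g_it(d)(T_m) = o(ℓ(T_m)), i.e., g_it(d)(T_m)/ℓ(T_m) → 0 as m → ∞. -/
/-- Rules of an iterated SLP over alphabet `α` with variables `Fin N`. -/
inductive ISLPRule (α : Type) (N : ℕ) : Type
  | term (a : α)
  | pair (B C : Fin N)
  | iter (k1 k2 : ℕ) (Bs : List (Fin N × ℕ))

namespace ISLPRule

variable {α : Type} {N : ℕ}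

/-- Variables occurring in the right-hand side of a rule. -/
def vars : ISLPRule α N → List (Fin N)
  | .term _ => []
  | .pair B C => [B, C]
  | .iter _ _ Bs => Bs.map Prod.fst

/-- The size of a rule: 1 for `A → a`, 2 for `A → BC`, `2 + 2t` for iteration rules. -/
def size : ISLPRule α N → ℕ
  | .term _ => 1
  | .pair _ _ => 2
  | .iter _ _ Bs => 2 + 2 * Bs.length

/-- Validity of a rule in a `d`-ISLP: in iteration rules, `k1, k2 ≥ 1`,
`t ≥ 1` and all exponents `c_j` satisfy `c_j ≤ d`. -/
def Ok (d : ℕ) : ISLPRule α N → Prop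
  | .term _ => True
  | .pair _ _ => True
  | .iter k1 k2 Bs => 1 ≤ k1 ∧ 1 ≤ k2 ∧ Bs ≠ [] ∧ ∀ p ∈ Bs, p.2 ≤ d

/-- A rule is an SLP rule if it is of the form `A → a` or `A → BC`. -/
def isSLP : ISLPRule α N → Prop
  | .term _ => True
  | .pair _ _ => True
  | .iter _ _ _ => False

end ISLPRule

/-- `w` repeated `k` times, i.e. `w^k`. -/
def repList {α : Type} (w : List α) (k : ℕ) : List α := (List.replicate k w).flatten

/-- The list `k1, k1±1, …, k2` (increasing if `k1 ≤ k2`, decreasing if `k1 > k2`). -/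
def rangeK (k1 k2 : ℕ) : List ℕ :=
  if k1 ≤ k2 then (List.range (k2 + 1 - k1)).map (k1 + ·)
  else (List.range (k1 + 1 - k2)).map (k1 - ·)

/-- Expansion of one block `w_1^{i^{c_1}} ⋯ w_t^{i^{c_t}}`, where
`ps = [(w_1, c_1), …, (w_t, c_t)]`. -/
def iterBlock {α : Type} (ps : List (List α × ℕ)) (i : ℕ) : List α :=
  (ps.map (fun p => repList p.1 (i ^ p.2))).flatten

/-- Expansion of `∏_{i=k1}^{k2} w_1^{i^{c_1}} ⋯ w_t^{i^{c_t}}`. -/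
def iterExpand {α : Type} (k1 k2 : ℕ) (ps : List (List α × ℕ)) : List α :=
  ((rangeK k1 k2).map (iterBlock ps)).flatten

/-- A `d`-ISLP: variables `Fin N`, exactly one valid rule per variable, a start
variable, and acyclicity (variables are topologically ordered: every variable
occurring in the rule of `A` is smaller than `A`). -/
structure ISLP (α : Type) (d : ℕ) : Type where
  N : ℕ
  rule : Fin N → ISLPRule α N
  start : Fin N
  ok : ∀ A, (rule A).Ok d
  acyclic : ∀ A, ∀ B ∈ (rule A).vars, B < A

namespace ISLP

/-- `Expands rule A w` holds iff the (unique) expansion of variable `A` is `w`. -/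
inductive Expands {α : Type} {N : ℕ} (rule : Fin N → ISLPRule α N) : Fin N → List α → Prop
  | term {A : Fin N} {a : α} : rule A = .term a → Expands rule A [a]
  | pair {A B C : Fin N} {u v : List α} : rule A = .pair B C →
      Expands rule B u → Expands rule C v → Expands rule A (u ++ v)
  | iter {A : Fin N} {k1 k2 : ℕ} {Bs : List (Fin N × ℕ)} {ps : List (List α × ℕ)} :
      rule A = .iter k1 k2 Bs →
      ps.map Prod.snd = Bs.map Prod.snd →
      (∀ q ∈ Bs.zip ps, Expands rule q.1.1 q.2.1) →
      Expands rule A (iterExpand k1 k2 ps)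

variable {α : Type} {d : ℕ}

/-- The ISLP `G` generates the string `T`. -/
def Generates (G : ISLP α d) (T : List α) : Prop := Expands G.rule G.start T

/-- The size of an ISLP: the sum of the sizes of its rules. -/
def size (G : ISLP α d) : ℕ := ∑ A : Fin G.N, (G.rule A).size

end ISLP

/-- `g_{it(d)}(T)`: the minimum size of a `d`-ISLP generating `T`. -/
noncomputable def gIt (α : Type) (d : ℕ) (T : List α) : ℕ :=
  sInf {g : ℕ | ∃ G : ISLP α d, G.Generates T ∧ G.size = g}

/-- An L-system (for compression): a finite alphabet `Fin m` of variables, a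
non-erasing morphism `phi`, a coding `tau`, a start variable, a depth and a
length. -/
structure LSystem (α : Type) : Type where
  m : ℕ
  phi : Fin m → List (Fin m)
  phiNE : ∀ v, phi v ≠ []
  tau : Fin m → α
  start : Fin m
  depth : ℕ
  len : ℕ

namespace LSystem

variable {α : Type}

/-- The word `φ^d(S)`. -/
def word (L : LSystem α) : List (Fin L.m) :=
  (fun w => w.flatMap L.phi)^[L.depth] [L.start]

/-- The L-system `L` generates `T` if `|φ^d(S)| ≥ n` and
`T = τ(φ^d(S))[1..n]`, the length-`n` prefix of the coded word. -/
def Generates (L : LSystem α) (T : List α) : Prop :=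
  L.len ≤ L.word.length ∧ T = (L.word.map L.tau).take L.len

/-- The size of an L-system: `Σ_{A ∈ V} |φ(A)|`. -/
def size (L : LSystem α) : ℕ := ∑ v : Fin L.m, (L.phi v).length

end LSystem

/-- `ℓ(T)`: the minimum size of an L-system generating `T`. -/
noncomputable def ell {α : Type} (T : List α) : ℕ :=
  sInf {s : ℕ | ∃ L : LSystem α, L.Generates T ∧ L.size = s}


namespace GItEll

variable {m : ℕ}

def step (φ : Fin m → List (Fin m)) (w : List (Fin m)) : List (Fin m) := w.flatMap φ
def Wd (φ : Fin m → List (Fin m)) (t : ℕ) (w : List (Fin m)) : List (Fin m) := (step φ)^[t] w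

variable {φ : Fin m → List (Fin m)}

@[simp] lemma Wd_zero (w : List (Fin m)) : Wd φ 0 w = w := rfl

lemma Wd_succ (t : ℕ) (w : List (Fin m)) : Wd φ (t+1) w = Wd φ t (step φ w) :=
  Function.iterate_succ_apply _ _ _

lemma Wd_succ' (t : ℕ) (w : List (Fin m)) : Wd φ (t+1) w = step φ (Wd φ t w) :=
  Function.iterate_succ_apply' _ _ _

lemma Wd_add (a b : ℕ) (w : List (Fin m)) : Wd φ (a+b) w = Wd φ a (Wd φ b w) :=
  Function.iterate_add_apply _ _ _ _

lemma step_append (u v : List (Fin m)) : step φ (u ++ v) = step φ u ++ step φ v :=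
  List.flatMap_append ..

@[simp] lemma step_nil : step φ [] = [] := rfl

@[simp] lemma Wd_nil (t : ℕ) : Wd φ t ([] : List (Fin m)) = [] := by
  induction t with
  | zero => rfl
  | succ t ih => rw [Wd_succ]; simpa using ih

lemma Wd_append (t : ℕ) (u v : List (Fin m)) :
    Wd φ t (u ++ v) = Wd φ t u ++ Wd φ t v := by
  induction t generalizing u v with
  | zero => rfl
  | succ t ih => rw [Wd_succ, step_append, ih, Wd_succ, Wd_succ]

lemma Wd_flat (t : ℕ) (w : List (Fin m)) :
    Wd φ t w = w.flatMap (fun c => Wd φ t [c]) := by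
  induction w with
  | nil => simp
  | cons c w ih =>
      have : (c :: w) = [c] ++ w := rfl
      rw [this, Wd_append, ih]; simp

section lengths
variable (hφ : ∀ v, φ v ≠ [])
include hφ

lemma length_step_ge (w : List (Fin m)) : w.length ≤ (step φ w).length := by
  induction w with
  | nil => simp [step]
  | cons c w ih =>
      have : step φ (c :: w) = φ c ++ step φ w := rfl
      rw [this, List.length_append]
      have h1 : 1 ≤ (φ c).length := List.length_pos_iff.mpr (hφ c)
      simp only [List.length_cons]; omega

lemma length_Wd_mono {t t' : ℕ} (h : t ≤ t') (w : List (Fin m)) :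
    (Wd φ t w).length ≤ (Wd φ t' w).length := by
  induction t' with
  | zero => simp [Nat.le_zero.mp h]
  | succ t' ih =>
      rcases Nat.lt_or_ge t (t'+1) with h' | h'
      · calc (Wd φ t w).length ≤ (Wd φ t' w).length := ih (by omega)
          _ ≤ (Wd φ (t'+1) w).length := by
              rw [Wd_succ']; exact length_step_ge hφ _
      · have : t = t' + 1 := by omega
        simp [this]

lemma length_le_Wd (t : ℕ) (w : List (Fin m)) : w.length ≤ (Wd φ t w).length :=
  length_Wd_mono hφ (Nat.zero_le t) w

lemma take_Wd (t n : ℕ) (w : List (Fin m)) :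
    (Wd φ t w).take n = (Wd φ t (w.take n)).take n := by
  rcases Nat.lt_or_ge w.length n with h | h
  · rw [List.take_of_length_le (le_of_lt h)]
  · conv_lhs => rw [← List.take_append_drop n w]
    rw [Wd_append]
    have hlen : n ≤ (Wd φ t (w.take n)).length := by
      have := length_le_Wd hφ t (w.take n)
      rw [List.length_take] at this; omega
    rw [List.take_append_of_le_length hlen]

end lengths



/-! ### Bounded and growing letters -/

def Bdd (φ : Fin m → List (Fin m)) (c : Fin m) : Prop :=
  ∃ B, ∀ t, (Wd φ t [c]).length ≤ B

lemma step_singleton (c : Fin m) : step φ [c] = φ c := by simp [step]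

lemma length_Wd_sum (t : ℕ) (w : List (Fin m)) :
    (Wd φ t w).length = (w.map (fun c => (Wd φ t [c]).length)).sum := by
  conv_lhs => rw [Wd_flat]
  rw [List.length_flatMap]

lemma length_le_sum_map {α : Type*} (l : List α) (f : α → ℕ) (h : ∀ x ∈ l, 1 ≤ f x) :
    l.length ≤ (l.map f).sum := by
  induction l with
  | nil => simp
  | cons c l ih =>
      simp only [List.map_cons, List.sum_cons, List.length_cons]
      have h1 := h c (by simp)
      have h2 := ih (fun x hx => h x (by simp [hx]))
      omega

lemma all_one_of_sum_eq {α : Type*} (l : List α) (f : α → ℕ) (h : ∀ x ∈ l, 1 ≤ f x)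
    (hsum : (l.map f).sum = l.length) : ∀ x ∈ l, f x = 1 := by
  induction l with
  | nil => simp
  | cons c l ih =>
      simp only [List.map_cons, List.sum_cons, List.length_cons] at hsum
      have h1 := h c (by simp)
      have h2 := length_le_sum_map l f (fun x hx => h x (by simp [hx]))
      intro x hx
      rcases List.mem_cons.mp hx with rfl | hx
      · omega
      · exact ih (fun y hy => h y (by simp [hy])) (by omega) x hx

lemma sum_eq_length_of_all_one {α : Type*} (l : List α) (f : α → ℕ)
    (h : ∀ x ∈ l, f x = 1) : (l.map f).sum = l.length := by
  induction l with
  | nil => simp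
  | cons c l ih =>
      simp only [List.map_cons, List.sum_cons, List.length_cons,
        h c (by simp), ih (fun y hy => h y (by simp [hy]))]
      omega

/-- Eventual periodicity from a single repeat. -/
lemma Wd_periodic_of_eq {i p : ℕ} {w : List (Fin m)} (hp : Wd φ (i+p) w = Wd φ i w) :
    ∀ t, i ≤ t → Wd φ (t+p) w = Wd φ t w := by
  intro t ht
  have h1 : t + p = (t - i) + (i + p) := by omega
  have h2 : t = (t - i) + i := by omega
  rw [h1, Wd_add, hp, ← Wd_add, ← h2]

section hphi
variable (hφ : ∀ v, φ v ≠ [])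
include hφ

/-- If the `m`-th image of a letter is still a single letter, it stays a single
letter forever. -/
lemma unit_forever {c : Fin m} (h : (Wd φ m [c]).length = 1) :
    ∀ t, (Wd φ t [c]).length = 1 := by
  have hle : ∀ t ≤ m, (Wd φ t [c]).length = 1 := by
    intro t ht
    have h1 : 1 ≤ (Wd φ t [c]).length := by
      have := length_le_Wd hφ t [c]; simpa using this
    have h2 : (Wd φ t [c]).length ≤ (Wd φ m [c]).length := length_Wd_mono hφ ht _
    omega
  -- heads
  have hne : ∀ t, Wd φ t [c] ≠ [] := by
    intro t h'
    have := length_le_Wd hφ t [c]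
    rw [h'] at this; simp at this
  set f : Fin (m+1) → Fin m := fun j => (Wd φ j [c]).head (hne j) with hf
  obtain ⟨i, j, hij, hfij⟩ := Fintype.exists_ne_map_eq_of_card_lt f (by simp)
  -- wlog i < j
  wlog hlt : (i : ℕ) < (j : ℕ) generalizing i j
  · exact this j i (Ne.symm hij) hfij.symm (by omega)
  have heq : Wd φ ((i : ℕ) + ((j : ℕ) - (i : ℕ))) [c] = Wd φ (i : ℕ) [c] := by
    have hi : Wd φ (i : ℕ) [c] = [f i] := by
      rw [hf]
      exact (List.length_eq_one_iff.mp (hle i (by omega))).choose_spec.symm ▸ by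
        obtain ⟨a, ha⟩ := List.length_eq_one_iff.mp (hle i (by omega))
        simp [ha]
    have hj : Wd φ (j : ℕ) [c] = [f j] := by
      obtain ⟨a, ha⟩ := List.length_eq_one_iff.mp (hle j (by omega))
      simp [hf, ha]
    have : (i : ℕ) + ((j : ℕ) - (i : ℕ)) = (j : ℕ) := by omega
    rw [this, hi, hj, hfij]
  have hper := Wd_periodic_of_eq (φ := φ) heq
  set p := (j : ℕ) - (i : ℕ) with hp
  have hppos : 0 < p := by omega
  -- strong induction on s for t = i + s
  have key : ∀ s, (Wd φ ((i : ℕ) + s) [c]).length = 1 := by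
    intro s
    induction s using Nat.strong_induction_on with
    | _ s ih =>
        rcases Nat.lt_or_ge ((i : ℕ) + s) (m+1) with hs | hs
        · exact hle _ (by omega)
        · have hsp : p ≤ s := by omega
          have : (i : ℕ) + s = ((i : ℕ) + (s - p)) + p := by omega
          rw [this, hper _ (by omega)]
          exact ih (s - p) (by omega)
  intro t
  rcases Nat.lt_or_ge t (i : ℕ) with ht | ht
  · exact hle t (by omega)
  · have : t = (i : ℕ) + (t - (i : ℕ)) := by omega
    rw [this]; exact key _

/-- A growing letter grows by at least one every `m` steps. -/
lemma growing_growth {c : Fin m} (hc : ¬ Bdd φ c) (t : ℕ) :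
    (Wd φ t [c]).length + 1 ≤ (Wd φ (t+m) [c]).length := by
  by_contra hcon
  have hmono := length_Wd_mono hφ (show t ≤ t + m by omega) [c]
  have heq : (Wd φ (t+m) [c]).length = (Wd φ t [c]).length := by omega
  -- every letter of Wd t [c] is a forever-unit
  have hrepr : Wd φ (t+m) [c] = Wd φ m (Wd φ t [c]) := by
    rw [show t + m = m + t by omega, Wd_add]
  have hsum : ((Wd φ t [c]).map (fun e => (Wd φ m [e]).length)).sum
      = (Wd φ t [c]).length := by
    rw [← length_Wd_sum, ← hrepr, heq]
  have hone : ∀ e ∈ Wd φ t [c], (Wd φ m [e]).length = 1 :=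
    all_one_of_sum_eq _ _ (fun e _ => by simpa using length_le_Wd hφ m [e]) hsum
  have hunit : ∀ e ∈ Wd φ t [c], ∀ s, (Wd φ s [e]).length = 1 :=
    fun e he => unit_forever hφ (hone e he)
  apply hc
  refine ⟨(Wd φ t [c]).length, fun u => ?_⟩
  rcases Nat.lt_or_ge u t with hu | hu
  · exact length_Wd_mono hφ (by omega) [c]
  · have : u = (u - t) + t := by omega
    rw [this, Wd_add, length_Wd_sum]
    rw [sum_eq_length_of_all_one _ _ (fun e he => hunit e he (u - t))]

lemma growing_length_ge {c : Fin m} (hc : ¬ Bdd φ c) :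
    ∀ n t, m * n ≤ t → n ≤ (Wd φ t [c]).length := by
  have key : ∀ n, n ≤ (Wd φ (m * n) [c]).length := by
    intro n
    induction n with
    | zero => simp
    | succ n ih =>
        have := growing_growth hφ hc (m * n)
        have harith : m * n + m = m * (n + 1) := by ring
        rw [harith] at this; omega
  intro n t ht
  exact le_trans (key n) (length_Wd_mono hφ ht [c])

end hphi

lemma mem_Wd_split {e : Fin m} {t : ℕ} {w : List (Fin m)} (he : e ∈ Wd φ t w) :
    ∃ l1 l2, Wd φ t w = l1 ++ e :: l2 := List.append_of_mem he

lemma length_Wd_of_mem (hφ : ∀ v, φ v ≠ []) {e c : Fin m} {t : ℕ}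
    (he : e ∈ Wd φ t [c]) (s : ℕ) :
    (Wd φ s [e]).length ≤ (Wd φ (s+t) [c]).length := by
  obtain ⟨l1, l2, hl⟩ := mem_Wd_split he
  rw [Wd_add, hl]
  have : (l1 ++ e :: l2) = l1 ++ [e] ++ l2 := by simp
  rw [this, Wd_append, Wd_append]
  simp only [List.length_append]
  omega

lemma Bdd_of_mem (hφ : ∀ v, φ v ≠ []) {e c : Fin m} {t : ℕ}
    (hc : Bdd φ c) (he : e ∈ Wd φ t [c]) : Bdd φ e := by
  obtain ⟨B, hB⟩ := hc
  exact ⟨B, fun s => le_trans (length_Wd_of_mem hφ he s) (hB (s+t))⟩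

lemma bdd_word {w : List (Fin m)} (h : ∀ e ∈ w, Bdd φ e) :
    ∃ B, ∀ t, (Wd φ t w).length ≤ B := by
  induction w with
  | nil => exact ⟨0, by simp⟩
  | cons c w ih =>
      obtain ⟨B1, hB1⟩ := h c (by simp)
      obtain ⟨B2, hB2⟩ := ih (fun e he => h e (by simp [he]))
      refine ⟨B1 + B2, fun t => ?_⟩
      have : (c :: w) = [c] ++ w := rfl
      rw [this, Wd_append, List.length_append]
      exact Nat.add_le_add (hB1 t) (hB2 t)

lemma exists_growing_mem (hφ : ∀ v, φ v ≠ []) {c : Fin m} (hc : ¬ Bdd φ c) :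
    ∃ g ∈ φ c, ¬ Bdd φ g := by
  by_contra hcon
  push_neg at hcon
  obtain ⟨B, hB⟩ := bdd_word hcon
  exact hc ⟨max 1 B, fun t => by
    cases t with
    | zero => simp
    | succ t =>
        rw [Wd_succ, step_singleton]
        exact le_trans (hB t) (le_max_right _ _)⟩

lemma exists_decomp {w : List (Fin m)} (hex : ∃ g ∈ w, ¬ Bdd φ g) :
    ∃ β g rest, w = β ++ g :: rest ∧ (∀ b ∈ β, Bdd φ b) ∧ ¬ Bdd φ g := by
  induction w with
  | nil => simp at hex
  | cons c w ih =>
      by_cases hc : Bdd φ c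
      · obtain ⟨g, hg, hgB⟩ := hex
        rcases List.mem_cons.mp hg with rfl | hgw
        · exact absurd hc hgB
        · obtain ⟨β, g', rest, h1, h2, h3⟩ := ih ⟨g, hgw, hgB⟩
          exact ⟨c :: β, g', rest, by simp [h1], by
            intro b hb
            rcases List.mem_cons.mp hb with rfl | hb
            · exact hc
            · exact h2 b hb, h3⟩
      · exact ⟨[], c, w, rfl, by simp, hc⟩



/-! ### Uniform eventual periodicity for bounded letters -/

lemma eventually_periodic_seq {α : Type*} (u : ℕ → α) (g : α → α)
    (hdet : ∀ t, u (t+1) = g (u t)) {t1 t2 : ℕ} (h12 : t1 < t2) (heq : u t1 = u t2) :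
    ∀ t, t1 ≤ t → u (t + (t2 - t1)) = u t := by
  have hrep : ∀ s, u (t1 + s) = g^[s] (u t1) := by
    intro s
    induction s with
    | zero => simp
    | succ s ih => rw [show t1 + (s+1) = (t1 + s) + 1 by omega, hdet, ih,
        Function.iterate_succ_apply']
  have hfix : g^[t2 - t1] (u t1) = u t1 := by
    rw [← hrep (t2 - t1), show t1 + (t2 - t1) = t2 by omega, ← heq]
  intro t ht
  rw [show t = t1 + (t - t1) by omega, show t1 + (t - t1) + (t2 - t1) = t1 + ((t - t1) + (t2 - t1)) by omega,
    hrep, hrep, Function.iterate_add_apply, hfix]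

lemma Wd_word_congr {t1 t2 : ℕ} {β : List (Fin m)}
    (h : ∀ c ∈ β, Wd φ t1 [c] = Wd φ t2 [c]) : Wd φ t1 β = Wd φ t2 β := by
  rw [Wd_flat, Wd_flat (t := t2)]
  induction β with
  | nil => simp
  | cons c β ih =>
      simp only [List.flatMap_cons]
      rw [h c (by simp), ih (fun c hc => h c (by simp [hc]))]

lemma bdd_uniform_period (hφ : ∀ v, φ v ≠ []) :
    ∃ ρ Λ, 0 < Λ ∧ ∀ c, Bdd φ c → ∀ t, ρ ≤ t → Wd φ (t + Λ) [c] = Wd φ t [c] := by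
  classical
  -- uniform bound on lengths of images of bounded letters
  set F : Fin m → ℕ := fun c => if h : Bdd φ c then h.choose else 0 with hF
  set B : ℕ := (Finset.univ : Finset (Fin m)).sup F with hB
  have hFB : ∀ c, Bdd φ c → ∀ t, (Wd φ t [c]).length ≤ B := by
    intro c hc t
    have h1 : (Wd φ t [c]).length ≤ F c := by
      rw [hF]; simp only [dif_pos hc]; exact hc.choose_spec t
    exact le_trans h1 (Finset.le_sup (by simp))
  set u : ℕ → (Fin m → List (Fin m)) := fun t c => if Bdd φ c then Wd φ t [c] else [] with hu
  have hdet : ∀ t, u (t+1) = (fun v c => if Bdd φ c then step φ (v c) else []) (u t) := by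
    intro t; funext c
    by_cases hc : Bdd φ c <;> simp [hu, hc, Wd_succ']
  -- values lie in a finite set
  have hSfin : (Set.univ.pi (fun _ : Fin m => {l : List (Fin m) | l.length ≤ B})).Finite :=
    Set.Finite.pi (fun _ => List.finite_length_le _ _)
  have hmem : ∀ t, u t ∈ Set.univ.pi (fun _ : Fin m => {l : List (Fin m) | l.length ≤ B}) := by
    intro t c _
    by_cases hc : Bdd φ c
    · simp only [hu, if_pos hc]; exact hFB c hc t
    · simp [hu, if_neg hc]
  haveI := hSfin.to_subtype
  obtain ⟨t1, t2, hne, he⟩ := Finite.exists_ne_map_eq_of_infinite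
    (fun t : ℕ => (⟨u t, hmem t⟩ : (Set.univ.pi (fun _ : Fin m => {l : List (Fin m) | l.length ≤ B}))))
  have he' : u t1 = u t2 := congrArg Subtype.val he
  rcases Nat.lt_or_ge t1 t2 with hlt | hge
  · refine ⟨t1, t2 - t1, by omega, fun c hc t ht => ?_⟩
    have := eventually_periodic_seq u (fun v c => if Bdd φ c then step φ (v c) else []) hdet hlt he' t ht
    have := congrFun this c
    simpa [hu, if_pos hc] using this
  · have hlt : t2 < t1 := by omega
    refine ⟨t2, t1 - t2, by omega, fun c hc t ht => ?_⟩
    have := eventually_periodic_seq u (fun v c => if Bdd φ c then step φ (v c) else []) hdet hlt he'.symm t ht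
    have := congrFun this c
    simpa [hu, if_pos hc] using this



/-! ### Cycle structure of growing letters -/

lemma mem_Wd_word {b : Fin m} {k : ℕ} {β : List (Fin m)} (hb : b ∈ Wd φ k β) :
    ∃ c ∈ β, b ∈ Wd φ k [c] := by
  rw [Wd_flat] at hb
  simpa using List.mem_flatMap.mp hb

lemma chain_exists (hφ : ∀ v, φ v ≠ []) {c : Fin m} (hc : ¬ Bdd φ c) :
    ∃ g : ℕ → Fin m, g 0 = c ∧ (∀ i, ¬ Bdd φ (g i)) ∧
      ∀ i, ∃ β r, φ (g i) = β ++ g (i+1) :: r ∧ ∀ b ∈ β, Bdd φ b := by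
  classical
  have next : ∀ x : Fin m, ¬ Bdd φ x →
      ∃ β g' r, φ x = β ++ g' :: r ∧ (∀ b ∈ β, Bdd φ b) ∧ ¬ Bdd φ g' := by
    intro x hx
    obtain ⟨g', hg', hgB⟩ := exists_growing_mem hφ hx
    obtain ⟨β, g'', r, h1, h2, h3⟩ := exists_decomp ⟨g', hg', hgB⟩
    exact ⟨β, g'', r, h1, h2, h3⟩
  set N : {x : Fin m // ¬ Bdd φ x} → {x : Fin m // ¬ Bdd φ x} := fun x =>
    ⟨(next x.1 x.2).choose_spec.choose,
      (next x.1 x.2).choose_spec.choose_spec.choose_spec.2.2⟩ with hN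
  set G : ℕ → {x : Fin m // ¬ Bdd φ x} := fun i => N^[i] ⟨c, hc⟩ with hG
  refine ⟨fun i => (G i).1, by simp [hG], fun i => (G i).2, fun i => ?_⟩
  have hstep : G (i+1) = N (G i) := Function.iterate_succ_apply' _ _ _
  obtain h := (next (G i).1 (G i).2).choose_spec.choose_spec.choose_spec
  refine ⟨(next (G i).1 (G i).2).choose,
    (next (G i).1 (G i).2).choose_spec.choose_spec.choose, ?_, h.2.1⟩
  have hg1 : (fun i => ((G i : Fin m))) (i+1) = (N (G i)).1 := by
    simp only []; rw [hstep]
  rw [hg1]; exact h.1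

lemma chain_unroll {g : ℕ → Fin m}
    (hstep : ∀ i, ∃ β r, φ (g i) = β ++ g (i+1) :: r ∧ ∀ b ∈ β, Bdd φ b)
    (hφ : ∀ v, φ v ≠ []) :
    ∀ k i, ∃ B R, Wd φ k [g i] = B ++ g (i+k) :: R ∧ ∀ b ∈ B, Bdd φ b := by
  intro k
  induction k with
  | zero => exact fun i => ⟨[], [], by simp, by simp⟩
  | succ k ih =>
      intro i
      obtain ⟨β, r, hβ, hβb⟩ := hstep i
      obtain ⟨B', R', hB', hB'b⟩ := ih (i+1)
      refine ⟨Wd φ k β ++ B', R' ++ Wd φ k r, ?_, ?_⟩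
      · rw [show k + 1 = k + 1 by rfl, Wd_succ, step_singleton, hβ,
          show β ++ g (i+1) :: r = β ++ [g (i+1)] ++ r by simp,
          Wd_append, Wd_append, hB']
        simp only [List.append_assoc, List.cons_append]
        rw [show i + (k+1) = i + 1 + k by omega]
      · intro b hb
        rcases List.mem_append.mp hb with hb | hb
        · obtain ⟨e, he, hbe⟩ := mem_Wd_word hb
          exact Bdd_of_mem hφ (hβb e he) hbe
        · exact hB'b b hb

lemma cycle_exists (hφ : ∀ v, φ v ≠ []) {c : Fin m} (hc : ¬ Bdd φ c) :
    ∃ i q h B0 R0 B R, 0 < q ∧ ¬ Bdd φ h ∧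
      Wd φ i [c] = B0 ++ h :: R0 ∧ (∀ b ∈ B0, Bdd φ b) ∧
      Wd φ q [h] = B ++ h :: R ∧ (∀ b ∈ B, Bdd φ b) := by
  obtain ⟨g, hg0, hgrow, hstep⟩ := chain_exists hφ hc
  obtain ⟨i, j, hne, hij⟩ := Fintype.exists_ne_map_eq_of_card_lt
    (fun j : Fin (m+1) => g j) (by simp)
  wlog hlt : (i : ℕ) < (j : ℕ) generalizing i j
  · exact this j i (Ne.symm hne) hij.symm (by omega)
  obtain ⟨B0, R0, h0, h0b⟩ := chain_unroll hstep hφ i 0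
  obtain ⟨B, R, h1, h1b⟩ := chain_unroll hstep hφ ((j : ℕ) - (i : ℕ)) i
  refine ⟨i, (j : ℕ) - (i : ℕ), g i, B0, R0, B, R, by omega, hgrow i, ?_, h0b, ?_, h1b⟩
  · rw [← hg0]; simpa using h0
  · rw [h1, show (i : ℕ) + ((j : ℕ) - (i : ℕ)) = (j : ℕ) by omega, hij]

/-! ### The core periodicity lemma -/

lemma take_append3 {x y z : List (Fin m)} {n : ℕ} (hy : n ≤ y.length) :
    (x ++ (y ++ z)).take n = (x ++ y.take n).take n := by
  rw [List.take_append, List.take_append (l₁ := x),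
    List.take_append (l₁ := y), List.take_take]
  have h0 : n - x.length - y.length = 0 := by omega
  rw [h0, List.take_zero, List.append_nil]
  congr 1
  rw [min_eq_left (by omega)]

lemma letter_period_mults {ρ Λ : ℕ}
    (hper : ∀ c, Bdd φ c → ∀ t, ρ ≤ t → Wd φ (t + Λ) [c] = Wd φ t [c])
    {c : Fin m} (hc : Bdd φ c) (k : ℕ) : ∀ t, ρ ≤ t → Wd φ (t + k * Λ) [c] = Wd φ t [c] := by
  induction k with
  | zero => simp
  | succ k ih =>
      intro t ht
      rw [show t + (k+1) * Λ = (t + k * Λ) + Λ by ring, hper c hc _ (by omega), ih t ht]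

lemma word_period_mults {ρ Λ : ℕ}
    (hper : ∀ c, Bdd φ c → ∀ t, ρ ≤ t → Wd φ (t + Λ) [c] = Wd φ t [c])
    {β : List (Fin m)} (hβ : ∀ b ∈ β, Bdd φ b) (k : ℕ) :
    ∀ t, ρ ≤ t → Wd φ (t + k * Λ) β = Wd φ t β := fun t ht =>
  Wd_word_congr (fun b hb => letter_period_mults hper (hβ b hb) k t ht)

/-- The main periodicity lemma: for any letter, length-`n` prefixes of the iterated
images are eventually periodic, with preperiod linear in `n` and constant period. -/
theorem letter_period (hφ : ∀ v, φ v ≠ []) (c : Fin m) :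
    ∃ a b, 0 < b ∧ ∀ n s, a * (n+1) ≤ s →
      (Wd φ (s + b) [c]).take n = (Wd φ s [c]).take n := by
  obtain ⟨ρ, Λ, hΛ, hper⟩ := bdd_uniform_period hφ
  by_cases hc : Bdd φ c
  · refine ⟨ρ, Λ, hΛ, fun n s hs => ?_⟩
    rw [hper c hc s (le_trans (by nlinarith) hs)]
  -- growing start letter
  obtain ⟨i, q, h, B0, R0, B, R, hq, hgrow, hdec0, hb0, hdec, hb⟩ := cycle_exists hφ hc
  -- Step 1: periodicity of prefixes of `Wd s [h]` for large s
  have hmain : ∃ ah bh, 0 < bh ∧ ∀ n s, ah * (n+1) ≤ s →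
      (Wd φ (s + bh) [h]).take n = (Wd φ s [h]).take n := by
    by_cases hB : B = []
    · -- pure prefix growth
      refine ⟨m, q, by omega, fun n s hs => ?_⟩
      have hlen : n ≤ (Wd φ s [h]).length :=
        growing_length_ge hφ hgrow n s (by nlinarith)
      rw [Wd_add, hdec, hB, List.nil_append,
        show (h :: R) = [h] ++ R by rfl, Wd_append]
      exact List.take_append_of_le_length hlen
    · -- blocks of images of the bounded prefix B
      have hB1 : 1 ≤ B.length := List.length_pos_iff.mpr hB
      -- length growth of P j := Wd (j*q) [h]
      have hPlen : ∀ j : ℕ, j + 1 ≤ (Wd φ (j*q) [h]).length := by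
        intro j
        induction j with
        | zero => simp
        | succ j ih =>
            rw [show (j+1)*q = j*q + q by ring, Wd_add, hdec,
              show B ++ h :: R = B ++ ([h] ++ R) by simp, Wd_append, Wd_append]
            have l1 : B.length ≤ (Wd φ (j*q) B).length := length_le_Wd hφ _ _
            simp only [List.length_append]
            omega
      have multq : ∀ n j, ρ + n + 2 ≤ j →
          (Wd φ ((j+Λ)*q) [h]).take n = (Wd φ (j*q) [h]).take n := by
        intro n
        induction n using Nat.strong_induction_on with
        | _ n ihn =>
            intro j hj
            rcases Nat.eq_zero_or_pos n with rfl | hn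
            · simp
            set j' := j - 1 with hj'
            have hjj : j = j' + 1 := by omega
            have hD : Wd φ ((j'+Λ)*q) B = Wd φ (j'*q) B := by
              rw [show (j'+Λ)*q = j'*q + Λ*q by ring, show Λ*q = q*Λ by ring,
                word_period_mults hper hb q _ (by
                  have : j' ≤ j' * q := Nat.le_mul_of_pos_right _ hq
                  omega)]
            have hrel : ∀ jj : ℕ, Wd φ ((jj+1)*q) [h]
                = Wd φ (jj*q) B ++ (Wd φ (jj*q) [h] ++ Wd φ (jj*q) R) := by
              intro jj
              rw [show (jj+1)*q = jj*q + q by ring, Wd_add, hdec,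
                show B ++ h :: R = B ++ ([h] ++ R) by simp, Wd_append, Wd_append]
            have e1 : (j + Λ) = (j' + Λ) + 1 := by omega
            rw [hjj, hrel j', show j' + 1 + Λ = (j' + Λ) + 1 by omega, hrel (j' + Λ), hD]
            rw [List.take_append,
              List.take_append (l₁ := Wd φ (j'*q) B)]
            congr 1
            set n' := n - (Wd φ (j'*q) B).length with hn'
            have hlB : B.length ≤ (Wd φ (j'*q) B).length := length_le_Wd hφ _ _
            have hn'lt : n' < n := by omega
            have hP1 : n' ≤ (Wd φ ((j'+Λ)*q) [h]).length := by
              have := hPlen (j' + Λ); omega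
            have hP2 : n' ≤ (Wd φ (j'*q) [h]).length := by
              have := hPlen j'; omega
            rw [List.take_append_of_le_length hP1, List.take_append_of_le_length hP2]
            exact ihn n' hn'lt j' (by omega)
      -- extend to all exponents
      refine ⟨q * (ρ + 3), q * Λ, by positivity, fun n s hs => ?_⟩
      set j := s / q with hjdef
      set r := s % q with hrdef
      have hsr : s = j * q + r ∧ r < q := by
        constructor
        · rw [hjdef, hrdef, Nat.mul_comm]; exact (Nat.div_add_mod s q).symm
        · exact Nat.mod_lt _ hq
      have h1 : q * (ρ + n + 3) ≤ s := by
        calc q * (ρ + n + 3) ≤ q * ((ρ + 3) * (n + 1)) :=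
              Nat.mul_le_mul_left _ (by nlinarith)
          _ = q * (ρ + 3) * (n + 1) := by ring
          _ ≤ s := hs
      have hjge : ρ + n + 2 ≤ j := by
        rw [hjdef, Nat.le_div_iff_mul_le hq]
        calc (ρ + n + 2) * q ≤ (ρ + n + 3) * q := Nat.mul_le_mul_right _ (by omega)
          _ = q * (ρ + n + 3) := by ring
          _ ≤ s := h1
      calc (Wd φ (s + q * Λ) [h]).take n
          = (Wd φ (r + (j+Λ)*q) [h]).take n := by
            congr 2; rw [hsr.1]; ring
        _ = (Wd φ r (Wd φ ((j+Λ)*q) [h])).take n := by rw [Wd_add]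
        _ = (Wd φ r ((Wd φ ((j+Λ)*q) [h]).take n)).take n := take_Wd hφ _ _ _
        _ = (Wd φ r ((Wd φ (j*q) [h]).take n)).take n := by rw [multq n j hjge]
        _ = (Wd φ r (Wd φ (j*q) [h])).take n := (take_Wd hφ _ _ _).symm
        _ = (Wd φ s [h]).take n := by rw [← Wd_add, Nat.add_comm, ← hsr.1]
  -- Step 2: lift from `h` to `c`
  obtain ⟨ah, bh, hbh, hph⟩ := hmain
  refine ⟨i + ρ + m + ah + 1, Λ * bh, by positivity, fun n s hs => ?_⟩
  set s' := s - i with hs'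
  have hsi : s = s' + i := by
    have : i ≤ s := by nlinarith
    omega
  have hs'ρ : ρ ≤ s' := by nlinarith
  have hs'm : m * n ≤ s' := by nlinarith
  have hs'a : ah * (n+1) ≤ s' := by nlinarith
  have hdecompose : ∀ u : ℕ, Wd φ (u + i) [c] = Wd φ u B0 ++ (Wd φ u [h] ++ Wd φ u R0) := by
    intro u
    rw [Wd_add, hdec0, show B0 ++ h :: R0 = B0 ++ ([h] ++ R0) by simp,
      Wd_append, Wd_append]
  have hlenh : n ≤ (Wd φ s' [h]).length := growing_length_ge hφ hgrow n s' (by omega)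
  have hlenh2 : n ≤ (Wd φ (s' + Λ * bh) [h]).length :=
    le_trans hlenh (length_Wd_mono hφ (by omega) _)
  have hB0per : Wd φ (s' + Λ * bh) B0 = Wd φ s' B0 := by
    rw [show Λ * bh = bh * Λ by ring]
    exact word_period_mults hper hb0 bh s' hs'ρ
  have hhper : (Wd φ (s' + Λ * bh) [h]).take n = (Wd φ s' [h]).take n := by
    have : ∀ k : ℕ, (Wd φ (s' + k * bh) [h]).take n = (Wd φ s' [h]).take n := by
      intro k
      induction k with
      | zero => simp
      | succ k ih =>
          rw [show s' + (k+1) * bh = (s' + k * bh) + bh by ring,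
            hph n _ (by nlinarith), ih]
    have := this Λ
    rwa [show Λ * bh = bh * Λ by ring] at this ⊢
    
  calc (Wd φ (s + Λ * bh) [c]).take n
      = (Wd φ ((s' + Λ * bh) + i) [c]).take n := by congr 2; omega
    _ = (Wd φ (s' + Λ * bh) B0 ++ (Wd φ (s' + Λ * bh) [h] ++ Wd φ (s' + Λ * bh) R0)).take n := by
        rw [hdecompose]
    _ = (Wd φ (s' + Λ * bh) B0 ++ ((Wd φ (s' + Λ * bh) [h]).take n)).take n :=
        take_append3 hlenh2
    _ = (Wd φ s' B0 ++ ((Wd φ s' [h]).take n)).take n := by rw [hB0per, hhper]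
    _ = (Wd φ s' B0 ++ (Wd φ s' [h] ++ Wd φ s' R0)).take n := (take_append3 hlenh).symm
    _ = (Wd φ s [c]).take n := by rw [← hdecompose, ← hsi]

/-! ### Small witnesses -/

theorem letter_small_witness (hφ : ∀ v, φ v ≠ []) (c : Fin m) :
    ∃ C, ∀ n t, ∃ t' ≤ C * (n+1),
      (Wd φ t [c]).take n = (Wd φ t' [c]).take n := by
  obtain ⟨a, b, hbpos, hp⟩ := letter_period hφ c
  refine ⟨a + b, fun n t => ?_⟩
  induction t using Nat.strong_induction_on with
  | _ t ih =>
      rcases le_or_gt t ((a+b)*(n+1)) with hle | hlt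
      · exact ⟨t, hle, rfl⟩
      · have hab : a*(n+1) + b ≤ (a+b)*(n+1) := by nlinarith
        have hbt : b ≤ t := by omega
        have heq : (Wd φ ((t - b) + b) [c]).take n = (Wd φ (t - b) [c]).take n :=
          hp n (t - b) (by omega)
        rw [show t = (t - b) + b by omega, heq]
        exact ih (t - b) (by omega)

end GItEll

/-! ### Counting strings generated by small L-systems -/

namespace GItEll

instance finiteShortList (m' s : ℕ) : Finite {l : List (Fin m') // l.length ≤ s ∧ l ≠ []} := by
  have hsub : {l : List (Fin m') | l.length ≤ s ∧ l ≠ []} ⊆ {l | l.length ≤ s} :=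
    fun l h => h.1
  exact ((List.finite_length_le (Fin m') s).subset hsub).to_subtype

/-- Skeletons of L-systems of size at most `s`. -/
def SkT (s : ℕ) : Type :=
  Σ m' : Fin (s+1), ((Fin m' → {l : List (Fin m') // l.length ≤ s ∧ l ≠ []})
    × ((Fin m' → Fin 2) × Fin m'))

instance finiteSkT (s : ℕ) : Finite (SkT s) := by
  unfold SkT; infer_instance

noncomputable instance fintypeSkT (s : ℕ) : Fintype (SkT s) := Fintype.ofFinite _

/-- The morphism of a skeleton. -/
def skPhi {s : ℕ} (sk : SkT s) : Fin sk.1 → List (Fin sk.1) := fun v => (sk.2.1 v).1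

lemma skPhi_ne {s : ℕ} (sk : SkT s) : ∀ v, skPhi sk v ≠ [] := fun v => (sk.2.1 v).2.2

/-- The per-skeleton witness-size constant. -/
noncomputable def skC {s : ℕ} (sk : SkT s) : ℕ :=
  (letter_small_witness (skPhi_ne sk) sk.2.2.2).choose

lemma skC_spec {s : ℕ} (sk : SkT s) :
    ∀ n t, ∃ t' ≤ skC sk * (n+1),
      (Wd (skPhi sk) t [sk.2.2.2]).take n = (Wd (skPhi sk) t' [sk.2.2.2]).take n :=
  (letter_small_witness (skPhi_ne sk) sk.2.2.2).choose_spec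

/-- The string a skeleton generates at depth `t`, truncated to length `n`. -/
def skStr {s : ℕ} (sk : SkT s) (n t : ℕ) : List (Fin 2) :=
  ((Wd (skPhi sk) t [sk.2.2.2]).take n).map sk.2.2.1

/-- The candidate finite set of strings of length `n` generated by L-systems of
size at most `s`. -/
noncomputable def GenF (s n : ℕ) : Finset (List (Fin 2)) := by
  classical
  exact Finset.univ.biUnion
    (fun sk : SkT s => (Finset.range (skC sk * (n+1) + 1)).image (skStr sk n))

theorem lsystem_count (s : ℕ) : ∃ D, 0 < D ∧ ∀ n : ℕ,
    (GenF s n).card ≤ D * (n+1) ∧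
    ∀ T : List (Fin 2), T.length = n →
      (∃ L : LSystem (Fin 2), L.Generates T ∧ L.size ≤ s) → T ∈ GenF s n := by
  classical
  set Dmax := (Finset.univ : Finset (SkT s)).sup skC with hDmax
  refine ⟨Fintype.card (SkT s) * (Dmax + 1) + 1, by positivity, fun n => ⟨?_, ?_⟩⟩
  · -- cardinality bound
    calc (GenF s n).card
        ≤ ∑ sk : SkT s, ((Finset.range (skC sk * (n+1) + 1)).image (skStr sk n)).card :=
          Finset.card_biUnion_le
      _ ≤ ∑ sk : SkT s, (Dmax * (n+1) + 1) := by
          refine Finset.sum_le_sum (fun sk _ => ?_)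
          calc ((Finset.range (skC sk * (n+1) + 1)).image (skStr sk n)).card
              ≤ (Finset.range (skC sk * (n+1) + 1)).card := Finset.card_image_le
            _ = skC sk * (n+1) + 1 := by simp
            _ ≤ Dmax * (n+1) + 1 := by
                have : skC sk ≤ Dmax := Finset.le_sup (by simp)
                have := Nat.mul_le_mul_right (n+1) this
                omega
      _ = Fintype.card (SkT s) * (Dmax * (n+1) + 1) := by
          rw [Finset.sum_const, Finset.card_univ, smul_eq_mul]
      _ ≤ (Fintype.card (SkT s) * (Dmax + 1) + 1) * (n+1) := by nlinarith
  · -- membership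
    rintro T hTn ⟨L, ⟨hlen, hT⟩, hsize⟩
    -- basic size facts
    have hm1 : ∀ v : Fin L.m, 1 ≤ (L.phi v).length :=
      fun v => List.length_pos_iff.mpr (L.phiNE v)
    have hmsize : L.m ≤ L.size := by
      have : ∑ v : Fin L.m, 1 ≤ ∑ v : Fin L.m, (L.phi v).length :=
        Finset.sum_le_sum (fun v _ => hm1 v)
      simpa [LSystem.size] using this
    have hvlen : ∀ v : Fin L.m, (L.phi v).length ≤ s := by
      intro v
      calc (L.phi v).length ≤ ∑ u : Fin L.m, (L.phi u).length :=
            Finset.single_le_sum (f := fun u => (L.phi u).length) (fun u _ => Nat.zero_le _) (Finset.mem_univ v)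
        _ ≤ s := hsize
    have hms : L.m < s + 1 := by omega
    -- build the skeleton
    set sk : SkT s := ⟨⟨L.m, hms⟩, fun v => ⟨L.phi v, hvlen v, L.phiNE v⟩,
      L.tau, L.start⟩ with hsk
    -- identify the word
    have hword : ∀ t : ℕ, (fun w => w.flatMap L.phi)^[t] [L.start]
        = Wd (skPhi sk) t [L.start] := by
      intro t; rfl
    have hlenT : L.len = n := by
      rw [hT, List.length_take, List.length_map] at hTn
      omega
    have hTeq : T = skStr sk n L.depth := by
      rw [hT, skStr]
      unfold LSystem.word
      rw [hword, ← List.map_take, hlenT]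
    obtain ⟨t', ht'le, ht'⟩ := skC_spec sk n L.depth
    have hTeq' : T = skStr sk n t' := by
      rw [hTeq, skStr, skStr, ht']
    rw [GenF]
    simp only [Finset.mem_biUnion, Finset.mem_image, Finset.mem_range]
    exact ⟨sk, by simp, t', by omega, hTeq'.symm⟩

end GItEll

/-! ### The family of strings with constant ISLP size -/

namespace GItEll

/-- `0^{j+1} 1 0^{k+1} 1 0^{2n+3-j-k}`, of length `2n+7` whenever `j,k ≤ n`. -/
def famW (n j k : ℕ) : List (Fin 2) :=
  List.replicate (j+1) 0 ++ 1 :: (List.replicate (k+1) 0 ++ 1 :: List.replicate (2*n+3-j-k) 0)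

lemma rep_one_inj : ∀ (j : ℕ) {j' : ℕ} {u u' : List (Fin 2)},
    List.replicate j (0 : Fin 2) ++ 1 :: u = List.replicate j' 0 ++ 1 :: u' →
    j = j' ∧ u = u' := by
  intro j
  induction j with
  | zero =>
      intro j' u u' h
      cases j' with
      | zero => simpa using h
      | succ j' =>
          rw [List.replicate_succ] at h
          simp at h
  | succ j ih =>
      intro j' u u' h
      cases j' with
      | zero =>
          rw [List.replicate_succ] at h
          simp at h
      | succ j' =>
          rw [List.replicate_succ, List.replicate_succ] at h
          simp only [List.cons_append, List.cons.injEq, true_and] at h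
          obtain ⟨h1, h2⟩ := ih h
          exact ⟨by omega, h2⟩

lemma famW_inj {n j k j' k' : ℕ} (h : famW n j k = famW n j' k') : j = j' ∧ k = k' := by
  unfold famW at h
  obtain ⟨h1, h2⟩ := rep_one_inj (j+1) h
  obtain ⟨h3, _⟩ := rep_one_inj (k+1) h2
  exact ⟨by omega, by omega⟩

lemma famW_length {n j k : ℕ} (hj : j ≤ n) (hk : k ≤ n) :
    (famW n j k).length = 2*n+7 := by
  simp [famW]
  omega

lemma famW_ne_nil (n j k : ℕ) : famW n j k ≠ [] := by
  simp [famW]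

/-- The family `famF n` of `(n+1)^2` strings of length `2n+7`. -/
def famF (n : ℕ) : Finset (List (Fin 2)) :=
  ((Finset.range (n+1)) ×ˢ (Finset.range (n+1))).image (fun p => famW n p.1 p.2)

lemma famF_card (n : ℕ) : (famF n).card = (n+1) * (n+1) := by
  rw [famF, Finset.card_image_of_injOn, Finset.card_product, Finset.card_range]
  intro p _ p' _ h
  obtain ⟨h1, h2⟩ := famW_inj h
  exact Prod.ext h1 h2

end GItEll

/-! ### A constant-size ISLP for the family -/

namespace GItEll

def famRule (j k z : ℕ) : Fin 9 → ISLPRule (Fin 2) 9 := fun A =>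
  match A with
  | ⟨0, _⟩ => .term 0
  | ⟨1, _⟩ => .term 1
  | ⟨2, _⟩ => .iter 1 (j+1) [(0, 0)]
  | ⟨3, _⟩ => .iter 1 (k+1) [(0, 0)]
  | ⟨4, _⟩ => .iter 1 z [(0, 0)]
  | ⟨5, _⟩ => .pair 2 1
  | ⟨6, _⟩ => .pair 3 1
  | ⟨7, _⟩ => .pair 5 6
  | ⟨8, _⟩ => .pair 7 4

lemma iterBlock_zero (i : ℕ) : iterBlock [([(0 : Fin 2)], 0)] i = [0] := by
  simp [iterBlock, repList]

lemma flatten_const_singleton (l : List ℕ) :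
    (l.map (fun _ => [(0 : Fin 2)])).flatten = List.replicate l.length 0 := by
  induction l with
  | nil => rfl
  | cons x l ih => simp [ih, List.replicate_succ]

lemma rangeK_length {J : ℕ} (hJ : 1 ≤ J) : (rangeK 1 J).length = J := by
  rw [rangeK, if_pos hJ]
  simp

lemma iterExpand_const {J : ℕ} (hJ : 1 ≤ J) :
    iterExpand 1 J [([(0 : Fin 2)], 0)] = List.replicate J 0 := by
  rw [iterExpand]
  have h1 : (rangeK 1 J).map (iterBlock [([(0 : Fin 2)], 0)])
      = (rangeK 1 J).map (fun _ => [(0 : Fin 2)]) :=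
    List.map_congr_left (fun i _ => iterBlock_zero i)
  rw [h1, flatten_const_singleton, rangeK_length hJ]

def famISLP (d j k z : ℕ) (hz : 1 ≤ z) : ISLP (Fin 2) d where
  N := 9
  rule := famRule j k z
  start := 8
  ok := by
    intro A
    fin_cases A <;> simp [famRule, ISLPRule.Ok] <;> omega
  acyclic := by
    intro A B hB
    fin_cases A <;> simp [famRule, ISLPRule.vars] at hB <;>
      first
        | (rcases hB with rfl | rfl <;> decide)
        | (subst hB; decide)

lemma famISLP_size (d j k z : ℕ) (hz : 1 ≤ z) : (famISLP d j k z hz).size = 22 := by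
  rfl

lemma famISLP_generates (d n j k : ℕ) (hz : 1 ≤ 2*n+3-j-k) :
    (famISLP d j k (2*n+3-j-k) hz).Generates (famW n j k) := by
  set z := 2*n+3-j-k with hzdef
  set r := famRule j k z with hr
  have e0 : ISLP.Expands r 0 [0] := .term rfl
  have e1 : ISLP.Expands r 1 [1] := .term rfl
  have eiter : ∀ (A : Fin 9) (J : ℕ), 1 ≤ J → r A = .iter 1 J [(0, 0)] →
      ISLP.Expands r A (List.replicate J (0 : Fin 2)) := by
    intro A J hJ hA
    have h := ISLP.Expands.iter (rule := r) (A := A) (k1 := 1) (k2 := J)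
      (Bs := [(0, 0)]) (ps := [([(0 : Fin 2)], 0)]) hA (by simp)
      (by
        intro q hq
        simp only [List.zip_cons_cons, List.zip_nil_right, List.mem_singleton] at hq
        subst hq
        exact e0)
    rwa [iterExpand_const hJ] at h
  have e2 : ISLP.Expands r 2 (List.replicate (j+1) 0) := eiter 2 (j+1) (by omega) rfl
  have e3 : ISLP.Expands r 3 (List.replicate (k+1) 0) := eiter 3 (k+1) (by omega) rfl
  have e4 : ISLP.Expands r 4 (List.replicate z 0) := eiter 4 z hz rfl
  have e5 : ISLP.Expands r 5 (List.replicate (j+1) 0 ++ [1]) := .pair rfl e2 e1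
  have e6 : ISLP.Expands r 6 (List.replicate (k+1) 0 ++ [1]) := .pair rfl e3 e1
  have e7 : ISLP.Expands r 7 ((List.replicate (j+1) 0 ++ [1]) ++ (List.replicate (k+1) 0 ++ [1])) :=
    .pair rfl e5 e6
  have e8 : ISLP.Expands r 8 (((List.replicate (j+1) 0 ++ [1]) ++ (List.replicate (k+1) 0 ++ [1])) ++ List.replicate z 0) :=
    .pair rfl e7 e4
  have heq : (((List.replicate (j+1) (0 : Fin 2) ++ [1]) ++ (List.replicate (k+1) 0 ++ [1])) ++ List.replicate z 0)
      = famW n j k := by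
    simp [famW, hzdef]
  rwa [heq] at e8

lemma gIt_fam_le (d n j k : ℕ) (hj : j ≤ n) (hk : k ≤ n) :
    gIt (Fin 2) d (famW n j k) ≤ 22 := by
  have hz : 1 ≤ 2*n+3-j-k := by omega
  apply Nat.sInf_le
  exact ⟨famISLP d j k (2*n+3-j-k) hz, famISLP_generates d n j k hz,
    famISLP_size d j k _ hz⟩

end GItEll

/-! ### A trivial L-system generating any nonempty string -/

namespace GItEll

def trivL (T : List (Fin 2)) (hT : T ≠ []) : LSystem (Fin 2) where
  m := T.length
  phi := fun _ => List.finRange T.length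
  phiNE := fun _ => by
    rw [Ne, List.finRange_eq_nil_iff]
    exact fun h => hT (List.length_eq_zero_iff.mp h)
  tau := T.get
  start := ⟨0, List.length_pos_iff.mpr hT⟩
  depth := 1
  len := T.length

lemma trivL_word (T : List (Fin 2)) (hT : T ≠ []) :
    (trivL T hT).word = List.finRange T.length := by
  show (fun w => w.flatMap (trivL T hT).phi)^[1] [(trivL T hT).start] = _
  rw [Function.iterate_one]
  simp [trivL]

lemma trivL_gen (T : List (Fin 2)) (hT : T ≠ []) : (trivL T hT).Generates T := by
  constructor
  · rw [trivL_word]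
    simp [trivL]
  · rw [trivL_word]
    show T = ((List.finRange T.length).map T.get).take T.length
    rw [List.map_get_finRange, List.take_length]

lemma ell_mem (T : List (Fin 2)) (hT : T ≠ []) :
    ∃ L : LSystem (Fin 2), L.Generates T ∧ L.size = ell T := by
  have hne : {s : ℕ | ∃ L : LSystem (Fin 2), L.Generates T ∧ L.size = s}.Nonempty :=
    ⟨(trivL T hT).size, trivL T hT, trivL_gen T hT, rfl⟩
  exact Nat.sInf_mem hne

end GItEll

open Filter in
/-- For every `d ≥ 0` there exists a sequence of nonempty
strings (over some finite alphabet) of lengths tending to infinity on which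
`g_{it(d)} = o(ℓ)`. -/
theorem gIt_little_o_ell (d : ℕ) :
    ∃ (m : ℕ) (T : ℕ → List (Fin m)),
      (∀ i, T i ≠ []) ∧
      Tendsto (fun i => (T i).length) atTop atTop ∧
      Tendsto (fun i => (gIt (Fin m) d (T i) : ℝ) / (ell (T i) : ℝ)) atTop (nhds 0) := by
  classical
  refine ⟨2, ?_⟩
  have hne : ∀ n : ℕ, (GItEll.famF n).Nonempty := fun n =>
    ⟨GItEll.famW n 0 0, Finset.mem_image.mpr ⟨(0,0), by simp, rfl⟩⟩
  have hmax : ∀ n, ∃ b ∈ GItEll.famF n, ∀ b' ∈ GItEll.famF n, ell b' ≤ ell b :=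
    fun n => Finset.exists_max_image _ ell (hne n)
  set T : ℕ → List (Fin 2) := fun n => (hmax n).choose with hT
  have hTmem : ∀ n, T n ∈ GItEll.famF n := fun n => (hmax n).choose_spec.1
  have hTmax : ∀ n, ∀ b' ∈ GItEll.famF n, ell b' ≤ ell (T n) :=
    fun n => (hmax n).choose_spec.2
  have hrep : ∀ (b : List (Fin 2)) (n : ℕ), b ∈ GItEll.famF n →
      ∃ j k, j ≤ n ∧ k ≤ n ∧ b = GItEll.famW n j k := by
    intro b n hb
    rw [GItEll.famF, Finset.mem_image] at hb
    obtain ⟨p, hp, hbw⟩ := hb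
    rw [Finset.mem_product, Finset.mem_range, Finset.mem_range] at hp
    exact ⟨p.1, p.2, by omega, by omega, hbw.symm⟩
  have hfam_len : ∀ (b : List (Fin 2)) (n : ℕ), b ∈ GItEll.famF n → b.length = 2*n+7 := by
    intro b n hb
    obtain ⟨j, k, hj, hk, hw⟩ := hrep b n hb
    rw [hw]
    exact GItEll.famW_length hj hk
  have hfam_ne : ∀ (b : List (Fin 2)) (n : ℕ), b ∈ GItEll.famF n → b ≠ [] := by
    intro b n hb
    obtain ⟨j, k, _, _, hw⟩ := hrep b n hb
    rw [hw]
    exact GItEll.famW_ne_nil n j k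
  -- `ell (T n)` tends to infinity
  have hEll : Tendsto (fun n => ell (T n)) atTop atTop := by
    rw [Filter.tendsto_atTop]
    intro s
    obtain ⟨D, hD, hcount⟩ := GItEll.lsystem_count s
    filter_upwards [Filter.eventually_ge_atTop (max 6 (3*D))] with n hn
    by_contra hcon
    push_neg at hcon
    -- every element of the family would then have a small L-system
    have hsub : GItEll.famF n ⊆ GItEll.GenF s (2*n+7) := by
      intro b hb
      have hlb : ell b < s := lt_of_le_of_lt (hTmax n b hb) hcon
      obtain ⟨L, hLgen, hLsize⟩ := GItEll.ell_mem b (hfam_ne b n hb)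
      exact (hcount (2*n+7)).2 b (hfam_len b n hb) ⟨L, hLgen, by omega⟩
    have hcard : (n+1) * (n+1) ≤ D * (2*n+7+1) := by
      calc (n+1) * (n+1) = (GItEll.famF n).card := (GItEll.famF_card n).symm
        _ ≤ (GItEll.GenF s (2*n+7)).card := Finset.card_le_card hsub
        _ ≤ D * (2*n+7+1) := (hcount (2*n+7)).1
    have h6 : 6 ≤ n := le_trans (le_max_left _ _) hn
    have h3D : 3*D ≤ n := le_trans (le_max_right _ _) hn
    nlinarith
  -- gIt is bounded by 22 on the family
  have hgit : ∀ n, gIt (Fin 2) d (T n) ≤ 22 := by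
    intro n
    obtain ⟨j, k, hj, hk, hw⟩ := hrep (T n) n (hTmem n)
    rw [hw]
    exact GItEll.gIt_fam_le d n j k hj hk
  refine ⟨T, fun n => hfam_ne (T n) n (hTmem n), ?_, ?_⟩
  · -- lengths tend to infinity
    apply tendsto_atTop_mono (f := fun n : ℕ => n)
    · intro n
      rw [hfam_len (T n) n (hTmem n)]
      omega
    · exact tendsto_id
  · -- the ratio tends to zero
    have hub : Tendsto (fun n => (22:ℝ) / (ell (T n) : ℝ)) atTop (nhds 0) :=
      Filter.Tendsto.div_atTop tendsto_const_nhds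
        (tendsto_natCast_atTop_atTop.comp hEll)
    refine tendsto_of_tendsto_of_tendsto_of_le_of_le tendsto_const_nhds hub
      (fun n => by positivity) (fun n => ?_)
    rcases Nat.eq_zero_or_pos (ell (T n)) with h | h
    · rw [h]
      simp
    · have h22 : (gIt (Fin 2) d (T n) : ℝ) ≤ 22 := by exact_mod_cast hgit n
      have hell : (0:ℝ) < (ell (T n) : ℝ) := by exact_mod_cast h
      gcongr
end

section
/- For every integer d ≥ 1, the strings s_k = ∏_{i=1}^{k} aⁱb satisfy g_it(d)(s_k) ≤ 8 for all k ≥ 1 (the d-ISLP with rules S → ∏_{i=1}^{k} A^{i^1} B^{i^0}, A → a, B → b generates s_k). -/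
/-- The string `s_k = ∏_{i=1}^{k} aⁱ b` over the alphabet `{a, b} = Bool`
(with `a = false` and `b = true`). -/
def sWord (k : ℕ) : List Bool :=
  (List.range k).flatMap (fun i => List.replicate (i + 1) false ++ [true])


lemma repList_single {α : Type} (a : α) (n : ℕ) :
    repList [a] n = List.replicate n a := by
  induction n with
  | zero => rfl
  | succ n ih =>
    rw [repList, List.replicate_succ, List.flatten_cons, ← repList, ih,
      List.replicate_succ]
    rfl

def myRule (d k : ℕ) : Fin 3 → ISLPRule Bool 3 := fun A =>
  if A = 0 then .term false
  else if A = 1 then .term true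
  else .iter 1 k [(0, 1), (1, 0)]

def myG (d k : ℕ) (hd : 1 ≤ d) (hk : 1 ≤ k) : ISLP Bool d where
  N := 3
  rule := myRule d k
  start := 2
  ok := by
    intro A
    fin_cases A <;> simp [myRule, ISLPRule.Ok] <;> omega
  acyclic := by
    intro A B hB
    fin_cases A <;> simp [myRule, ISLPRule.vars] at hB <;>
      rcases hB with h | h <;> subst h <;> decide

/-- For every `d ≥ 1` and every `k ≥ 1`,
`g_{it(d)}(s_k) ≤ 8`. -/
theorem gIt_sWord_le_eight (d : ℕ) (hd : 1 ≤ d) (k : ℕ) (hk : 1 ≤ k) :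
    gIt Bool d (sWord k) ≤ 8 := by
  have hgen : (myG d k hd hk).Generates (sWord k) := by
    have hexp : iterExpand 1 k [([false], 1), ([true], 0)] = sWord k := by
      unfold iterExpand sWord rangeK
      rw [if_pos hk]
      rw [List.flatMap_def]
      congr 1
      rw [List.map_map]
      apply List.map_congr_left
      intro i _
      simp [iterBlock, repList_single, pow_one, pow_zero, Nat.add_comm 1 i]
    have h0 : ISLP.Expands (myRule d k) 0 [false] := .term rfl
    have h1 : ISLP.Expands (myRule d k) 1 [true] := .term rfl
    show ISLP.Expands (myRule d k) 2 (sWord k)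
    rw [← hexp]
    exact .iter (Bs := [(0,1),(1,0)]) rfl (by decide)
      (by
        intro q hq
        simp [List.zip] at hq
        rcases hq with h | h <;> subst h
        · exact h0
        · exact h1)
  have hsize : (myG d k hd hk).size = 8 := by
    show ∑ A : Fin 3, (myRule d k A).size = 8
    simp [ISLP.size, myG, Fin.sum_univ_three, myRule, ISLPRule.size]
  calc gIt Bool d (sWord k) ≤ 8 := by
        apply Nat.sInf_le
        exact ⟨myG d k hd hk, hgen, hsize⟩
end

section
/- There exists a constant c > 0 such that for every k ≥ 1, the string s_k = ∏_{i=1}^{k} aⁱb satisfies δ(s_k) ≥ c·√(|s_k|), where |s_k| = k(k+3)/2; that is, δ = Ω(√n) on this string family. -/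
/-- The number of distinct substrings of length `k` of `T`. -/
def substrCount {α : Type} [DecidableEq α] (T : List α) (k : ℕ) : ℕ :=
  ((Finset.range (T.length + 1 - k)).image (fun i => (T.drop i).take k)).card

/-- The substring complexity measure `δ(T) = max_{1 ≤ k ≤ |T|} T_k / k`,
where `T_k` is the number of distinct substrings of `T` of length `k`
(defined as `0` for the empty string). -/
noncomputable def delta {α : Type} [DecidableEq α] (T : List α) : ℚ :=
  if h : 1 ≤ T.length then
    (Finset.Icc 1 T.length).sup' (Finset.nonempty_Icc.mpr h)
      (fun k => (substrCount T k : ℚ) / k)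
  else 0

def blk (i : ℕ) : List Bool := List.replicate (i + 1) false ++ [true]

lemma sWord_eq (k : ℕ) : sWord k = (List.range k).flatMap blk := rfl

lemma sWord_two_mul_length (k : ℕ) : 2 * (sWord k).length = k * (k + 3) := by
  rw [sWord_eq]
  induction k with
  | zero => simp
  | succ n ih =>
    rw [List.range_succ, List.flatMap_append, List.length_append]
    have h1 : ([n].flatMap blk).length = n + 2 := by simp [blk]
    have h2 : (n+1)*(n+1+3) = n*(n+3) + 2*(n+2) := by ring
    omega

lemma sWord_split (r k : ℕ) (h : r ≤ k) :
    (List.range k).flatMap blk = (List.range r).flatMap blk ++ (List.range' r (k - r)).flatMap blk := by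
  rw [← List.flatMap_append]
  congr 1
  rw [List.range_eq_range', List.range_eq_range']
  have := List.range'_append (s := 0) (m := r) (n := k - r) (step := 1)
  simp at this
  rw [this]
  congr 1
  omega

lemma range'_three (s m : ℕ) : List.range' s (m+3) = s :: (s+1) :: (s+2) :: List.range' (s+3) m := by
  rw [List.range'_succ, List.range'_succ, List.range'_succ]

def win (k r j : ℕ) : List Bool :=
  List.replicate j false ++ true :: (List.replicate (r+2) false ++ true :: List.replicate (k-4-r-j) false)

lemma win_length (k r j : ℕ) (hr3 : r + 4 + j ≤ k) : (win k r j).length = k := by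
  simp [win]; omega

lemma sWord_decomp (k r j : ℕ) (hr3 : r + 4 + j ≤ k) (hj : j ≤ r + 1) (ht : k ≤ 2*r + 7 + j) :
    sWord k =
      ((List.range r).flatMap blk ++ List.replicate (r+1-j) false) ++ win k r j ++
      (List.replicate (2*r+7+j-k) false ++ true :: (List.range' (r+3) (k-r-3)).flatMap blk) := by
  rw [sWord_eq, sWord_split r k (by omega)]
  have h1 : k - r = (k - r - 3) + 3 := by omega
  rw [h1, range'_three]
  simp only [List.flatMap_cons]
  have e1 : blk r = List.replicate (r+1-j) false ++ (List.replicate j false ++ [true]) := by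
    rw [blk, ← List.append_assoc, ← List.replicate_add]
    congr 2
    omega
  have e3 : blk (r+2) = List.replicate (k-4-r-j) false ++ (List.replicate (2*r+7+j-k) false ++ [true]) := by
    rw [blk, ← List.append_assoc, ← List.replicate_add]
    congr 2
    omega
  rw [e1, e3, win, blk]
  simp [List.append_assoc]

lemma win_mem (k r j : ℕ) (hr3 : r + 4 + j ≤ k) (hj : j ≤ r + 1) (ht : k ≤ 2*r + 7 + j) :
    win k r j ∈ (Finset.range ((sWord k).length + 1 - k)).image
      (fun i => ((sWord k).drop i).take k) := by
  set U := (List.range r).flatMap blk ++ List.replicate (r+1-j) false with hU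
  set V := List.replicate (2*r+7+j-k) false ++ true :: (List.range' (r+3) (k-r-3)).flatMap blk with hV
  have hdec : sWord k = U ++ win k r j ++ V := sWord_decomp k r j hr3 hj ht
  have hlen : (sWord k).length = U.length + k + V.length := by
    rw [hdec, List.length_append, List.length_append, win_length k r j hr3]
  have hVpos : 1 ≤ V.length := by
    rw [hV]; simp; omega
  rw [Finset.mem_image]
  refine ⟨U.length, ?_, ?_⟩
  · rw [Finset.mem_range]; omega
  · rw [hdec, List.append_assoc, List.drop_left, List.take_left' (win_length k r j hr3)]

lemma rep_true_inj : ∀ (j j' : ℕ) (L L' : List Bool),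
    List.replicate j false ++ true :: L = List.replicate j' false ++ true :: L' → j = j' ∧ L = L' := by
  intro j
  induction j with
  | zero =>
    intro j' L L' h
    cases j' with
    | zero => simpa using h
    | succ m => simp [List.replicate_succ] at h
  | succ n ih =>
    intro j' L L' h
    cases j' with
    | zero => simp [List.replicate_succ] at h
    | succ m =>
      simp only [List.replicate_succ, List.cons_append, List.cons.injEq] at h
      obtain ⟨h1, h2⟩ := ih m L L' h.2
      exact ⟨by omega, h2⟩

lemma win_inj (k r j r' j' : ℕ) (h : win k r j = win k r' j') : r = r' ∧ j = j' := by
  obtain ⟨hj, h2⟩ := rep_true_inj _ _ _ _ h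
  obtain ⟨hr, -⟩ := rep_true_inj _ _ _ _ h2
  exact ⟨by omega, hj⟩

lemma substrCount_ge (k : ℕ) (hk : 6 ≤ k) :
    ((k - k/2)/2) * ((k - k/2)/2) ≤ substrCount (sWord k) k := by
  set m := k / 2 with hm
  set q := (k - m) / 2 with hq
  have hq1 : 1 ≤ q := by omega
  have hm3 : 3 ≤ m := by omega
  set S : Finset (ℕ × ℕ) := (Finset.Icc (m-2) (m+q-3)) ×ˢ (Finset.range q) with hS
  have hmem : ∀ p ∈ S, win k p.1 p.2 ∈ (Finset.range ((sWord k).length + 1 - k)).image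
      (fun i => ((sWord k).drop i).take k) := by
    rintro ⟨r, j⟩ hp
    rw [hS, Finset.mem_product, Finset.mem_Icc, Finset.mem_range] at hp
    exact win_mem k r j (by omega) (by omega) (by omega)
  have hsub : S.image (fun p => win k p.1 p.2) ⊆
      (Finset.range ((sWord k).length + 1 - k)).image (fun i => ((sWord k).drop i).take k) := by
    intro x hx
    rw [Finset.mem_image] at hx
    obtain ⟨p, hp, rfl⟩ := hx
    exact hmem p hp
  have hcard : (S.image (fun p => win k p.1 p.2)).card = S.card := by
    rw [Finset.card_image_of_injOn]
    intro p _ p' _ h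
    obtain ⟨h1, h2⟩ := win_inj k p.1 p.2 p'.1 p'.2 h
    exact Prod.ext h1 h2
  calc q * q = S.card := by
        rw [hS, Finset.card_product, Nat.card_Icc, Finset.card_range]
        congr 1
        omega
    _ = (S.image (fun p => win k p.1 p.2)).card := hcard.symm
    _ ≤ substrCount (sWord k) k := Finset.card_le_card hsub

lemma delta_ge {T : List Bool} {k : ℕ} (h1 : 1 ≤ k) (h2 : k ≤ T.length) :
    (substrCount T k : ℚ) / k ≤ delta T := by
  rw [delta, dif_pos (le_trans h1 h2)]
  exact Finset.le_sup' (fun k => (substrCount T k : ℚ) / k) (Finset.mem_Icc.mpr ⟨h1, h2⟩)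

lemma two_le_substrCount_one (k : ℕ) (hk : 1 ≤ k) : 2 ≤ substrCount (sWord k) 1 := by
  have hn : 2 ≤ (sWord k).length := by
    have := sWord_two_mul_length k
    nlinarith
  have hd : sWord k = [false, true] ++ (List.range' 1 (k-1)).flatMap blk := by
    rw [sWord_eq, sWord_split 1 k hk]
    rfl
  have hsub : ({[false], [true]} : Finset (List Bool)) ⊆
      (Finset.range ((sWord k).length + 1 - 1)).image (fun i => ((sWord k).drop i).take 1) := by
    intro x hx
    simp only [Finset.mem_insert, Finset.mem_singleton] at hx
    rw [Finset.mem_image]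
    rcases hx with rfl | rfl
    · exact ⟨0, Finset.mem_range.mpr (by omega), by rw [hd]; rfl⟩
    · exact ⟨1, Finset.mem_range.mpr (by omega), by rw [hd]; rfl⟩
  have := Finset.card_le_card hsub
  rw [substrCount]
  simpa using this


/-- There is a constant `c > 0` with
`δ(s_k) ≥ c·√|s_k|` for all `k ≥ 1`: `δ = Ω(√n)` on the family `s_k`. -/
theorem delta_sWord_sqrt_lower_bound :
    ∃ c : ℝ, 0 < c ∧ ∀ k : ℕ, 1 ≤ k →
      c * Real.sqrt ((sWord k).length) ≤ ((delta (sWord k) : ℚ) : ℝ) := by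
  refine ⟨1/64, by norm_num, ?_⟩
  intro k hk
  have h2n := sWord_two_mul_length k
  set n := (sWord k).length with hn
  have hn2 : 2 ≤ n := by nlinarith
  by_cases hk6 : k ≤ 5
  · -- small case: delta ≥ 2
    have h1 : (substrCount (sWord k) 1 : ℚ) / 1 ≤ delta (sWord k) := delta_ge le_rfl (by omega)
    have h2 : (2 : ℚ) ≤ delta (sWord k) := by
      have := two_le_substrCount_one k hk
      have : (2 : ℚ) ≤ (substrCount (sWord k) 1 : ℚ) := by exact_mod_cast this
      linarith [h1, this]
    have h3 : (2 : ℝ) ≤ ((delta (sWord k) : ℚ) : ℝ) := by exact_mod_cast h2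
    have hn20 : n ≤ 20 := by nlinarith
    have hnle : (n : ℝ) ≤ 64^2 := by
      have : (n : ℝ) ≤ 20 := by exact_mod_cast hn20
      nlinarith
    have hsqrt : Real.sqrt n ≤ 64 := by
      calc Real.sqrt n ≤ Real.sqrt (64^2) := Real.sqrt_le_sqrt hnle
        _ = 64 := by rw [Real.sqrt_sq]; norm_num
    nlinarith [Real.sqrt_nonneg (n : ℝ)]
  · -- large case
    push_neg at hk6
    have hk6' : 6 ≤ k := hk6
    set q := (k - k/2)/2 with hq
    have hcount := substrCount_ge k hk6'
    have hkn : k ≤ n := by nlinarith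
    have hδ : (↑(q*q) : ℚ) / k ≤ delta (sWord k) := by
      refine le_trans ?_ (delta_ge (by omega) hkn)
      apply div_le_div_of_nonneg_right ?_ (by positivity)
      · exact_mod_cast hcount
    have hδ' : ((q*q : ℕ) : ℝ) / k ≤ ((delta (sWord k) : ℚ) : ℝ) := by
      have := hδ
      have h' : (((↑(q*q) : ℚ) / k : ℚ) : ℝ) ≤ ((delta (sWord k) : ℚ) : ℝ) := by exact_mod_cast this
      push_cast at h' ⊢
      linarith
    have h8q : k ≤ 8 * q := by omega
    have hsqrt : Real.sqrt n ≤ k := by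
      have hnk : (n : ℝ) ≤ (k:ℝ)^2 := by
        have e1 : 2*(n:ℝ) = k*(k+3) := by exact_mod_cast h2n
        have e2 : (6:ℝ) ≤ k := by exact_mod_cast hk6'
        nlinarith
      calc Real.sqrt n ≤ Real.sqrt ((k:ℝ)^2) := Real.sqrt_le_sqrt hnk
        _ = k := by rw [Real.sqrt_sq]; positivity
    have hkpos : (0:ℝ) < k := by positivity
    have key : (1/64 : ℝ) * k ≤ ((q*q : ℕ) : ℝ) / k := by
      rw [le_div_iff₀ hkpos]
      push_cast
      have : (k:ℝ) ≤ 8 * q := by exact_mod_cast h8q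
      nlinarith
    calc (1/64 : ℝ) * Real.sqrt n ≤ (1/64) * k := by
          nlinarith [Real.sqrt_nonneg (n:ℝ)]
      _ ≤ ((q*q : ℕ) : ℝ) / k := key
      _ ≤ _ := hδ'
end

section
/- If a string T' is obtained from a nonempty string T by deleting a single character (and T' is nonempty), then δ(T) ≤ δ(T') + 1; equivalently, δ can decrease by at most 1 after the deletion of one character. -/
lemma substrCount_delete {α : Type} [DecidableEq α] (u v : List α) (x : α) (k : ℕ)
    (hk1 : 1 ≤ k) (hk2 : k ≤ (u ++ v).length) :
    substrCount (u ++ x :: v) k ≤ substrCount (u ++ v) k + k := by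
  classical
  set p := u.length with hp
  set n := (u ++ v).length with hn
  have hlen : (u ++ x :: v).length = n + 1 := by simp [hn]; omega
  have hpn : p ≤ n := by simp [hn, hp]
  set f : ℕ → List α := fun i => ((u ++ x :: v).drop i).take k with hf
  set g : ℕ → List α := fun i => ((u ++ v).drop i).take k with hg
  have hsub : (Finset.range ((u ++ x :: v).length + 1 - k)).image f ⊆
      ((Finset.range ((u ++ v).length + 1 - k)).image g) ∪
      ((Finset.Icc (p + 1 - k) p).image f) := by
    intro s hs
    obtain ⟨i, hi, rfl⟩ := Finset.mem_image.mp hs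
    rw [Finset.mem_range, hlen] at hi
    rcases le_or_gt (i + k) p with hc | hc
    · -- window inside u
      apply Finset.mem_union_left
      apply Finset.mem_image.mpr
      refine ⟨i, Finset.mem_range.mpr (by omega), ?_⟩
      show g i = f i
      simp only [hf, hg, List.drop_append, List.take_append,
        List.length_drop]
      have h1 : i - p = 0 := by omega
      have h2 : k - (p - i) = 0 := by omega
      simp [← hp, h1, h2]
    · rcases le_or_gt i p with hip | hip
      · -- crossing window
        apply Finset.mem_union_right
        exact Finset.mem_image.mpr ⟨i, Finset.mem_Icc.mpr (by omega), rfl⟩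
      · -- window inside v
        apply Finset.mem_union_left
        apply Finset.mem_image.mpr
        refine ⟨i - 1, Finset.mem_range.mpr (by omega), ?_⟩
        show g (i - 1) = f i
        have hdu1 : u.drop (i - 1) = [] := List.drop_eq_nil_of_le (by omega)
        have hdu2 : u.drop i = [] := List.drop_eq_nil_of_le (by omega)
        have hdx : (x :: v).drop (i - p) = v.drop (i - p - 1) := by
          have h : i - p = (i - p - 1) + 1 := by omega
          conv_lhs => rw [h]
          rw [List.drop_succ_cons]
        simp only [hf, hg, List.drop_append, ← hp, hdu1, hdu2, hdx,
          List.nil_append]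
        congr 2
        omega
  calc substrCount (u ++ x :: v) k
      ≤ (((Finset.range ((u ++ v).length + 1 - k)).image g) ∪
          ((Finset.Icc (p + 1 - k) p).image f)).card := Finset.card_le_card hsub
    _ ≤ substrCount (u ++ v) k + ((Finset.Icc (p + 1 - k) p).image f).card :=
        Finset.card_union_le _ _
    _ ≤ substrCount (u ++ v) k + k := by
        have := Finset.card_image_le (s := Finset.Icc (p + 1 - k) p) (f := f)
        rw [Nat.card_Icc] at this
        omega


/-- If `T'` is obtained from the nonempty string `T` by
deleting a single character, and `T'` is nonempty, then `δ(T) ≤ δ(T') + 1`: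
`δ` can decrease by at most 1 after the deletion of one character. -/
theorem delta_delete_char {α : Type} [DecidableEq α] (T T' : List α)
    (hdel : ∃ (u v : List α) (x : α), T = u ++ x :: v ∧ T' = u ++ v)
    (hT' : T' ≠ []) :
    delta T ≤ delta T' + 1 := by
  obtain ⟨u, v, x, rfl, rfl⟩ := hdel
  have hT'len : 1 ≤ (u ++ v).length := List.length_pos_iff.mpr hT'
  have hTlen : 1 ≤ (u ++ x :: v).length := by simp; omega
  have hlen : (u ++ x :: v).length = (u ++ v).length + 1 := by simp; omega
  rw [delta, delta, dif_pos hTlen, dif_pos hT'len]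
  apply Finset.sup'_le
  intro k hk
  rw [Finset.mem_Icc] at hk
  have hk1 : 1 ≤ k := hk.1
  have hkpos : (0 : ℚ) < k := by exact_mod_cast hk1
  rcases le_or_gt k ((u ++ v).length) with hkle | hkgt
  · have hcount := substrCount_delete u v x k hk1 hkle
    have h1 : (substrCount (u ++ x :: v) k : ℚ) / k ≤
        ((substrCount (u ++ v) k : ℚ) + k) / k := by
      apply div_le_div_of_nonneg_right _ (le_of_lt hkpos)
      exact_mod_cast hcount
    have h2 : ((substrCount (u ++ v) k : ℚ) + k) / k =
        (substrCount (u ++ v) k : ℚ) / k + 1 := by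
      field_simp
    have h3 : (substrCount (u ++ v) k : ℚ) / k ≤
        (Finset.Icc 1 (u ++ v).length).sup' (Finset.nonempty_Icc.mpr hT'len)
          (fun k => (substrCount (u ++ v) k : ℚ) / k) :=
      Finset.le_sup' (fun k => (substrCount (u ++ v) k : ℚ) / k) (Finset.mem_Icc.mpr ⟨hk1, hkle⟩)
    linarith
  · -- k = |T|, only one substring
    have hcount : substrCount (u ++ x :: v) k ≤ 1 := by
      calc substrCount (u ++ x :: v) k
          ≤ (Finset.range ((u ++ x :: v).length + 1 - k)).card := Finset.card_image_le
        _ ≤ 1 := by rw [Finset.card_range]; omega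
    have h1 : (substrCount (u ++ x :: v) k : ℚ) / k ≤ 1 := by
      rw [div_le_one hkpos]
      have h1 : (substrCount (u ++ x :: v) k : ℚ) ≤ 1 := by exact_mod_cast hcount
      have h2 : (1 : ℚ) ≤ k := by exact_mod_cast hk1
      linarith
      -- 1 ≤ k as rationals
    have hsup0 : (0 : ℚ) ≤
        (Finset.Icc 1 (u ++ v).length).sup' (Finset.nonempty_Icc.mpr hT'len)
          (fun k => (substrCount (u ++ v) k : ℚ) / k) := by
      refine le_trans ?_ (Finset.le_sup' _ (Finset.mem_Icc.mpr ⟨le_refl 1, hT'len⟩))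
      positivity
    linarith
end

section
/- There exists a universal constant C such that for every integer d ≥ 0 and every nonempty string T containing no substring of the form x⁴ with x a nonempty string: if some d-ISLP of size g generates T, then some SLP (i.e., an ISLP using only rules of forms A → a and A → BC) of size at most C·g generates T. (In any iteration rule A → ∏_{i=k1}^{k2} B_1^{i^{c_1}} ⋯ B_t^{i^{c_t}} of an ISLP generating such a T, if some c_r ≠ 0 then max(k1,k2) < 4, and if all c_r = 0 then |k1 − k2| < 3, so each iteration rule unfolds into standard SLP rules of total size O(t).) -/
namespace FPF

open List

variable {α : Type}

theorem repList_succ (w : List α) (k : ℕ) : repList w (k+1) = w ++ repList w k := by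
  simp [repList, List.replicate_succ]

theorem repList_one (w : List α) : repList w 1 = w := by
  simp [repList]

theorem self_infix_repList (w : List α) {k : ℕ} (hk : 1 ≤ k) : w <:+: repList w k := by
  obtain ⟨m, rfl⟩ := Nat.exists_eq_add_of_le hk
  rw [Nat.add_comm, repList_succ]
  exact (List.prefix_append _ _).isInfix

theorem pow4_of_repList (w : List α) {k : ℕ} (hk : 4 ≤ k) :
    (w ++ w ++ w ++ w) <:+: repList w k := by
  obtain ⟨m, rfl⟩ := Nat.exists_eq_add_of_le hk
  refine ⟨[], repList w m, ?_⟩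
  have h4 : List.replicate (4+m) w = [w,w,w,w] ++ List.replicate m w := by
    rw [List.replicate_add]; rfl
  simp [repList, h4, List.flatten_append, List.append_assoc]

theorem iterBlock_eq (ps : List (List α × ℕ)) (i : ℕ) :
    iterBlock ps i = (ps.flatMap fun p => List.replicate (i ^ p.2) p.1).flatten := by
  induction ps with
  | nil => rfl
  | cons p ps ih =>
      simp only [iterBlock, List.map_cons, List.flatten_cons, List.flatMap_cons,
        List.flatten_append, ← ih, repList]

theorem iterExpand_eq (k1 k2 : ℕ) (ps : List (List α × ℕ)) :
    iterExpand k1 k2 ps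
      = ((rangeK k1 k2).flatMap fun i => ps.flatMap fun p => List.replicate (i ^ p.2) p.1).flatten := by
  unfold iterExpand
  generalize rangeK k1 k2 = l
  induction l with
  | nil => rfl
  | cons i l ih =>
      simp only [List.map_cons, List.flatten_cons, List.flatMap_cons, List.flatten_append, ih,
        iterBlock_eq]

theorem k1_mem_rangeK (k1 k2 : ℕ) : k1 ∈ rangeK k1 k2 := by
  unfold rangeK
  split
  · exact List.mem_map.2 ⟨0, List.mem_range.2 (by omega), by omega⟩
  · exact List.mem_map.2 ⟨0, List.mem_range.2 (by omega), by omega⟩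

theorem max_mem_rangeK (k1 k2 : ℕ) : max k1 k2 ∈ rangeK k1 k2 := by
  unfold rangeK
  split
  · exact List.mem_map.2 ⟨k2 - k1, List.mem_range.2 (by omega), by omega⟩
  · exact List.mem_map.2 ⟨0, List.mem_range.2 (by omega), by omega⟩

theorem rangeK_length (k1 k2 : ℕ) : (rangeK k1 k2).length = max k1 k2 + 1 - min k1 k2 := by
  unfold rangeK
  split <;> simp <;> omega

theorem one_le_of_mem_rangeK {k1 k2 i : ℕ} (h1 : 1 ≤ k1) (h2 : 1 ≤ k2)
    (hi : i ∈ rangeK k1 k2) : 1 ≤ i := by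
  unfold rangeK at hi
  split at hi <;> obtain ⟨x, hx, rfl⟩ := List.mem_map.1 hi <;> simp at hx <;> omega

theorem infix_iterExpand {ps : List (List α × ℕ)} {p} (hp : p ∈ ps) {i k1 k2 : ℕ}
    (hi : i ∈ rangeK k1 k2) : repList p.1 (i ^ p.2) <:+: iterExpand k1 k2 ps := by
  have h1 : repList p.1 (i^p.2) ∈ ps.map fun p => repList p.1 (i^p.2) :=
    List.mem_map_of_mem hp
  have h2 : repList p.1 (i^p.2) <:+: iterBlock ps i := List.infix_of_mem_flatten h1
  have h3 : iterBlock ps i ∈ (rangeK k1 k2).map (iterBlock ps) := List.mem_map_of_mem hi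
  exact h2.trans (List.infix_of_mem_flatten h3)

theorem fst_infix_iterExpand {ps : List (List α × ℕ)} {p} (hp : p ∈ ps) {k1 k2 : ℕ}
    (hk1 : 1 ≤ k1) (hk2 : 1 ≤ k2) : p.1 <:+: iterExpand k1 k2 ps :=
  (self_infix_repList _ (Nat.one_le_iff_ne_zero.2 (pow_ne_zero _ (by omega)))).trans
    (infix_iterExpand hp (k1_mem_rangeK k1 k2))

theorem forall₂_replicate {β γ : Type*} {R : β → γ → Prop} {a b} (h : R a b) (n : ℕ) :
    List.Forall₂ R (List.replicate n a) (List.replicate n b) := by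
  induction n with
  | zero => exact .nil
  | succ n ih => simpa [List.replicate_succ] using List.Forall₂.cons h ih

theorem expands_congr {N : ℕ} {rule : Fin N → ISLPRule α N} {X Y : Fin N} {w}
    (h : ISLP.Expands rule X w) (he : rule Y = rule X) : ISLP.Expands rule Y w := by
  cases h with
  | term h => exact .term (he.trans h)
  | pair h hu hv => exact .pair (he.trans h) hu hv
  | iter h hs hz => exact .iter (he.trans h) hs hz

end FPF
namespace FPF

open List

variable {α : Type}

theorem zip_fst_expand {N : ℕ} {rule : Fin N → ISLPRule α N} {Bs : List (Fin N × ℕ)}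
    {ps : List (List α × ℕ)} (hsnd : ps.map Prod.snd = Bs.map Prod.snd)
    (hz : ∀ q ∈ Bs.zip ps, ISLP.Expands rule q.1.1 q.2.1) :
    ∀ p ∈ ps, ∃ B : Fin N, ISLP.Expands rule B p.1 := by
  have hlen : Bs.length = ps.length := by
    have := congrArg List.length hsnd; simpa using this.symm
  intro p hp
  obtain ⟨j, hj, rfl⟩ := List.getElem_of_mem hp
  refine ⟨(Bs[j]'(by omega)).1, ?_⟩
  have hq : (Bs[j]'(by omega), ps[j]) ∈ Bs.zip ps := by
    have : (Bs.zip ps)[j]'(by simp [List.length_zip]; omega) = (Bs[j]'(by omega), ps[j]) := by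
      simp
    exact this ▸ List.getElem_mem _
  exact hz _ hq

theorem expands_ne_nil {N d : ℕ} {rule : Fin N → ISLPRule α N} (hok : ∀ A, (rule A).Ok d)
    {A : Fin N} {w : List α} (h : ISLP.Expands rule A w) : w ≠ [] := by
  induction h with
  | term => simp
  | pair _ _ _ ihu ihv => simp [ihu]
  | @iter A k1 k2 Bs ps hr hsnd hz ih =>
      have hok' := hok A
      rw [hr] at hok'
      obtain ⟨hk1, hk2, hBs, -⟩ := hok'
      have hlen : Bs.length = ps.length := by
        have := congrArg List.length hsnd; simpa using this.symm
      have hBs0 : 0 < Bs.length := List.length_pos_iff.2 hBs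
      have hp0 : ps[0]'(by omega) ∈ ps := List.getElem_mem _
      have hq : (Bs[0], ps[0]'(by omega)) ∈ Bs.zip ps := by
        have : (Bs.zip ps)[0]'(by simp [List.length_zip]; omega) =
            (Bs[0], ps[0]'(by omega)) := by simp
        exact this ▸ List.getElem_mem _
      have hne : (ps[0]'(by omega)).1 ≠ [] := ih _ hq
      have hinf := fst_infix_iterExpand hp0 hk1 hk2
      intro hnil
      rw [hnil] at hinf
      exact hne (List.eq_nil_of_infix_nil hinf)

/-- Part (2): every repetition exponent is at most 3. -/
theorem exp_le_three {T : List α}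
    (hT : ∀ x : List α, x ≠ [] → ¬ (x ++ x ++ x ++ x) <:+: T)
    {k1 k2 : ℕ} {ps : List (List α × ℕ)} (hne : ∀ p ∈ ps, p.1 ≠ [])
    (hw : iterExpand k1 k2 ps <:+: T) :
    ∀ i ∈ rangeK k1 k2, ∀ p ∈ ps, i ^ p.2 ≤ 3 := by
  intro i hi p hp
  by_contra hgt
  have h4 : 4 ≤ i ^ p.2 := by omega
  exact hT p.1 (hne p hp)
    (((pow4_of_repList p.1 h4).trans (infix_iterExpand hp hi)).trans hw)

/-- Part (3): the iteration range has length at most 3. -/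
theorem rangeK_len_le_three {T : List α}
    (hT : ∀ x : List α, x ≠ [] → ¬ (x ++ x ++ x ++ x) <:+: T)
    {k1 k2 : ℕ} (hk1 : 1 ≤ k1) (hk2 : 1 ≤ k2)
    {ps : List (List α × ℕ)} (hps : ps ≠ []) (hne : ∀ p ∈ ps, p.1 ≠ [])
    (hw : iterExpand k1 k2 ps <:+: T) :
    (rangeK k1 k2).length ≤ 3 := by
  by_cases hc : ∀ p ∈ ps, p.2 = 0
  · -- all exponents are zero: the blocks coincide
    set blk := iterBlock ps 1 with hblk
    have hbl : ∀ i ∈ rangeK k1 k2, iterBlock ps i = blk := by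
      intro i hi
      rw [hblk]
      simp only [iterBlock]
      exact congrArg List.flatten
        (List.map_congr_left fun p hp => by rw [hc p hp]; norm_num)
    have hIE : iterExpand k1 k2 ps = repList blk (rangeK k1 k2).length := by
      unfold iterExpand repList
      congr 1
      refine List.eq_replicate_iff.2 ⟨by simp, ?_⟩
      intro b hb
      obtain ⟨i, hi, rfl⟩ := List.mem_map.1 hb
      exact hbl i hi
    obtain ⟨p, hp⟩ := List.exists_mem_of_ne_nil ps hps
    have hpblk : p.1 <:+: blk := by
      have h1 : p.1 ∈ ps.map fun p => repList p.1 (1 ^ p.2) := by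
        refine List.mem_map.2 ⟨p, hp, ?_⟩
        rw [hc p hp, pow_zero, repList_one]
      exact List.infix_of_mem_flatten h1
    have hblkne : blk ≠ [] := by
      intro hnil
      rw [hnil] at hpblk
      exact hne p hp (List.eq_nil_of_infix_nil hpblk)
    by_contra hgt
    exact hT blk hblkne
      ((pow4_of_repList blk (by omega)).trans (hIE ▸ hw))
  · push_neg at hc
    obtain ⟨p, hp, hc⟩ := hc
    by_contra hgt
    have hlen := rangeK_length k1 k2
    have hmax : 4 ≤ max k1 k2 := by omega
    have h3 := exp_le_three hT hne hw (max k1 k2) (max_mem_rangeK k1 k2) p hp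
    have : max k1 k2 ≤ (max k1 k2) ^ p.2 := Nat.le_self_pow hc _
    omega

end FPF
namespace FPF

open List

variable {α : Type} {N : ℕ}

/-- The list of factors of an iteration rule, fully unrolled. -/
def factorsOf : ISLPRule α N → List (Fin N)
  | .term _ => []
  | .pair _ _ => []
  | .iter k1 k2 Bs =>
      (rangeK k1 k2).flatMap fun i => Bs.flatMap fun p => List.replicate (i ^ p.2) p.1

def tLen : ISLPRule α N → ℕ
  | .iter _ _ Bs => Bs.length
  | _ => 0

def goodB (r : ISLPRule α N) : Bool := (factorsOf r).length ≤ 9 * tLen r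

def eR (r : ISLPRule α N) : ℕ := if goodB r then (factorsOf r).length - 1 else 0

theorem mem_vars_of_mem_factorsOf {r : ISLPRule α N} {B} (h : B ∈ factorsOf r) :
    B ∈ r.vars := by
  cases r with
  | term a => simp [factorsOf] at h
  | pair _ _ => simp [factorsOf] at h
  | iter k1 k2 Bs =>
      simp only [factorsOf, List.mem_flatMap] at h
      obtain ⟨i, _, p, hp, hB⟩ := h
      rw [List.eq_of_mem_replicate hB]
      exact List.mem_map_of_mem hp

theorem factorsOf_iter_ne_nil {d k1 k2 : ℕ} {Bs : List (Fin N × ℕ)}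
    (hok : (ISLPRule.iter k1 k2 Bs : ISLPRule α N).Ok d) :
    factorsOf (ISLPRule.iter k1 k2 Bs : ISLPRule α N) ≠ [] := by
  obtain ⟨hk1, hk2, hBs, -⟩ := hok
  obtain ⟨p, hp⟩ := List.exists_mem_of_ne_nil Bs hBs
  have : p.1 ∈ factorsOf (ISLPRule.iter k1 k2 Bs : ISLPRule α N) := by
    simp only [factorsOf, List.mem_flatMap]
    exact ⟨k1, k1_mem_rangeK k1 k2, p, hp,
      List.mem_replicate.2 ⟨by positivity, rfl⟩⟩
  exact List.ne_nil_of_mem this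

theorem iter_of_factorsOf_pos {r : ISLPRule α N} (h : 0 < (factorsOf r).length) :
    ∃ k1 k2 Bs, r = ISLPRule.iter k1 k2 Bs := by
  cases r with
  | term a => simp [factorsOf] at h
  | pair _ _ => simp [factorsOf] at h
  | iter k1 k2 Bs => exact ⟨k1, k2, Bs, rfl⟩

theorem eR_pos_facts {r : ISLPRule α N} (h : 1 ≤ eR r) :
    goodB r = true ∧ 2 ≤ (factorsOf r).length ∧ eR r = (factorsOf r).length - 1 := by
  unfold eR at h ⊢
  split at h
  · next hg => exact ⟨hg, by omega, by rw [if_pos hg]⟩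
  · omega

section Construction

variable (rule : Fin N → ISLPRule α N)

def e' (i : ℕ) : ℕ := if h : i < N then eR (rule ⟨i, h⟩) else 0

theorem e'_eq (A : Fin N) : e' rule A.val = eR (rule A) := by
  simp [e']

def pos (n : ℕ) : ℕ := ∑ i ∈ Finset.range n, (1 + e' rule i)

theorem pos_succ (n : ℕ) : pos rule (n+1) = pos rule n + (1 + e' rule n) :=
  Finset.sum_range_succ _ _

theorem pos_mono : Monotone (pos rule) := fun _ _ h =>
  Finset.sum_le_sum_of_subset (Finset.range_subset_range.2 h)

def M : ℕ := pos rule N + 1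

theorem M_pos : 0 < M rule := Nat.succ_pos _

def fm (x : ℕ) : Fin (M rule) := ⟨x % M rule, Nat.mod_lt _ (M_pos rule)⟩

def slotN (a j : ℕ) : ℕ := 1 + pos rule a + j

def mainS (a : ℕ) : ℕ := slotN rule a (e' rule a)

def mainM (A : Fin N) : Fin (M rule) := fm rule (mainS rule A.val)

theorem slotN_lt_M {a j : ℕ} (ha : a < N) (hj : j ≤ e' rule a) : slotN rule a j < M rule := by
  have h1 : pos rule (a+1) = pos rule a + (1 + e' rule a) := pos_succ rule a
  have h2 : pos rule (a+1) ≤ pos rule N := pos_mono rule ha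
  simp only [slotN, M]
  omega

theorem fm_val {x : ℕ} (h : x < M rule) : (fm rule x).val = x := Nat.mod_eq_of_lt h

theorem mainM_val (A : Fin N) : (mainM rule A).val = mainS rule A.val :=
  fm_val rule (slotN_lt_M rule A.isLt (le_refl _))

theorem mainS_lt_mainS {b c : ℕ} (hbc : b < c) : mainS rule b < mainS rule c := by
  have h1 : pos rule (b+1) = pos rule b + (1 + e' rule b) := pos_succ rule b
  have h2 : pos rule (b+1) ≤ pos rule c := pos_mono rule hbc
  simp only [mainS, slotN]
  omega

theorem mainS_le_mainS {b c : ℕ} (hbc : b ≤ c) : mainS rule b ≤ mainS rule c := by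
  rcases Nat.lt_or_ge b c with h | h
  · exact (mainS_lt_mainS rule h).le
  · have : b = c := by omega
    rw [this]

def own (t : ℕ) : ℕ := Nat.findGreatest (fun n => pos rule n ≤ t) N

theorem own_slot {a j : ℕ} (ha : a < N) (hj : j ≤ e' rule a) :
    own rule (pos rule a + j) = a := by
  refine Nat.findGreatest_eq_iff.2 ⟨by omega, fun _ => by omega, ?_⟩
  intro n hn hnN hP
  have h1 : pos rule (a+1) = pos rule a + (1 + e' rule a) := pos_succ rule a
  have h2 : pos rule (a+1) ≤ pos rule n := pos_mono rule hn
  omega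

theorem pos_own_le (t : ℕ) : pos rule (own rule t) ≤ t :=
  Nat.findGreatest_spec (P := fun n => pos rule n ≤ t) (Nat.zero_le N) (show pos rule 0 ≤ t by simp [pos])

theorem own_lt_N {t : ℕ} (ht : t < pos rule N) : own rule t < N := by
  rcases Nat.lt_or_ge (own rule t) N with h | h
  · exact h
  · exfalso
    have h1 : own rule t ≤ N := Nat.findGreatest_le N
    have h2 : own rule t = N := by omega
    have h3 := pos_own_le rule t
    rw [h2] at h3
    omega

theorem lt_pos_own_succ {t : ℕ} (ht : t < pos rule N) : t < pos rule (own rule t + 1) := by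
  have h1 := own_lt_N rule ht
  by_contra hc
  have h2 : ¬ pos rule (own rule t + 1) ≤ t :=
    Nat.findGreatest_is_greatest (P := fun n => pos rule n ≤ t) (n := N)
      (k := own rule t + 1) (Nat.lt_succ_self _) (by omega)
  omega

def res (hac : ∀ A : Fin N, ∀ B ∈ (rule A).vars, B < A) (A : Fin N) : Fin N :=
  if h : (factorsOf (rule A)).length = 1 then
    res hac ((factorsOf (rule A)).getD 0 A)
  else A
termination_by A.val
decreasing_by
  have hmem : (factorsOf (rule A)).getD 0 A ∈ factorsOf (rule A) := by
    rw [List.getD_eq_getElem _ _ (by omega)]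
    exact List.getElem_mem _
  exact hac A _ (mem_vars_of_mem_factorsOf hmem)

variable (hac : ∀ A : Fin N, ∀ B ∈ (rule A).vars, B < A)

theorem res_single {A : Fin N} (h : (factorsOf (rule A)).length = 1) :
    res rule hac A = res rule hac ((factorsOf (rule A)).getD 0 A) := by
  conv_lhs => rw [res]
  rw [dif_pos h]

theorem res_id {A : Fin N} (h : ¬ (factorsOf (rule A)).length = 1) :
    res rule hac A = A := by
  conv_lhs => rw [res]
  rw [dif_neg h]

theorem res_le (A : Fin N) : res rule hac A ≤ A := by
  suffices H : ∀ n (A : Fin N), A.val = n → res rule hac A ≤ A from H A.val A rfl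
  intro n
  induction n using Nat.strong_induction_on with
  | _ n ih =>
    intro A hA
    by_cases h : (factorsOf (rule A)).length = 1
    · rw [res_single rule hac h]
      set B := (factorsOf (rule A)).getD 0 A with hB
      have hmem : B ∈ factorsOf (rule A) := by
        rw [hB, List.getD_eq_getElem _ _ (by omega)]
        exact List.getElem_mem _
      have hBA : B < A := hac A _ (mem_vars_of_mem_factorsOf hmem)
      have := ih B.val (by omega) B rfl
      exact le_trans this hBA.le
    · rw [res_id rule hac h]

theorem res_not_single (A : Fin N) :
    ¬ (factorsOf (rule (res rule hac A))).length = 1 := by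
  suffices H : ∀ n (A : Fin N), A.val = n →
      ¬ (factorsOf (rule (res rule hac A))).length = 1 from H A.val A rfl
  intro n
  induction n using Nat.strong_induction_on with
  | _ n ih =>
    intro A hA
    by_cases h : (factorsOf (rule A)).length = 1
    · rw [res_single rule hac h]
      set B := (factorsOf (rule A)).getD 0 A with hB
      have hmem : B ∈ factorsOf (rule A) := by
        rw [hB, List.getD_eq_getElem _ _ (by omega)]
        exact List.getElem_mem _
      have hBA : B < A := hac A _ (mem_vars_of_mem_factorsOf hmem)
      exact ih B.val (by omega) B rfl
    · rw [res_id rule hac h]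
      exact h

variable (a₀ : α)

def chainR (C : Fin N) (j : ℕ) : ISLPRule α (M rule) :=
  .pair (if j = 1 then mainM rule ((factorsOf (rule C)).getD 0 C)
         else fm rule (slotN rule C.val (j-1)))
        (mainM rule ((factorsOf (rule C)).getD j C))

def mkBase (C : Fin N) : ISLPRule α (M rule) :=
  match rule C with
  | .term b => .term b
  | .pair B B' => .pair (mainM rule B) (mainM rule B')
  | .iter _ _ _ =>
      if goodB (rule C) then chainR rule C ((factorsOf (rule C)).length - 1)
      else .term a₀

def mkSlot (hac : ∀ A : Fin N, ∀ B ∈ (rule A).vars, B < A) (A : Fin N) (j : ℕ) : ISLPRule α (M rule) :=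
  if j = e' rule A.val then mkBase rule a₀ (res rule hac A)
  else if j = 0 then .term a₀
  else chainR rule A j

def ruleM (hac : ∀ A : Fin N, ∀ B ∈ (rule A).vars, B < A) (s : Fin (M rule)) : ISLPRule α (M rule) :=
  if h : 1 ≤ s.val ∧ own rule (s.val - 1) < N then
    mkSlot rule a₀ hac ⟨own rule (s.val - 1), h.2⟩ (s.val - 1 - pos rule (own rule (s.val - 1)))
  else .term a₀

theorem ruleM_at_slot {a j : ℕ} (ha : a < N) (hj : j ≤ e' rule a) :
    ruleM rule a₀ hac (fm rule (slotN rule a j)) = mkSlot rule a₀ hac ⟨a, ha⟩ j := by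
  have hval : (fm rule (slotN rule a j)).val = 1 + pos rule a + j := fm_val rule (slotN_lt_M rule ha hj)
  have ht : (fm rule (slotN rule a j)).val - 1 = pos rule a + j := by omega
  have hown : own rule (pos rule a + j) = a := own_slot rule ha hj
  have hcond : 1 ≤ (fm rule (slotN rule a j)).val ∧
      own rule ((fm rule (slotN rule a j)).val - 1) < N := by
    constructor
    · omega
    · rw [ht, hown]; exact ha
  rw [ruleM, dif_pos hcond]
  simp only [ht, hown]
  congr 1
  omega

end Construction

end FPF
namespace FPF

open List

variable {α : Type} {N : ℕ}

theorem ok_of_isSLP {M' d : ℕ} {r : ISLPRule α M'} (h : r.isSLP) : r.Ok d := by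
  cases r <;> trivial

theorem size_le_of_isSLP {M' : ℕ} {r : ISLPRule α M'} (h : r.isSLP) : r.size ≤ 2 := by
  cases r <;> simp [ISLPRule.size]
  exact absurd h (by simp [ISLPRule.isSLP])

section Construction2

variable (rule : Fin N → ISLPRule α N) (a₀ : α)
variable (hac : ∀ A : Fin N, ∀ B ∈ (rule A).vars, B < A)

theorem ruleM_main (A : Fin N) :
    ruleM rule a₀ hac (mainM rule A) = mkBase rule a₀ (res rule hac A) := by
  have h := ruleM_at_slot rule hac a₀ A.isLt (le_refl (e' rule A.val))
  rw [mainM, mainS, h, mkSlot, if_pos rfl]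

theorem eR_le {r : ISLPRule α N} : eR r ≤ (factorsOf r).length := by
  unfold eR
  split <;> omega

theorem e'_ge_one_facts {A : Fin N} (h : 1 ≤ e' rule A.val) :
    goodB (rule A) = true ∧ 2 ≤ (factorsOf (rule A)).length ∧
      e' rule A.val = (factorsOf (rule A)).length - 1 := by
  rw [e'_eq] at h ⊢
  exact eR_pos_facts h

theorem mkBase_iter {C : Fin N} (hgood : goodB (rule C) = true)
    (hlen : 1 ≤ (factorsOf (rule C)).length) :
    mkBase rule a₀ C = chainR rule C ((factorsOf (rule C)).length - 1) := by
  unfold mkBase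
  split
  · next b hb => rw [hb] at hlen; simp [factorsOf] at hlen
  · next B B' hb => rw [hb] at hlen; simp [factorsOf] at hlen
  · rw [if_pos hgood]

theorem ruleM_chain {A : Fin N} {j : ℕ} (h1 : 1 ≤ j) (hj : j ≤ e' rule A.val)
    (hres : res rule hac A = A) :
    ruleM rule a₀ hac (fm rule (slotN rule A.val j)) = chainR rule A j := by
  rw [ruleM_at_slot rule hac a₀ A.isLt hj, mkSlot]
  simp only [Fin.eta]
  by_cases hje : j = e' rule A.val
  · rw [if_pos hje]
    obtain ⟨hg, hl2, hE⟩ := e'_ge_one_facts rule (A := A) (by omega)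
    rw [hres, mkBase_iter rule a₀ hg (by omega), ← hE, hje]
  · rw [if_neg hje, if_neg (by omega)]

theorem ruleM_isSLP (s : Fin (M rule)) : (ruleM rule a₀ hac s).isSLP := by
  rw [ruleM]
  split
  · rw [mkSlot]
    split
    · unfold mkBase
      split
      · trivial
      · trivial
      · split
        · unfold chainR; trivial
        · trivial
    · split
      · trivial
      · unfold chainR; trivial
  · trivial

theorem mainS_lt_base {b c : ℕ} (h : b < c) : mainS rule b < 1 + pos rule c := by
  have h1 : pos rule (b+1) = pos rule b + (1 + e' rule b) := pos_succ rule b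
  have h2 : pos rule (b+1) ≤ pos rule c := pos_mono rule h
  simp only [mainS, slotN]
  omega

include hac in
theorem chainR_vars_lt {C : Fin N} {j : ℕ} (h1 : 1 ≤ j) (hje : j ≤ e' rule C.val)
    (hjlen : j < (factorsOf (rule C)).length) :
    ∀ B ∈ (chainR rule C j).vars, B.val < slotN rule C.val j := by
  intro B hB
  have hfac : ∀ x ∈ factorsOf (rule C), mainS rule x.val < 1 + pos rule C.val := by
    intro x hx
    have hxC : x < C := hac C x (mem_vars_of_mem_factorsOf hx)
    exact mainS_lt_base rule hxC
  have hget : ∀ k : ℕ, k < (factorsOf (rule C)).length →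
      ((factorsOf (rule C)).getD k C) ∈ factorsOf (rule C) := by
    intro k hk
    rw [List.getD_eq_getElem _ _ hk]
    exact List.getElem_mem _
  simp only [chainR, ISLPRule.vars, List.mem_cons, List.mem_singleton] at hB
  rcases hB with hB | hB | hB
  · subst hB
    split
    · have := hfac _ (hget 0 (by omega))
      rw [mainM_val]
      simp only [slotN]
      omega
    · have hlt := slotN_lt_M rule C.isLt (show j - 1 ≤ e' rule C.val by omega)
      rw [fm_val rule hlt]
      simp only [slotN]
      omega
  · subst hB
    have := hfac _ (hget j hjlen)
    rw [mainM_val]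
    simp only [slotN]
    omega
  · exact absurd hB (by simp)

include hac in
theorem mkBase_vars_lt {d : ℕ} (hok : ∀ A, (rule A).Ok d) {C : Fin N}
    (hns : ¬ (factorsOf (rule C)).length = 1) :
    ∀ B ∈ (mkBase rule a₀ C).vars, B.val < mainS rule C.val := by
  intro B hB
  unfold mkBase at hB
  split at hB
  · simp [ISLPRule.vars] at hB
  · next B1 B2 heq =>
      simp only [ISLPRule.vars, List.mem_cons, List.mem_singleton] at hB
      have hv : ∀ x : Fin N, x ∈ (rule C).vars → mainS rule x.val < mainS rule C.val := by
        intro x hx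
        exact mainS_lt_mainS rule (hac C x hx)
      rcases hB with hB | hB | hB
      · subst hB
        rw [mainM_val]
        exact hv B1 (by rw [heq]; simp [ISLPRule.vars])
      · subst hB
        rw [mainM_val]
        exact hv B2 (by rw [heq]; simp [ISLPRule.vars])
      · exact absurd hB (by simp)
  · next k1 k2 Bs heq =>
      split at hB
      · next hgood =>
          have hnn : factorsOf (rule C) ≠ [] := by
            rw [heq]
            exact factorsOf_iter_ne_nil (heq ▸ hok C)
          have hlen2 : 2 ≤ (factorsOf (rule C)).length := by
            have := List.length_pos_iff.2 hnn
            omega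
          have hE : e' rule C.val = (factorsOf (rule C)).length - 1 := by
            rw [e'_eq]
            unfold eR
            rw [if_pos hgood]
          have := chainR_vars_lt rule hac (by omega)
            (by omega : (factorsOf (rule C)).length - 1 ≤ e' rule C.val)
            (by omega) B hB
          simp only [slotN] at this
          simp only [mainS, slotN]
          omega
      · simp [ISLPRule.vars] at hB

theorem ruleM_acyclic {d : ℕ} (hok : ∀ A, (rule A).Ok d) :
    ∀ s : Fin (M rule), ∀ B ∈ (ruleM rule a₀ hac s).vars, B < s := by
  intro s B hB
  rw [ruleM] at hB
  split at hB
  · next h =>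
      obtain ⟨hs1, haN⟩ := h
      have htpos : s.val - 1 < pos rule N := by
        have hsM : s.val < M rule := s.isLt
        simp only [M] at hsM
        omega
      have h1 := pos_own_le rule (s.val - 1)
      have h2 := lt_pos_own_succ rule htpos
      have h3 := pos_succ rule (own rule (s.val - 1))
      have hje : s.val - 1 - pos rule (own rule (s.val - 1))
          ≤ e' rule (own rule (s.val - 1)) := by omega
      rw [mkSlot] at hB
      split at hB
      · next hjE =>
          have hns := res_not_single rule hac ⟨own rule (s.val - 1), haN⟩
          have hBv := mkBase_vars_lt rule a₀ hac hok hns B hB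
          have hCA : res rule hac ⟨own rule (s.val - 1), haN⟩
              ≤ (⟨own rule (s.val - 1), haN⟩ : Fin N) := res_le rule hac _
          have hm : mainS rule (res rule hac ⟨own rule (s.val - 1), haN⟩).val
              ≤ mainS rule (own rule (s.val - 1)) :=
            mainS_le_mainS rule hCA
          rw [Fin.lt_def]
          have hms : mainS rule (own rule (s.val - 1))
              = 1 + pos rule (own rule (s.val - 1)) + e' rule (own rule (s.val - 1)) := rfl
          simp only [Fin.val_mk] at hjE
          omega
      · split at hB
        · simp [ISLPRule.vars] at hB
        · next hjE hj0 =>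
            have h1j : 1 ≤ s.val - 1 - pos rule (own rule (s.val - 1)) := by omega
            have hjlt : s.val - 1 - pos rule (own rule (s.val - 1))
                < e' rule (own rule (s.val - 1)) := by
              simp only [Fin.val_mk] at hjE
              omega
            have hle : e' rule (own rule (s.val - 1))
                ≤ (factorsOf (rule (⟨own rule (s.val - 1), haN⟩ : Fin N))).length := by
              have := eR_le (r := rule (⟨own rule (s.val - 1), haN⟩ : Fin N))
              have he := e'_eq rule (⟨own rule (s.val - 1), haN⟩ : Fin N)
              simp only [Fin.val_mk] at he
              omega
            have hBv := chainR_vars_lt rule hac h1j hjlt.le (by omega) B hB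
            rw [Fin.lt_def]
            simp only [slotN, Fin.val_mk] at hBv
            omega
  · simp [ISLPRule.vars] at hB

end Construction2

end FPF
namespace FPF

open List

variable {α : Type} {N : ℕ}

theorem flatten_take_succ {wl : List (List α)} {j : ℕ} (h : j < wl.length) :
    (wl.take j).flatten ++ wl[j] = (wl.take (j+1)).flatten := by
  rw [List.take_succ, List.getElem?_eq_getElem h, List.flatten_append]
  simp

theorem forall₂_getElem {β γ : Type*} {R : β → γ → Prop} {l1 : List β} {l2 : List γ}
    (h : List.Forall₂ R l1 l2) {j : ℕ} (hj : j < l1.length) :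
    R l1[j] (l2[j]'(by rw [← h.length_eq]; exact hj)) := by
  have := (List.forall₂_iff_get.1 h).2 j hj (by rw [← h.length_eq]; exact hj)
  simpa using this

theorem factors_length_le {k1 k2 : ℕ} {Bs : List (Fin N × ℕ)}
    (h3 : ∀ i ∈ rangeK k1 k2, ∀ b ∈ Bs, i ^ b.2 ≤ 3)
    (hlen3 : (rangeK k1 k2).length ≤ 3) :
    ((rangeK k1 k2).flatMap fun i => Bs.flatMap fun b => List.replicate (i^b.2) b.1).length
      ≤ 9 * Bs.length := by
  rw [List.length_flatMap]
  have hinner : ∀ i ∈ rangeK k1 k2,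
      (Bs.flatMap fun b => List.replicate (i^b.2) b.1).length ≤ 3 * Bs.length := by
    intro i hi
    rw [List.length_flatMap]
    have h := List.sum_le_card_nsmul (Bs.map fun b => (List.replicate (i^b.2) b.1).length) 3 ?_
    · simpa [Function.comp_def, smul_eq_mul, mul_comm] using h
    · intro x hx
      obtain ⟨b, hb, rfl⟩ := List.mem_map.1 hx
      simpa using h3 i hi b hb
  have houter := List.sum_le_card_nsmul
    ((rangeK k1 k2).map fun i => (Bs.flatMap fun b => List.replicate (i^b.2) b.1).length)
    (3 * Bs.length) ?_
  · have hlen : ((rangeK k1 k2).map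
        fun i => (Bs.flatMap fun b => List.replicate (i^b.2) b.1).length).length
        = (rangeK k1 k2).length := by simp
    rw [hlen, smul_eq_mul] at houter
    calc _ ≤ (rangeK k1 k2).length * (3 * Bs.length) := houter
      _ ≤ 3 * (3 * Bs.length) := Nat.mul_le_mul_right _ hlen3
      _ = 9 * Bs.length := by ring
  · intro x hx
    obtain ⟨i, hi, rfl⟩ := List.mem_map.1 hx
    exact hinner i hi

section Sim

variable (rule : Fin N → ISLPRule α N)
variable (hac : ∀ A : Fin N, ∀ B ∈ (rule A).vars, B < A) (a₀ : α)

include hac in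
theorem expands_chain {A : Fin N} {wl : List (List α)}
    (hgood : goodB (rule A) = true)
    (hlen : 1 ≤ (factorsOf (rule A)).length)
    (hF : List.Forall₂ (fun (B : Fin N) (w : List α) =>
        ISLP.Expands (ruleM rule a₀ hac) (mainM rule B) w) (factorsOf (rule A)) wl) :
    ISLP.Expands (ruleM rule a₀ hac) (mainM rule A) wl.flatten := by
  have hlw : (factorsOf (rule A)).length = wl.length := hF.length_eq
  by_cases hm1 : (factorsOf (rule A)).length = 1
  · -- copy case: one factor
    have h0 : (0:ℕ) < (factorsOf (rule A)).length := by omega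
    have hB0 : (factorsOf (rule A)).getD 0 A = (factorsOf (rule A))[0] :=
      List.getD_eq_getElem _ _ h0
    have hres := res_single rule hac hm1
    have hEx : ISLP.Expands (ruleM rule a₀ hac)
        (mainM rule ((factorsOf (rule A))[0])) (wl[0]'(by omega)) :=
      forall₂_getElem hF h0
    have hwl : wl.flatten = wl[0]'(by omega) := by
      obtain ⟨w, rfl⟩ := List.length_eq_one_iff.1 (show wl.length = 1 by omega)
      simp
    rw [hwl]
    have h1 : ruleM rule a₀ hac (mainM rule A)
        = ruleM rule a₀ hac (mainM rule ((factorsOf (rule A))[0])) := by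
      rw [ruleM_main, ruleM_main, hres, hB0]
    exact expands_congr hEx h1
  · -- at least two factors
    have hm2 : 2 ≤ (factorsOf (rule A)).length := by omega
    have hres : res rule hac A = A := res_id rule hac hm1
    have hE : e' rule A.val = (factorsOf (rule A)).length - 1 := by
      rw [e'_eq]
      unfold eR
      rw [if_pos hgood]
    have key : ∀ j : ℕ, 1 ≤ j → j ≤ (factorsOf (rule A)).length - 1 →
        ISLP.Expands (ruleM rule a₀ hac) (fm rule (slotN rule A.val j))
          ((wl.take (j+1)).flatten) := by
      intro j
      induction j with
      | zero => intro h1 _; exact absurd h1 (by omega)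
      | succ j ih =>
        intro h1 hj
        have hrule : ruleM rule a₀ hac (fm rule (slotN rule A.val (j+1)))
            = chainR rule A (j+1) :=
          ruleM_chain rule a₀ hac (by omega) (by omega) hres
        rcases Nat.eq_zero_or_pos j with rfl | hj0
        · -- base case j+1 = 1
          have hEx0 : ISLP.Expands (ruleM rule a₀ hac)
              (mainM rule ((factorsOf (rule A))[0]'(by omega))) (wl[0]'(by omega)) :=
            forall₂_getElem hF (by omega)
          have hEx1 : ISLP.Expands (ruleM rule a₀ hac)
              (mainM rule ((factorsOf (rule A))[1]'(by omega))) (wl[1]'(by omega)) :=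
            forall₂_getElem hF (by omega)
          have hr : ruleM rule a₀ hac (fm rule (slotN rule A.val 1)) =
              ISLPRule.pair (mainM rule ((factorsOf (rule A))[0]'(by omega)))
                (mainM rule ((factorsOf (rule A))[1]'(by omega))) := by
            rw [hrule, chainR, if_pos rfl,
              List.getD_eq_getElem _ _ (show 0 < (factorsOf (rule A)).length by omega),
              List.getD_eq_getElem _ _ (show 1 < (factorsOf (rule A)).length by omega)]
          have hp := ISLP.Expands.pair hr hEx0 hEx1
          have : (wl[0]'(by omega)) ++ (wl[1]'(by omega)) = (wl.take 2).flatten := by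
            rw [← flatten_take_succ (show 1 < wl.length by omega),
              ← flatten_take_succ (show 0 < wl.length by omega)]
            simp
          rw [← this]
          exact hp
        · -- inductive step
          have ihx := ih (by omega) (by omega)
          have hEx : ISLP.Expands (ruleM rule a₀ hac)
              (mainM rule ((factorsOf (rule A))[j+1]'(by omega))) (wl[j+1]'(by omega)) :=
            forall₂_getElem hF (by omega)
          have hr : ruleM rule a₀ hac (fm rule (slotN rule A.val (j+1))) =
              ISLPRule.pair (fm rule (slotN rule A.val j))
                (mainM rule ((factorsOf (rule A))[j+1]'(by omega))) := by
            rw [hrule, chainR, if_neg (by omega),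
              List.getD_eq_getElem _ _ (show j+1 < (factorsOf (rule A)).length by omega)]
            simp only [Nat.add_sub_cancel]
          rw [← flatten_take_succ (show j+1 < wl.length by omega)]
          exact ISLP.Expands.pair hr ihx hEx
    have hfin := key ((factorsOf (rule A)).length - 1) (by omega) (le_refl _)
    have htake : wl.take ((factorsOf (rule A)).length - 1 + 1) = wl :=
      List.take_of_length_le (by omega)
    rw [htake] at hfin
    have hmm : mainM rule A = fm rule (slotN rule A.val ((factorsOf (rule A)).length - 1)) := by
      rw [mainM, mainS, hE]
    rw [hmm]
    exact hfin

set_option maxHeartbeats 1000000 in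
include hac in
theorem sim {d : ℕ} (hok : ∀ A, (rule A).Ok d) {T : List α}
    (hT : ∀ x : List α, x ≠ [] → ¬ (x ++ x ++ x ++ x) <:+: T) :
    ∀ {A : Fin N} {w : List α}, ISLP.Expands rule A w → w <:+: T →
      ISLP.Expands (ruleM rule a₀ hac) (mainM rule A) w := by
  intro A w h
  induction h with
  | @term A a hr =>
      intro _
      refine ISLP.Expands.term ?_
      rw [ruleM_main, res_id rule hac (by rw [hr]; simp [factorsOf])]
      unfold mkBase
      split
      · next b hb =>
          rw [hr] at hb
          injection hb with hb
          rw [hb]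
      · next B1 B2 hb => rw [hr] at hb; cases hb
      · next k1 k2 Bs hb => rw [hr] at hb; cases hb
  | @pair A B C u v hr hu hv ihu ihv =>
      intro hw
      have hu' : u <:+: T := ((List.prefix_append u v).isInfix).trans hw
      have hv' : v <:+: T := ((List.suffix_append u v).isInfix).trans hw
      refine ISLP.Expands.pair ?_ (ihu hu') (ihv hv')
      rw [ruleM_main, res_id rule hac (by rw [hr]; simp [factorsOf])]
      unfold mkBase
      split
      · next b hb => rw [hr] at hb; cases hb
      · next B1 B2 hb =>
          rw [hr] at hb
          injection hb with hb1 hb2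
          rw [hb1, hb2]
      · next k1 k2 Bs hb => rw [hr] at hb; cases hb
  | @iter A k1 k2 Bs ps hr hsnd hz ih =>
      intro hw
      have hokA := hok A
      rw [hr] at hokA
      obtain ⟨hk1, hk2, hBs, -⟩ := hokA
      have hlen : Bs.length = ps.length := by
        have := congrArg List.length hsnd
        simpa using this.symm
      have hzipget : ∀ j : ℕ, (hj : j < Bs.length) →
          (Bs[j], ps[j]'(by omega)) ∈ Bs.zip ps := by
        intro j hj
        have hg : (Bs.zip ps)[j]'(by rw [List.length_zip]; omega)
            = (Bs[j], ps[j]'(by omega)) := List.getElem_zip ..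
        exact hg ▸ List.getElem_mem _
      have hne : ∀ p ∈ ps, p.1 ≠ [] := by
        intro p hp
        obtain ⟨j, hj, rfl⟩ := List.getElem_of_mem hp
        exact expands_ne_nil hok (hz _ (hzipget j (by omega)))
      have hinfT : ∀ p ∈ ps, p.1 <:+: T := fun p hp =>
        (fst_infix_iterExpand hp hk1 hk2).trans hw
      have h3 := exp_le_three hT hne hw
      have hpsne : ps ≠ [] := by
        intro hnil
        rw [hnil] at hlen
        simp at hlen
        exact hBs hlen
      have hlen3 := rangeK_len_le_three hT hk1 hk2 hpsne hne hw
      have h3B : ∀ i ∈ rangeK k1 k2, ∀ b ∈ Bs, i ^ b.2 ≤ 3 := by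
        intro i hi b hb
        have hmem : b.2 ∈ Bs.map Prod.snd := List.mem_map_of_mem hb
        rw [← hsnd] at hmem
        obtain ⟨p, hp, hpb⟩ := List.mem_map.1 hmem
        rw [← hpb]
        exact h3 i hi p hp
      have hgood : goodB (rule A) = true := by
        rw [hr]
        unfold goodB tLen factorsOf
        rw [decide_eq_true_eq]
        exact factors_length_le h3B hlen3
      have hFps : List.Forall₂ (fun (b : Fin N × ℕ) (p : List α × ℕ) =>
          ISLP.Expands (ruleM rule a₀ hac) (mainM rule b.1) p.1 ∧ b.2 = p.2) Bs ps := by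
        rw [List.forall₂_iff_get]
        refine ⟨hlen, ?_⟩
        intro i h1 h2
        constructor
        · simp only [List.get_eq_getElem]
          exact ih _ (hzipget i h1) (hinfT _ (List.getElem_mem _))
        · simp only [List.get_eq_getElem]
          have hg := List.getElem_of_eq hsnd (i := i) (by simpa using h2)
          simp only [List.getElem_map] at hg
          exact hg.symm
      have hF : List.Forall₂ (fun (B : Fin N) (w : List α) =>
            ISLP.Expands (ruleM rule a₀ hac) (mainM rule B) w)
          ((rangeK k1 k2).flatMap fun i => Bs.flatMap fun b => List.replicate (i^b.2) b.1)
          ((rangeK k1 k2).flatMap fun i => ps.flatMap fun p => List.replicate (i^p.2) p.1) := by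
        refine List.rel_flatMap
          (show List.Forall₂ (· = ·) (rangeK k1 k2) (rangeK k1 k2) from List.forall₂_refl _) ?_
        intro i i' hii
        subst hii
        refine List.rel_flatMap hFps ?_
        intro b p hbp
        show List.Forall₂ (fun (B : Fin N) (w : List α) =>
            ISLP.Expands (ruleM rule a₀ hac) (mainM rule B) w)
          (List.replicate (i ^ b.2) b.1) (List.replicate (i ^ p.2) p.1)
        rw [hbp.2]
        exact forall₂_replicate (R := fun (B : Fin N) (w : List α) =>
          ISLP.Expands (ruleM rule a₀ hac) (mainM rule B) w) hbp.1 _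
      rw [iterExpand_eq]
      have hfac : factorsOf (rule A)
          = (rangeK k1 k2).flatMap fun i => Bs.flatMap fun b => List.replicate (i^b.2) b.1 := by
        rw [hr]
        rfl
      have hlen1 : 1 ≤ (factorsOf (rule A)).length := by
        have hnn : factorsOf (rule A) ≠ [] := by
          rw [hr]
          exact factorsOf_iter_ne_nil (hr ▸ hok A)
        have := List.length_pos_iff.2 hnn
        omega
      exact expands_chain rule hac a₀ hgood hlen1 (by rw [hfac]; exact hF)

end Sim

end FPF
namespace FPF

open List

variable {α : Type} {N : ℕ}

theorem size_bound_per_rule (r : ISLPRule α N) : 2 * (1 + eR r) + 2 ≤ 9 * r.size := by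
  cases r with
  | term a =>
      have : eR (ISLPRule.term a : ISLPRule α N) = 0 := by
        simp [eR, factorsOf]
      rw [this]
      simp [ISLPRule.size]
  | pair B C =>
      have : eR (ISLPRule.pair B C : ISLPRule α N) = 0 := by
        simp [eR, factorsOf]
      rw [this]
      simp [ISLPRule.size]
  | iter k1 k2 Bs =>
      unfold eR
      split
      · next hg =>
          have h : (factorsOf (ISLPRule.iter k1 k2 Bs : ISLPRule α N)).length
              ≤ 9 * Bs.length := by
            simp only [goodB, tLen] at hg; exact of_decide_eq_true hg
          simp only [ISLPRule.size]
          omega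
      · simp only [ISLPRule.size]
        omega

section SizeBound

variable (rule : Fin N → ISLPRule α N)
variable (hac : ∀ A : Fin N, ∀ B ∈ (rule A).vars, B < A) (a₀ : α)

include hac in
theorem sizeM_le (hN : 1 ≤ N) :
    ∑ s : Fin (M rule), (ruleM rule a₀ hac s).size ≤ 9 * ∑ A : Fin N, (rule A).size := by
  have h2 : ∑ s : Fin (M rule), (ruleM rule a₀ hac s).size ≤ 2 * M rule := by
    have h := Finset.sum_le_card_nsmul Finset.univ
      (fun s : Fin (M rule) => (ruleM rule a₀ hac s).size) 2
      (fun s _ => size_le_of_isSLP (ruleM_isSLP rule a₀ hac s))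
    simpa [mul_comm] using h
  have h3 : M rule = (∑ A : Fin N, (1 + eR (rule A))) + 1 := by
    unfold M pos
    congr 1
    rw [← Fin.sum_univ_eq_sum_range (fun i => 1 + e' rule i) N]
    exact Finset.sum_congr rfl fun A _ => by rw [e'_eq]
  have h4 : ∑ A : Fin N, (2 * (1 + eR (rule A)) + 2) ≤ ∑ A : Fin N, 9 * (rule A).size :=
    Finset.sum_le_sum fun A _ => size_bound_per_rule (rule A)
  have h5 : ∑ A : Fin N, (2 * (1 + eR (rule A)) + 2)
      = 2 * (∑ A : Fin N, (1 + eR (rule A))) + 2 * N := by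
    rw [Finset.sum_add_distrib, Finset.mul_sum]
    simp [Finset.card_univ, mul_comm]
  have h6 : ∑ A : Fin N, 9 * (rule A).size = 9 * ∑ A : Fin N, (rule A).size := by
    rw [Finset.mul_sum]
  omega

end SizeBound

end FPF

/-- There is a universal constant `C` such that for every
`d ≥ 0` and every nonempty string `T` with no fourth-power substring, any
`d`-ISLP of size `g` generating `T` can be converted into an SLP (an ISLP
using only rules `A → a` and `A → BC`) of size at most `C·g` generating `T`. -/
theorem fourth_power_free_islp_to_slp :
    ∃ C : ℕ, ∀ (α : Type) [Fintype α] (d : ℕ) (T : List α), T ≠ [] →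
      (∀ x : List α, x ≠ [] → ¬ (x ++ x ++ x ++ x) <:+: T) →
      ∀ G : ISLP α d, G.Generates T →
        ∃ G' : ISLP α d, (∀ A, (G'.rule A).isSLP) ∧ G'.Generates T ∧
          G'.size ≤ C * G.size := by
  refine ⟨9, ?_⟩
  intro α _ d T hTne hT4 G hGen
  obtain ⟨N, rule, start, hok, hac⟩ := G
  refine ⟨⟨FPF.M rule, FPF.ruleM rule (T.head hTne) hac, FPF.mainM rule start,
      fun s => FPF.ok_of_isSLP (FPF.ruleM_isSLP rule (T.head hTne) hac s),
      FPF.ruleM_acyclic rule (T.head hTne) hac hok⟩, ?_, ?_, ?_⟩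
  · intro A
    exact FPF.ruleM_isSLP rule (T.head hTne) hac A
  · exact FPF.sim rule hac (T.head hTne) hok hT4 hGen (List.infix_refl T)
  · exact FPF.sizeM_le rule hac (T.head hTne) start.pos
end

section
/- For every integer d ≥ 0, there exist constants C and c > 0 such that for all i ≥ 2: g_it(d)(F_i) ≥ c·log₂|F_i| while ℓ(F_i) ≤ C; that is, on the family of Fibonacci words, g_it(d) = Ω(log n) while the smallest L-system has size O(1). -/
/-- The Fibonacci words over `{a, b} = Bool` (with `a = false`, `b = true`):
`F_0 = a`, `F_1 = b`, `F_{i+2} = F_{i+1}·F_i`. -/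
def fibWord : ℕ → List Bool
  | 0 => [false]
  | 1 => [true]
  | n + 2 => fibWord (n + 1) ++ fibWord n

namespace Fib7

/-- the Fibonacci substitution: b = true ↦ ba, a = false ↦ b -/
def sub : Bool → List Bool
  | true => [true, false]
  | false => [true]

def subs (w : List Bool) : List Bool := w.flatMap sub

@[simp] lemma subs_nil : subs [] = [] := rfl
@[simp] lemma subs_cons (c : Bool) (w : List Bool) : subs (c :: w) = sub c ++ subs w := rfl

lemma subs_append (v w : List Bool) : subs (v ++ w) = subs v ++ subs w := by
  simp [subs]

lemma subs_eq_nil {w : List Bool} (h : subs w = []) : w = [] := by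
  cases w with
  | nil => rfl
  | cons c w => cases c <;> simp [sub] at h

lemma subs_head (w : List Bool) : subs w = [] ∨ ∃ z, subs w = true :: z := by
  cases w with
  | nil => exact Or.inl rfl
  | cons c w => cases c <;> exact Or.inr ⟨_, rfl⟩

lemma subs_inj : ∀ {v u : List Bool}, subs v = subs u → v = u := by
  intro v
  induction v with
  | nil => intro u h; exact (subs_eq_nil h.symm).symm
  | cons c v ih =>
    intro u h
    cases u with
    | nil => simp at h; cases c <;> simp [sub] at h
    | cons e u =>
      cases c <;> cases e <;> simp [sub] at h
      · exact by rw [ih h]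
      · -- c=false sub=[true]; e=true sub=[true,false]: subs v = false :: subs u
        exfalso
        rcases subs_head v with h0 | ⟨z, h0⟩ <;> rw [h0] at h <;> simp at h
      · exfalso
        rcases subs_head u with h0 | ⟨z, h0⟩ <;> rw [h0] at h <;> simp at h
      · exact by rw [ih h]

lemma length_subs (w : List Bool) : (subs w).length = w.length + w.count true := by
  induction w with
  | nil => simp
  | cons c w ih => cases c <;> simp [sub, ih, List.count_cons] <;> omega

lemma countF_subs (w : List Bool) : (subs w).count false = w.count true := by
  induction w with
  | nil => simp
  | cons c w ih => cases c <;> simp [sub, ih, List.count_cons]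

/-- head condition: a word starts a block boundary -/
def HB (z : List Bool) : Prop := z = [] ∨ ∃ z', z = true :: z'

lemma split_prefix : ∀ (v z r : List Bool), subs v = z ++ r → HB r →
    ∃ v₁ v₂, v = v₁ ++ v₂ ∧ subs v₁ = z ∧ subs v₂ = r := by
  intro v
  induction v with
  | nil =>
    intro z r h _
    rcases List.append_eq_nil_iff.mp h.symm with ⟨hz, hr⟩
    exact ⟨[], [], rfl, by simp [hz], by simp [hr]⟩
  | cons c v ih =>
    intro z r h hr
    cases z with
    | nil => exact ⟨[], c :: v, rfl, rfl, by simpa using h⟩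
    | cons x z' =>
      cases c with
      | false =>
        simp [sub] at h
        obtain ⟨hx, h2⟩ := h
        obtain ⟨w₁, w₂, he, h1, h2⟩ := ih z' r h2 hr
        subst hx
        exact ⟨false :: w₁, w₂, by simp [he], by simp [sub, h1], h2⟩
      | true =>
        simp [sub] at h
        obtain ⟨hx, h2⟩ := h
        cases z' with
        | nil =>
          exfalso
          rcases hr with hr | ⟨r', hr⟩
          · subst hr; simp at h2
          · rw [hr] at h2; simp at h2
        | cons y z'' =>
          simp at h2
          obtain ⟨hy, h3⟩ := h2
          obtain ⟨w₁, w₂, he, h1, h2⟩ := ih z'' r h3 hr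
          subst hx; subst hy
          exact ⟨true :: w₁, w₂, by simp [he], by simp [sub, h1], h2⟩

lemma split_suffix : ∀ (v l z : List Bool), subs v = l ++ z → HB z →
    ∃ v₁ v₂, v = v₁ ++ v₂ ∧ subs v₁ = l ∧ subs v₂ = z := by
  intro v
  induction v with
  | nil =>
    intro l z h _
    rcases List.append_eq_nil_iff.mp h.symm with ⟨hl, hz⟩
    exact ⟨[], [], rfl, by simp [hl], by simp [hz]⟩
  | cons c v ih =>
    intro l z h hz
    cases l with
    | nil => exact ⟨[], c :: v, rfl, rfl, by simpa using h⟩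
    | cons x l' =>
      cases c with
      | false =>
        simp [sub] at h
        obtain ⟨hx, h2⟩ := h
        obtain ⟨w₁, w₂, he, h1, h2⟩ := ih l' z h2 hz
        subst hx
        exact ⟨false :: w₁, w₂, by simp [he], by simp [sub, h1], h2⟩
      | true =>
        simp [sub] at h
        obtain ⟨hx, h2⟩ := h
        cases l' with
        | nil =>
          exfalso
          rcases hz with hz | ⟨z', hz⟩
          · subst hz; simp at h2
          · rw [hz] at h2; simp at h2
        | cons y l'' =>
          simp at h2
          obtain ⟨hy, h3⟩ := h2
          obtain ⟨w₁, w₂, he, h1, h2⟩ := ih l'' z h3 hz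
          subst hx; subst hy
          exact ⟨true :: w₁, w₂, by simp [he], by simp [sub, h1], h2⟩


lemma no_aa : ∀ v : List Bool, ¬ ([false, false] <:+: subs v) := by
  intro v
  induction v with
  | nil => simp
  | cons c v ih =>
    rintro ⟨l, r, h⟩
    match l, c with
    | [], false => simp [sub] at h
    | [], true => simp [sub] at h
    | [x], false =>
      simp [sub] at h
      exact ih ⟨[], r, by simp [h.2]⟩
    | [x], true =>
      simp [sub] at h
      rcases subs_head v with h0 | ⟨z, h0⟩ <;> rw [h0] at h <;> simp at h
    | x :: y :: l', false =>
      simp [sub] at h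
      exact ih ⟨y :: l', r, by simp [h.2]⟩
    | x :: y :: l', true =>
      simp [sub] at h
      exact ih ⟨l', r, by simp [h.2.2]⟩

lemma bbb_pull : ∀ v : List Bool, ([true, true, true] <:+: subs v) → ([false, false] <:+: v) := by
  intro v
  induction v with
  | nil => simp
  | cons c v ih =>
    rintro ⟨l, r, h⟩
    match l, c with
    | [], false =>
      -- subs v = true :: true :: r : v starts with two falses
      simp [sub] at h
      cases v with
      | nil => simp at h
      | cons e v' =>
        cases e with
        | true => simp [sub] at h
        | false =>
          simp [sub] at h
          exact ⟨[], v', by simp⟩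
    | [], true => simp [sub] at h
    | [x], false =>
      simp [sub] at h
      exact (ih ⟨[], r, by simp [h.2]⟩).trans ⟨[false], [], by simp⟩
    | [x], true =>
      simp [sub] at h
    | x :: y :: l', false =>
      simp [sub] at h
      exact (ih ⟨y :: l', r, by simp [h.2]⟩).trans ⟨[false], [], by simp⟩
    | x :: y :: l', true =>
      simp [sub] at h
      exact (ih ⟨l', r, by simp [h.2.2]⟩).trans ⟨[true], [], by simp⟩

lemma tail_lemma : ∀ (m t : List Bool) (s : ℕ), subs t = (subs m).take s →
    (t <+: m) ∨ (∃ t₀ rest, t = t₀ ++ [false] ∧ m = t₀ ++ [true] ++ rest) := by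
  intro m
  induction m with
  | nil =>
    intro t s h
    simp at h
    exact Or.inl (by simp [subs_eq_nil h])
  | cons c m ih =>
    intro t s h
    cases t with
    | nil => exact Or.inl (by simp)
    | cons e t' =>
      cases s with
      | zero => simp at h; cases e <;> simp [sub] at h
      | succ s =>
        cases c with
        | false =>
          simp [sub, List.take_cons] at h
          cases e with
          | false =>
            simp [sub] at h
            rcases ih t' s h with h1 | ⟨t₀, rest, h1, h2⟩
            · exact Or.inl (by simpa using h1)
            · exact Or.inr ⟨false :: t₀, rest, by simp [h1], by simp [h2]⟩
          | true =>
            simp [sub] at h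
            -- h : false :: subs t' = (subs m).take s
            exfalso
            cases s with
            | zero => simp at h
            | succ s' =>
              rcases subs_head m with h0 | ⟨z, h0⟩ <;> rw [h0] at h <;> simp at h
        | true =>
          simp [sub, List.take_cons] at h
          cases e with
          | true =>
            simp [sub] at h
            -- h : false :: subs t' = (false :: subs m).take s
            cases s with
            | zero => simp at h
            | succ s' =>
              simp [List.take_cons] at h
              rcases ih t' s' h with h1 | ⟨t₀, rest, h1, h2⟩
              · exact Or.inl (by simpa using h1)
              · exact Or.inr ⟨true :: t₀, rest, by simp [h1], by simp [h2]⟩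
          | false =>
            simp [sub] at h
            -- h : subs t' = (false :: subs m).take s
            cases s with
            | zero =>
              simp at h
              exact Or.inr ⟨[], m, by simp [subs_eq_nil h], by simp⟩
            | succ s' =>
              exfalso
              simp [List.take_cons] at h
              rcases subs_head t' with h0 | ⟨z, h0⟩ <;> rw [h0] at h <;> simp at h

/-- an "object": near-4th-power of period p with one letter of slack -/
def Obj (p : ℕ) (x : List Bool) : Prop :=
  ∃ u γ, u.length = p ∧ x = u ++ u ++ u ++ u.take (p - 2) ++ [γ]

lemma mk_infix {m W : List Bool} (l r : List Bool) (h : W = l ++ (m ++ r)) : m <:+: W :=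
  ⟨l, r, by rw [h, List.append_assoc]⟩

lemma take_decomp {u : List Bool} {k : ℕ} (h : k < u.length) :
    ∃ g, u.take (k + 1) = u.take k ++ [g] := by
  refine ⟨u.get ⟨k, h⟩, ?_⟩
  rw [List.take_succ]
  simp [List.getElem?_eq_getElem h]

lemma prefix_take {t m : List Bool} (h : t <+: m) : t = m.take t.length := by
  obtain ⟨d, hd⟩ := h
  rw [← hd]
  simp

lemma obj_make {m t : List Bool} (g : Bool) (hp : 2 ≤ m.length) (ht : t <+: m)
    (hl : m.length - 2 ≤ t.length) :
    ∃ x', Obj m.length x' ∧ x' <+: (m ++ m ++ m ++ t ++ [g]) := by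
  rcases Nat.lt_or_ge t.length (m.length - 1) with hc | hc
  · -- t.length = m.length - 2
    have hteq : t.length = m.length - 2 := by omega
    refine ⟨m ++ m ++ m ++ t ++ [g], ⟨m, g, rfl, ?_⟩, List.prefix_refl _⟩
    rw [prefix_take ht, hteq]
  · -- t.length ≥ m.length - 1 : use t.take (m.length - 1)
    have h1 : m.length - 2 < m.length := by omega
    obtain ⟨g', hg'⟩ := take_decomp (u := m) h1
    have h2 : m.length - 2 + 1 = m.length - 1 := by omega
    rw [h2] at hg'
    have htk : t.take (m.length - 1) = m.take (m.length - 1) := by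
      rw [prefix_take ht]
      rw [List.take_take]
      congr 1
      omega
    refine ⟨m ++ m ++ m ++ m.take (m.length - 2) ++ [g'], ⟨m, g', rfl, rfl⟩, ?_⟩
    have : m.take (m.length - 2) ++ [g'] = t.take (m.length - 1) := by rw [htk, hg']
    have hpre : t.take (m.length - 1) <+: t ++ [g] :=
      (List.take_prefix _ t).trans ⟨[g], rfl⟩
    obtain ⟨d, hd⟩ := hpre
    refine ⟨d, ?_⟩
    simp only [List.append_assoc, this]
    rw [hd]

lemma obj_make' {m t : List Bool} (hp : 2 ≤ m.length) (ht : t <+: m)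
    (hl : m.length - 1 ≤ t.length) :
    ∃ x', Obj m.length x' ∧ x' <+: (m ++ m ++ m ++ t) := by
  have h1 : m.length - 2 < m.length := by omega
  obtain ⟨g', hg'⟩ := take_decomp (u := m) h1
  have h2 : m.length - 2 + 1 = m.length - 1 := by omega
  rw [h2] at hg'
  have htk : t.take (m.length - 1) = m.take (m.length - 1) := by
    rw [prefix_take ht, List.take_take]
    congr 1
    omega
  refine ⟨m ++ m ++ m ++ m.take (m.length - 2) ++ [g'], ⟨m, g', rfl, rfl⟩, ?_⟩
  have he : m.take (m.length - 2) ++ [g'] = t.take (m.length - 1) := by rw [htk, hg']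
  obtain ⟨d, hd⟩ := (List.take_prefix (m.length - 1) t)
  refine ⟨d, ?_⟩
  simp only [List.append_assoc, he]
  rw [hd]

lemma concat_decomp {t : List Bool} (h : t ≠ []) : ∃ t₁ c, t = t₁ ++ [c] :=
  ⟨t.dropLast, t.getLast h, (List.dropLast_append_getLast h).symm⟩

lemma drop2 {u : List Bool} (hp : 2 ≤ u.length) :
    ∃ δ lam, u = u.take (u.length - 2) ++ [δ, lam] := by
  have h1 : u ≠ [] := by intro h; rw [h] at hp; simp at hp
  obtain ⟨w, c, hw⟩ := concat_decomp h1
  have h2 : w ≠ [] := by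
    intro h
    rw [h] at hw
    rw [hw] at hp
    simp at hp
  obtain ⟨w2, c2, hw2⟩ := concat_decomp h2
  refine ⟨c2, c, ?_⟩
  have hu2 : u = w2 ++ [c2, c] := by rw [hw, hw2]; simp
  have hl : w2.length = u.length - 2 := by rw [hu2]; simp
  have htk : u.take (u.length - 2) = w2 := by
    conv_lhs => rw [hu2]
    exact List.take_left' (by simp)
  rw [htk]
  exact hu2

lemma hb_app {w z : List Bool} (hw : ∃ y, w = true :: y) : HB (w ++ z) := by
  obtain ⟨y, rfl⟩ := hw
  exact Or.inr ⟨y ++ z, by simp⟩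

lemma stepB (p : ℕ) (hp : 3 ≤ p) (v : List Bool) (hv : ¬ [false, false] <:+: v)
    (u : List Bool) (γ : Bool) (hu : u.length = p) (hhd : ∃ z, u = true :: z)
    (l r : List Bool)
    (hocc : subs v = l ++ (u ++ u ++ u ++ u.take (p - 2) ++ [γ]) ++ r) :
    ∃ p' x', 2 ≤ p' ∧ p' < p ∧ Obj p' x' ∧ x' <:+: v := by
  have hW_aa : ¬ [false, false] <:+: subs v := no_aa v
  have hW_bbb : ¬ [true, true, true] <:+: subs v := fun h => hv (bbb_pull v h)
  have hT2 : ∃ z2, u.take (p - 2) = true :: z2 := by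
    obtain ⟨z, rfl⟩ := hhd
    exact ⟨z.take (p - 3), by rw [show p - 2 = (p - 3) + 1 by omega, List.take_succ_cons]⟩
  simp only [List.append_assoc] at hocc
  cases γ with
  | true =>
    obtain ⟨v₁, v₂₃, hv12, hsl, hsz⟩ :=
      split_suffix v l (u ++ (u ++ (u ++ (u.take (p - 2) ++ ([true] ++ r))))) hocc
        (hb_app hhd)
    have hsz' : subs v₂₃ = (u ++ (u ++ (u ++ u.take (p - 2)))) ++ (true :: r) := by
      rw [hsz]; simp [List.append_assoc]
    obtain ⟨v₂, v₃, hv23, hsx, hsr⟩ := split_prefix v₂₃ _ _ hsz' (Or.inr ⟨r, rfl⟩)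
    have hsx1 : subs v₂ = u ++ (u ++ (u ++ u.take (p - 2))) := hsx
    obtain ⟨m₁, w₁, hw1, hsm1, hsw1⟩ := split_prefix v₂ u _ hsx1 (hb_app hhd)
    obtain ⟨m₂, w₂, hw2, hsm2, hsw2⟩ := split_prefix w₁ u _ hsw1 (hb_app hhd)
    obtain ⟨m₃, t, hw3, hsm3, hst⟩ := split_prefix w₂ u _ hsw2 (Or.inr hT2)
    have hm2 : m₂ = m₁ := subs_inj (hsm2.trans hsm1.symm)
    have hm3 : m₃ = m₁ := subs_inj (hsm3.trans hsm1.symm)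
    rw [hm2] at hw2
    rw [hm3] at hw3
    obtain ⟨e, v₃', hv3⟩ : ∃ e v₃', v₃ = e :: v₃' := by
      cases v₃ with
      | nil => simp at hsr
      | cons e v₃' => exact ⟨e, v₃', rfl⟩
    have hvfull : v = v₁ ++ (m₁ ++ (m₁ ++ (m₁ ++ (t ++ ([e] ++ v₃'))))) := by
      rw [hv12, hv23, hw1, hw2, hw3, hv3]; simp [List.append_assoc]
    have hlm : p = m₁.length + m₁.count true := by
      rw [← hu, ← hsm1]; exact length_subs m₁
    have hβ : 1 ≤ m₁.count true := by
      by_contra hc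
      push_neg at hc
      have h0 : m₁.count true = 0 := by omega
      have hnt : true ∉ m₁ := List.count_eq_zero.mp h0
      have hml : 3 ≤ m₁.length := by omega
      obtain ⟨a, b, m2, hmdec⟩ : ∃ a b m2, m₁ = a :: b :: m2 := by
        cases m₁ with
        | nil => simp at hml
        | cons a n1 =>
          cases n1 with
          | nil => simp at hml
          | cons b n2 => exact ⟨a, b, n2, rfl⟩
      have ha : a = false := by
        cases a
        · rfl
        · exact absurd (by rw [hmdec]; exact List.mem_cons_self) hnt
      have hb : b = false := by
        cases b
        · rfl
        · exact absurd (by rw [hmdec]; exact List.mem_cons_of_mem _ (List.mem_cons_self)) hnt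
      refine hv (List.IsInfix.trans ?_ (mk_infix v₁ (m₁ ++ (m₁ ++ (t ++ ([e] ++ v₃')))) hvfull))
      rw [hmdec, ha, hb]
      exact ⟨[], m2, by simp⟩
    have hcle : m₁.count true ≤ m₁.length := List.count_le_length
    have hp'2 : 2 ≤ m₁.length := by omega
    have hp'lt : m₁.length < p := by omega
    have htt : subs t = (subs m₁).take (p - 2) := by rw [hst, hsm1]
    have hlent : t.length + t.count true = p - 2 := by
      have h1 := length_subs t
      have h2 : (subs t).length = p - 2 := by
        rw [hst]
        simp [hu]
      omega
    rcases tail_lemma m₁ t (p - 2) htt with hpre | ⟨t₀, rest, hteq, hmeq⟩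
    · have hcnt : t.count true ≤ m₁.count true := hpre.sublist.count_le _
      have hlt : m₁.length - 2 ≤ t.length := by omega
      obtain ⟨x', hobj, hxpre⟩ := obj_make e hp'2 hpre hlt
      refine ⟨m₁.length, x', hp'2, hp'lt, hobj, hxpre.isInfix.trans ?_⟩
      exact mk_infix v₁ v₃' (by rw [hvfull]; simp [List.append_assoc])
    · have ht₀ : t₀ <+: m₁ := ⟨true :: rest, by rw [hmeq]; simp⟩
      have hcnt : t₀.count true + 1 ≤ m₁.count true := by
        rw [hmeq]
        simp [List.count_append, List.count_cons]
      have hst₀ : subs t = subs t₀ ++ [true] := by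
        rw [hteq, subs_append]; rfl
      have hlent₀ : t₀.length + t₀.count true = p - 3 := by
        have h1 := length_subs t₀
        have h2 := length_subs t
        have h3 : (subs t).length = (subs t₀).length + 1 := by rw [hst₀]; simp
        have h4 : t.length = t₀.length + 1 := by rw [hteq]; simp
        have h5 : t.count true = t₀.count true := by rw [hteq]; simp
        omega
      have hlt : m₁.length - 2 ≤ t₀.length := by omega
      obtain ⟨x', hobj, hxpre⟩ := obj_make false hp'2 ht₀ hlt
      refine ⟨m₁.length, x', hp'2, hp'lt, hobj, hxpre.isInfix.trans ?_⟩
      refine mk_infix v₁ ([e] ++ v₃') ?_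
      rw [hvfull, hteq]
      simp [List.append_assoc]
  | false =>
    have h1 : p - 3 < u.length := by omega
    obtain ⟨g, hg⟩ := take_decomp (u := u) h1
    rw [show p - 3 + 1 = p - 2 by omega] at hg
    have hgt : g = true := by
      cases g
      · exfalso
        apply hW_aa
        refine mk_infix (l ++ (u ++ (u ++ (u ++ u.take (p - 3))))) r ?_
        rw [hocc, hg]
        simp [List.append_assoc]
      · rfl
    rw [hgt] at hg
    have hbr : HB r := by
      cases r with
      | nil => exact Or.inl rfl
      | cons rh r' =>
        cases rh with
        | true => exact Or.inr ⟨r', rfl⟩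
        | false =>
          exfalso
          apply hW_aa
          refine mk_infix (l ++ (u ++ (u ++ (u ++ u.take (p - 2))))) r' ?_
          rw [hocc]
          simp [List.append_assoc]
    obtain ⟨v₁, v₂₃, hv12, hsl, hsz⟩ :=
      split_suffix v l (u ++ (u ++ (u ++ (u.take (p - 2) ++ ([false] ++ r))))) hocc
        (hb_app hhd)
    have hsz' : subs v₂₃ = (u ++ (u ++ (u ++ (u.take (p - 2) ++ [false])))) ++ r := by
      rw [hsz]; simp [List.append_assoc]
    obtain ⟨v₂, v₃, hv23, hsx, hsr⟩ := split_prefix v₂₃ _ _ hsz' hbr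
    obtain ⟨m₁, w₁, hw1, hsm1, hsw1⟩ := split_prefix v₂ u _ hsx (hb_app hhd)
    obtain ⟨m₂, w₂, hw2, hsm2, hsw2⟩ := split_prefix w₁ u _ hsw1 (hb_app hhd)
    obtain ⟨m₃, t, hw3, hsm3, hst⟩ := split_prefix w₂ u _ hsw2 (hb_app hT2)
    have hm2 : m₂ = m₁ := subs_inj (hsm2.trans hsm1.symm)
    have hm3 : m₃ = m₁ := subs_inj (hsm3.trans hsm1.symm)
    rw [hm2] at hw2
    rw [hm3] at hw3
    have hvfull : v = v₁ ++ (m₁ ++ (m₁ ++ (m₁ ++ (t ++ v₃)))) := by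
      rw [hv12, hv23, hw1, hw2, hw3]; simp [List.append_assoc]
    have hlm : p = m₁.length + m₁.count true := by
      rw [← hu, ← hsm1]; exact length_subs m₁
    have hβ : 1 ≤ m₁.count true := by
      by_contra hc
      push_neg at hc
      have h0 : m₁.count true = 0 := by omega
      have hnt : true ∉ m₁ := List.count_eq_zero.mp h0
      have hml : 3 ≤ m₁.length := by omega
      obtain ⟨a, b, m2, hmdec⟩ : ∃ a b m2, m₁ = a :: b :: m2 := by
        cases m₁ with
        | nil => simp at hml
        | cons a n1 =>
          cases n1 with
          | nil => simp at hml
          | cons b n2 => exact ⟨a, b, n2, rfl⟩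
      have ha : a = false := by
        cases a
        · rfl
        · exact absurd (by rw [hmdec]; exact List.mem_cons_self) hnt
      have hb : b = false := by
        cases b
        · rfl
        · exact absurd (by rw [hmdec]; exact List.mem_cons_of_mem _ (List.mem_cons_self)) hnt
      refine hv (List.IsInfix.trans ?_ (mk_infix v₁ (m₁ ++ (m₁ ++ (t ++ v₃))) hvfull))
      rw [hmdec, ha, hb]
      exact ⟨[], m2, by simp⟩
    have hcle : m₁.count true ≤ m₁.length := List.count_le_length
    have hp'2 : 2 ≤ m₁.length := by omega
    have hp'lt : m₁.length < p := by omega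
    -- decompose the right end of u
    obtain ⟨δ, lam, hdec⟩ := drop2 (u := u) (by omega)
    rw [hu] at hdec
    cases δ with
    | false =>
      -- pattern continues with false: the tail is u.take (p-1), a clean prefix of u
      have htp1 : u.take (p - 1) = u.take (p - 2) ++ [false] := by
        conv_lhs => rw [hdec]
        rw [List.take_append]
        have hlt2 : (u.take (p - 2)).length = p - 2 := by
          simp [hu]
        rw [List.take_of_length_le (by omega), hlt2]
        rw [show p - 1 - (p - 2) = 1 by omega]
        rfl
      have htt : subs t = (subs m₁).take (p - 1) := by rw [hst, hsm1, htp1]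
      have hlent : t.length + t.count true = p - 1 := by
        have h1 := length_subs t
        have h2 : (subs t).length = p - 1 := by
          rw [hst, ← htp1]
          rw [List.length_take, hu]
          omega
        omega
      rcases tail_lemma m₁ t (p - 1) htt with hpre | ⟨t₀, rest, hteq, hmeq⟩
      · have hcnt : t.count true ≤ m₁.count true := hpre.sublist.count_le _
        have hlt : m₁.length - 1 ≤ t.length := by omega
        obtain ⟨x', hobj, hxpre⟩ := obj_make' hp'2 hpre hlt
        refine ⟨m₁.length, x', hp'2, hp'lt, hobj, hxpre.isInfix.trans ?_⟩
        exact mk_infix v₁ v₃ (by rw [hvfull]; simp [List.append_assoc])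
      · have ht₀ : t₀ <+: m₁ := ⟨true :: rest, by rw [hmeq]; simp⟩
        have hcnt : t₀.count true + 1 ≤ m₁.count true := by
          rw [hmeq]
          simp [List.count_append, List.count_cons]
        have hst₀ : subs t = subs t₀ ++ [true] := by rw [hteq, subs_append]; rfl
        have hlent₀ : t₀.length + t₀.count true = p - 2 := by
          have h1 := length_subs t₀
          have h2 := length_subs t
          have h3 : (subs t).length = (subs t₀).length + 1 := by rw [hst₀]; simp
          have h4 : t.length = t₀.length + 1 := by rw [hteq]; simp
          have h5 : t.count true = t₀.count true := by rw [hteq]; simp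
          omega
        have hlt : m₁.length - 1 ≤ t₀.length := by omega
        obtain ⟨x', hobj, hxpre⟩ := obj_make' hp'2 ht₀ hlt
        refine ⟨m₁.length, x', hp'2, hp'lt, hobj, hxpre.isInfix.trans ?_⟩
        refine mk_infix v₁ ([false] ++ v₃) ?_
        rw [hvfull, hteq]
        simp [List.append_assoc]
    | true =>
      have hlam : lam = false := by
        cases lam
        · rfl
        · exfalso
          apply hW_bbb
          have husuf : u = u.take (p - 3) ++ [true, true, true] := by
            conv_lhs => rw [hdec, hg]
            simp
          refine mk_infix (l ++ u.take (p - 3))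
            (u ++ (u ++ (u.take (p - 2) ++ ([false] ++ r)))) ?_
          rw [hocc]
          nth_rewrite 1 [husuf]
          simp [List.append_assoc]
      rw [hlam] at hdec
      have husuf : u = u.take (p - 3) ++ [true, true, false] := by
        conv_lhs => rw [hdec, hg]
        simp
      have htne : t ≠ [] := by
        intro h
        rw [h] at hst
        simp at hst
      obtain ⟨t₁, c, htc⟩ := concat_decomp htne
      have hstc : subs t₁ ++ sub c = u.take (p - 2) ++ [false] := by
        rw [htc, subs_append] at hst
        simpa using hst
      cases c with
      | false =>
        exfalso
        simp only [sub] at hstc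
        have h2 := (List.append_inj' hstc (by simp)).2
        simp at h2
      | true =>
        simp only [sub] at hstc
        have h2 : subs t₁ ++ [true, false] = u.take (p - 3) ++ [true, false] := by
          rw [hstc, hg]
          simp
        have hst₁ : subs t₁ = u.take (p - 3) := (List.append_inj' h2 rfl).1
        have hmne : m₁ ≠ [] := by
          intro h
          rw [h] at hsm1
          have : u = [] := hsm1.symm
          rw [this] at hu
          simp at hu
          omega
        obtain ⟨mm, cm, hmc⟩ := concat_decomp hmne
        have hsmc : subs mm ++ sub cm = u := by
          rw [hmc, subs_append] at hsm1
          simpa using hsm1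
        cases cm with
        | false =>
          exfalso
          simp only [sub] at hsmc
          have h3 : subs mm ++ [true] = (u.take (p - 3) ++ [true, true]) ++ [false] := by
            rw [hsmc]
            conv_lhs => rw [husuf]
            simp
          have h4 := (List.append_inj' h3 (by simp)).2
          simp at h4
        | true =>
          simp only [sub] at hsmc
          have h3 : subs mm ++ [true, false] = (u.take (p - 3) ++ [true]) ++ [true, false] := by
            rw [hsmc]
            conv_lhs => rw [husuf]
            simp
          have hsmm : subs mm = u.take (p - 3) ++ [true] := (List.append_inj' h3 rfl).1
          have htt : subs t₁ = (subs m₁).take (p - 3) := by rw [hst₁, hsm1]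
          have hlent₁ : t₁.length + t₁.count true = p - 3 := by
            have h5 := length_subs t₁
            have h6 : (subs t₁).length = p - 3 := by
              rw [hst₁, List.length_take, hu]
              omega
            omega
          have hcm : m₁.count true = mm.count true + 1 := by
            rw [hmc]
            simp [List.count_append]
          have hlmm : m₁.length = mm.length + 1 := by rw [hmc]; simp
          rcases tail_lemma m₁ t₁ (p - 3) htt with hpre | ⟨t₂, rest2, ht2, hm2'⟩
          · have htne2 : t₁ ≠ m₁ := by
              intro h
              rw [h, hsm1] at hst₁
              have h7 := congrArg List.length hst₁
              rw [List.length_take, hu] at h7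
              omega
            have hlt1 : t₁.length < m₁.length := by
              rcases lt_or_eq_of_le hpre.length_le with h | h
              · exact h
              · exact absurd (List.IsPrefix.eq_of_length hpre h) htne2
            have ht₁mm : t₁ <+: mm := by
              have h6 : t₁ = m₁.take t₁.length := prefix_take hpre
              have h7 : m₁.take t₁.length = mm.take t₁.length := by
                conv_lhs => rw [hmc]
                rw [List.take_append]
                rw [show t₁.length - mm.length = 0 by omega]
                simp
              rw [h6, h7]
              exact List.take_prefix _ _
            have hcnt : t₁.count true ≤ mm.count true := ht₁mm.sublist.count_le _
            have hlt : m₁.length - 2 ≤ t₁.length := by omega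
            obtain ⟨x', hobj, hxpre⟩ := obj_make true hp'2 hpre hlt
            refine ⟨m₁.length, x', hp'2, hp'lt, hobj, hxpre.isInfix.trans ?_⟩
            refine mk_infix v₁ v₃ ?_
            rw [hvfull, htc]
            simp [List.append_assoc]
          · exfalso
            apply hW_bbb
            have h8 : u.take (p - 3) = subs t₂ ++ [true] := by
              rw [← hst₁, ht2, subs_append]
              simp [sub]
            have husuf2 : u = subs t₂ ++ ([true, true, true] ++ [false]) := by
              rw [husuf, h8]
              simp
            refine mk_infix (l ++ subs t₂)
              ([false] ++ (u ++ (u ++ (u.take (p - 2) ++ ([false] ++ r))))) ?_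
            rw [hocc]
            nth_rewrite 1 [husuf2]
            simp [List.append_assoc]

lemma step (p : ℕ) (hp : 3 ≤ p) (v : List Bool) (hv : ¬ [false, false] <:+: v)
    (x : List Bool) (hobj : Obj p x) (hx : x <:+: subs v) :
    ∃ p' x', 2 ≤ p' ∧ p' < p ∧ Obj p' x' ∧ x' <:+: v := by
  obtain ⟨u, γ, hu, rfl⟩ := hobj
  obtain ⟨l, r, hocc0⟩ := hx
  have hocc' : subs v = l ++ (u ++ (u ++ (u ++ (u.take (p - 2) ++ ([γ] ++ r))))) := by
    rw [← hocc0]; simp [List.append_assoc]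
  have hW_aa := no_aa v
  have hune : u ≠ [] := by
    intro h
    rw [h] at hu
    simp at hu
    omega
  obtain ⟨u0, u', huc⟩ : ∃ a z, u = a :: z := by
    cases u with
    | nil => exact absurd rfl hune
    | cons a z => exact ⟨a, z, rfl⟩
  cases u0 with
  | true =>
    exact stepB p hp v hv u γ hu ⟨u', huc⟩ l r (by rw [hocc']; simp [List.append_assoc])
  | false =>
    obtain ⟨w, cl, hwc⟩ := concat_decomp hune
    have hcl : cl = true := by
      cases cl
      · exfalso
        apply hW_aa
        refine mk_infix (l ++ w) (u' ++ (u ++ (u.take (p - 2) ++ ([γ] ++ r)))) ?_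
        rw [hocc']
        nth_rewrite 1 [hwc]
        nth_rewrite 1 [huc]
        simp [List.append_assoc]
      · rfl
    rw [hcl] at hwc
    have hwl : w.length = p - 1 := by
      have := congrArg List.length hwc
      simp [hu] at this
      omega
    have h2 : p - 3 < w.length := by omega
    obtain ⟨g2, hg2⟩ := take_decomp (u := w) h2
    rw [show p - 3 + 1 = p - 2 by omega] at hg2
    have htk : u.take (p - 2) = w.take (p - 2) := by
      conv_lhs => rw [hwc]
      rw [List.take_append]
      rw [show p - 2 - w.length = 0 by omega]
      simp
    have hlne : l ≠ [] := by
      intro h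
      rw [h, huc] at hocc'
      rcases subs_head v with h0 | ⟨z, h0⟩ <;> rw [h0] at hocc' <;> simp at hocc'
    obtain ⟨l'', cl2, hlg⟩ := concat_decomp hlne
    have hcl2 : cl2 = true := by
      cases cl2
      · exfalso
        apply hW_aa
        refine mk_infix l'' (u' ++ (u ++ (u ++ (u.take (p - 2) ++ ([γ] ++ r))))) ?_
        rw [hocc', hlg]
        nth_rewrite 1 [huc]
        simp [List.append_assoc]
      · rfl
    rw [hcl2] at hlg
    apply stepB p hp v hv (true :: w) g2 (by simp [hwl]; omega) ⟨w, rfl⟩ l'' (γ :: r)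
    have htkc : (true :: w).take (p - 2) = true :: w.take (p - 3) := by
      rw [show p - 2 = (p - 3) + 1 by omega, List.take_succ_cons]
    rw [htkc, hocc', hlg, htk]
    rw [hwc, hg2]
    simp [List.append_assoc]

lemma base2 (v : List Bool) (hv : ¬ [false, false] <:+: v)
    (hvb : ¬ [true, true, true] <:+: v)
    (x : List Bool) (hobj : Obj 2 x) (hx : x <:+: subs v) : False := by
  obtain ⟨u, γ, hu, rfl⟩ := hobj
  have hW_aa := no_aa v
  have hW_bbb : ¬ [true, true, true] <:+: subs v := fun h => hv (bbb_pull v h)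
  obtain ⟨a, b, hab⟩ : ∃ a b, u = [a, b] := by
    cases u with
    | nil => simp at hu
    | cons a u1 =>
      cases u1 with
      | nil => simp at hu
      | cons b u2 =>
        simp at hu
        rw [hu]
        exact ⟨a, b, rfl⟩
  subst hab
  obtain ⟨l, r, hocc0⟩ := hx
  have hocc : subs v = l ++ ([a, b] ++ ([a, b] ++ ([a, b] ++ ([γ] ++ r)))) := by
    rw [← hocc0]; simp
  cases a <;> cases b
  · -- u = [false, false] : aa at once
    exact hW_aa (mk_infix l ([false, false] ++ ([false, false] ++ ([γ] ++ r)))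
      (by rw [hocc]))
  · -- u = [false, true] : x = f t f t f t γ ; extend left with a true
    have hlne : l ≠ [] := by
      intro h
      rw [h] at hocc
      rcases subs_head v with h0 | ⟨z, h0⟩ <;> rw [h0] at hocc <;> simp at hocc
    obtain ⟨l'', cl2, hlg⟩ := concat_decomp hlne
    have hcl2 : cl2 = true := by
      cases cl2
      · exfalso
        apply hW_aa
        refine mk_infix l'' ([true, false, true, false, true] ++ ([γ] ++ r)) ?_
        rw [hocc, hlg]
        simp
      · rfl
    rw [hcl2] at hlg
    have hocc2 : subs v = l'' ++ ([true, false, true, false, true, false] ++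
        (true :: γ :: r)) := by
      rw [hocc, hlg]
      simp
    obtain ⟨v₁, v₂₃, hv12, hsl, hsz⟩ := split_suffix v l'' _ hocc2 (Or.inr ⟨_, rfl⟩)
    obtain ⟨v₂, v₃, hv23, hsx, hsr⟩ := split_prefix v₂₃ [true, false, true, false, true, false]
      (true :: γ :: r) hsz (Or.inr ⟨_, rfl⟩)
    have hv₂ : v₂ = [true, true, true] := subs_inj (by rw [hsx]; rfl)
    apply hvb
    refine mk_infix v₁ v₃ ?_
    rw [hv12, hv23, hv₂]
  · -- u = [true, false] : x = t f t f t f γ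
    cases γ with
    | false =>
      exact hW_aa (mk_infix (l ++ [true, false, true, false, true]) r
        (by rw [hocc]; simp))
    | true =>
      have hocc2 : subs v = l ++ ([true, false, true, false, true, false] ++
          (true :: r)) := by
        rw [hocc]
        simp
      obtain ⟨v₁, v₂₃, hv12, hsl, hsz⟩ := split_suffix v l _ hocc2 (Or.inr ⟨_, rfl⟩)
      obtain ⟨v₂, v₃, hv23, hsx, hsr⟩ := split_prefix v₂₃ [true, false, true, false, true, false]
        (true :: r) hsz (Or.inr ⟨_, rfl⟩)
      have hv₂ : v₂ = [true, true, true] := subs_inj (by rw [hsx]; rfl)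
      apply hvb
      refine mk_infix v₁ v₃ ?_
      rw [hv12, hv23, hv₂]
  · -- u = [true, true] : bbb
    exact hW_bbb (mk_infix l ([true] ++ ([true, true] ++ ([γ] ++ r)))
      (by rw [hocc]; simp))

lemma fib_subst : ∀ n, fibWord (n + 1) = subs (fibWord n) := by
  intro n
  induction n using Nat.strong_induction_on with
  | _ n ih =>
    match n with
    | 0 => rfl
    | 1 => rfl
    | (k + 2) =>
      show fibWord (k + 3) = subs (fibWord (k + 2))
      have e1 : fibWord (k + 3) = fibWord (k + 2) ++ fibWord (k + 1) := rfl
      have e2 : fibWord (k + 2) = fibWord (k + 1) ++ fibWord k := rfl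
      rw [e2, subs_append, ← ih (k + 1) (by omega), ← ih k (by omega)]
      exact e1

lemma fib_aa : ∀ n, ¬ [false, false] <:+: fibWord n := by
  intro n
  match n with
  | 0 =>
    intro h
    have := h.length_le
    simp [fibWord] at this
  | (n + 1) =>
    rw [fib_subst n]
    exact no_aa _

lemma fib_bbb : ∀ n, ¬ [true, true, true] <:+: fibWord n := by
  intro n
  match n with
  | 0 =>
    intro h
    have := h.length_le
    simp [fibWord] at this
  | (n + 1) =>
    rw [fib_subst n]
    intro h
    exact fib_aa n (bbb_pull _ h)

theorem no_obj : ∀ p, 2 ≤ p → ∀ n x, Obj p x → x <:+: fibWord n → False := by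
  intro p
  induction p using Nat.strong_induction_on with
  | _ p ih =>
    intro hp n x hobj hx
    match n with
    | 0 =>
      obtain ⟨u, γ, hu, rfl⟩ := hobj
      have h1 := hx.length_le
      simp [fibWord, hu] at h1
      omega
    | (n + 1) =>
      rw [fib_subst n] at hx
      rcases Nat.lt_or_ge p 3 with h3 | h3
      · have hp2 : p = 2 := by omega
        subst hp2
        exact base2 (fibWord n) (fib_aa n) (fib_bbb n) x hobj hx
      · obtain ⟨p', x', hp'2, hp'lt, hobj', hx'⟩ := step p h3 (fibWord n) (fib_aa n) x hobj hx
        exact ih p' hp'lt hp'2 n x' hobj' hx'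

theorem no_fourth (n : ℕ) (u : List Bool) (hne : u ≠ []) :
    ¬ (u ++ u ++ u ++ u) <:+: fibWord n := by
  intro h
  rcases Nat.lt_or_ge u.length 2 with h1 | h2
  · obtain ⟨c, rfl⟩ : ∃ c, u = [c] := by
      cases u with
      | nil => exact absurd rfl hne
      | cons c u1 =>
        cases u1 with
        | nil => exact ⟨c, rfl⟩
        | cons d u2 => simp at h1
    cases c
    · exact fib_aa n (List.IsInfix.trans ⟨[], [false, false], by simp⟩ h)
    · exact fib_bbb n (List.IsInfix.trans ⟨[], [true], by simp⟩ h)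
  · obtain ⟨δ, lam, hdec⟩ := drop2 h2
    apply no_obj u.length h2 n (u ++ u ++ u ++ u.take (u.length - 2) ++ [δ])
      ⟨u, δ, rfl, rfl⟩
    obtain ⟨T, hT⟩ : ∃ T, T = u.take (u.length - 2) := ⟨_, rfl⟩
    rw [← hT] at hdec
    refine List.IsInfix.trans (List.IsPrefix.isInfix ⟨[lam], ?_⟩) h
    rw [← hT, hdec]
    simp [List.append_assoc]

lemma four_prefix_rep {u : List Bool} {k : ℕ} (h4 : 4 ≤ k) :
    (u ++ u ++ u ++ u) <+: repList u k := by
  obtain ⟨m, rfl⟩ : ∃ m, k = 4 + m := ⟨k - 4, by omega⟩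
  refine ⟨repList u m, ?_⟩
  simp [repList, List.replicate_add, List.flatten_append, List.append_assoc]

theorem rep_bound (n k : ℕ) (u : List Bool) (hne : u ≠ [])
    (h : repList u k <:+: fibWord n) : k ≤ 3 := by
  by_contra hc
  push_neg at hc
  exact no_fourth n u hne ((four_prefix_rep hc).isInfix.trans h)

end Fib7

namespace Fib7

section ISLPPart

lemma repList_length {α : Type} (w : List α) (k : ℕ) : (repList w k).length = k * w.length := by
  induction k with
  | zero => simp [repList]
  | succ k ih =>
    rw [repList, List.replicate_succ, List.flatten_cons, List.length_append, ← repList, ih]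
    ring

lemma repList_one {α : Type} (w : List α) : repList w 1 = w := by
  simp [repList]

lemma rep_prefix {α : Type} (w : List α) (k : ℕ) (hk : 1 ≤ k) : w <+: repList w k := by
  obtain ⟨m, rfl⟩ : ∃ m, k = m + 1 := ⟨k - 1, by omega⟩
  exact ⟨repList w m, by simp [repList, List.replicate_succ]⟩

lemma mem_rangeK_left (k1 k2 : ℕ) : k1 ∈ rangeK k1 k2 := by
  unfold rangeK
  split
  · exact List.mem_map.mpr ⟨0, by simp; omega, by simp⟩
  · exact List.mem_map.mpr ⟨0, by simp; omega, by simp⟩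

lemma mem_rangeK_right (k1 k2 : ℕ) : k2 ∈ rangeK k1 k2 := by
  unfold rangeK
  split
  · next h => exact List.mem_map.mpr ⟨k2 - k1, by simp; omega, by omega⟩
  · next h => exact List.mem_map.mpr ⟨k1 - k2, by simp; omega, by omega⟩

lemma rangeK_length_le {k1 k2 : ℕ} (h1 : 1 ≤ k1) (h2 : 1 ≤ k2) (h3 : k1 ≤ 3) (h4 : k2 ≤ 3) :
    (rangeK k1 k2).length ≤ 3 := by
  unfold rangeK
  split <;> simp <;> omega

lemma block_infix {ps : List (List Bool × ℕ)} {pr : List Bool × ℕ} (hpr : pr ∈ ps) (i : ℕ) :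
    repList pr.1 (i ^ pr.2) <:+: iterBlock ps i := by
  unfold iterBlock
  exact List.infix_of_mem_flatten (List.mem_map_of_mem hpr)

lemma iterExpand_block_infix {k1 k2 i : ℕ} {ps : List (List Bool × ℕ)}
    (hi : i ∈ rangeK k1 k2) : iterBlock ps i <:+: iterExpand k1 k2 ps := by
  unfold iterExpand
  exact List.infix_of_mem_flatten (List.mem_map_of_mem hi)

variable {d : ℕ} (G : ISLP Bool d)

lemma rule_size_pos (R : ISLPRule Bool G.N) : 1 ≤ R.size := by
  cases R <;> simp [ISLPRule.size] <;> omega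

/-- the potential of a variable -/
def pot (A : Fin G.N) : ℕ :=
  ∏ B ∈ Finset.univ.filter (· ≤ A), 9 * (G.rule B).size

lemma pot_pos (A : Fin G.N) : 1 ≤ pot G A := by
  apply Finset.one_le_prod'
  intro i _
  have := rule_size_pos G (G.rule i)
  omega

lemma pot_eq (A : Fin G.N) :
    pot G A = (∏ B ∈ Finset.univ.filter (· < A), 9 * (G.rule B).size) * (9 * (G.rule A).size) := by
  unfold pot
  have h : Finset.univ.filter (· ≤ A) = insert A (Finset.univ.filter (· < A)) := by
    ext B
    simp [le_iff_lt_or_eq]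
    tauto
  rw [h, Finset.prod_insert (by simp)]
  ring

lemma pot_le_of_lt {B A : Fin G.N} (h : B < A) :
    pot G B ≤ ∏ B' ∈ Finset.univ.filter (· < A), 9 * (G.rule B').size := by
  apply Finset.prod_le_prod_of_subset_of_one_le'
  · intro x hx
    simp only [Finset.mem_filter, Finset.mem_univ, true_and] at hx ⊢
    exact lt_of_le_of_lt hx h
  · intro x _ _
    have := rule_size_pos G (G.rule x)
    omega

lemma expands_len_pos : ∀ {A : Fin G.N} {w : List Bool},
    ISLP.Expands G.rule A w → 0 < w.length := by
  intro A w h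
  induction h with
  | term _ => simp
  | pair _ hu hv ihu ihv => simp; omega
  | @iter A k1 k2 Bs ps hrule hsnd hexp ih =>
    have hok := G.ok A
    rw [hrule] at hok
    obtain ⟨hk1, hk2, hBs, _⟩ := hok
    have hlen : Bs.length = ps.length := by have h0 := congrArg List.length hsnd; simp at h0; omega
    obtain ⟨b0, Bs', rfl⟩ : ∃ b0 Bs', Bs = b0 :: Bs' := by
      cases Bs with
      | nil => exact absurd rfl hBs
      | cons b0 Bs' => exact ⟨b0, Bs', rfl⟩
    obtain ⟨p0, ps', rfl⟩ : ∃ p0 ps', ps = p0 :: ps' := by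
      cases ps with
      | nil => simp at hlen
      | cons p0 ps' => exact ⟨p0, ps', rfl⟩
    have h0 : 0 < p0.1.length := ih (b0, p0) (by simp)
    have hinf : repList p0.1 (k1 ^ p0.2) <:+: iterExpand k1 k2 (p0 :: ps') :=
      (block_infix (List.mem_cons_self) k1).trans
        (iterExpand_block_infix (mem_rangeK_left k1 k2))
    have hpow : 1 ≤ k1 ^ p0.2 := Nat.one_le_pow _ _ (by omega)
    have h2 := ((rep_prefix p0.1 _ hpow).isInfix.trans hinf).length_le
    omega

lemma expands_len_le (nT : ℕ) : ∀ {A : Fin G.N} {w : List Bool},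
    ISLP.Expands G.rule A w → w <:+: fibWord nT → w.length ≤ pot G A := by
  intro A w h
  induction h with
  | @term A a hr =>
    intro _
    simpa using pot_pos G A
  | @pair A B C uu vv hr hu hv ihu ihv =>
    intro hw
    have hBlt : B < A := G.acyclic A B (by rw [hr]; simp [ISLPRule.vars])
    have hClt : C < A := G.acyclic A C (by rw [hr]; simp [ISLPRule.vars])
    have h1 : uu.length ≤ pot G B := ihu ((List.prefix_append uu vv).isInfix.trans hw)
    have h2 : vv.length ≤ pot G C := ihv ((List.suffix_append uu vv).isInfix.trans hw)
    have h3 := pot_le_of_lt G hBlt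
    have h4 := pot_le_of_lt G hClt
    rw [List.length_append]
    calc uu.length + vv.length
        ≤ (∏ B' ∈ Finset.univ.filter (· < A), 9 * (G.rule B').size) * 2 := by omega
      _ ≤ (∏ B' ∈ Finset.univ.filter (· < A), 9 * (G.rule B').size) * (9 * (G.rule A).size) := by
          have := rule_size_pos G (G.rule A)
          exact Nat.mul_le_mul_left _ (by omega)
      _ = pot G A := (pot_eq G A).symm
  | @iter A k1 k2 Bs ps hr hsnd hexp ih =>
    intro hw
    have hok := G.ok A
    rw [hr] at hok
    obtain ⟨hk1, hk2, hBs, _⟩ := hok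
    have hlen : Bs.length = ps.length := by have h0 := congrArg List.length hsnd; simp at h0; omega
    have hps : ps ≠ [] := by
      intro h0
      rw [h0] at hlen
      simp at hlen
      exact hBs hlen
    -- key facts for each pair in ps
    have key : ∀ pr ∈ ps, pr.1.length ≤ ∏ B' ∈ Finset.univ.filter (· < A),
        9 * (G.rule B').size ∧ pr.1 ≠ [] ∧ ∀ i ∈ rangeK k1 k2, i ^ pr.2 ≤ 3 := by
      intro pr hpr
      obtain ⟨j, hj, hpj⟩ := List.mem_iff_getElem.mp hpr
      have hjB : j < Bs.length := by omega
      have hq : (Bs[j], ps[j]) ∈ Bs.zip ps := by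
        have : (Bs.zip ps)[j]'(by rw [List.length_zip]; omega) = (Bs[j], ps[j]) :=
          List.getElem_zip ..
        rw [← this]
        exact List.getElem_mem _
      have hexpj : ISLP.Expands G.rule Bs[j].1 ps[j].1 := hexp _ hq
      have hBlt : Bs[j].1 < A := by
        apply G.acyclic A
        rw [hr]
        simp only [ISLPRule.vars, List.mem_map]
        exact ⟨Bs[j], List.getElem_mem _, rfl⟩
      have hne : ps[j].1 ≠ [] := by
        have := expands_len_pos G hexpj
        intro h0
        rw [h0] at this
        simp at this
      have hinf : ∀ i ∈ rangeK k1 k2, repList ps[j].1 (i ^ ps[j].2) <:+: fibWord nT := by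
        intro i hi
        exact ((block_infix (hpj ▸ hpr) i).trans (iterExpand_block_infix hi)).trans hw
      rw [← hpj]
      refine ⟨?_, hne, ?_⟩
      · have hin : ps[j].1 <:+: fibWord nT := by
          have h1 := hinf k1 (mem_rangeK_left k1 k2)
          exact ((rep_prefix _ _ (Nat.one_le_pow _ _ (by omega))).isInfix).trans h1
        exact (ih _ hq hin).trans (pot_le_of_lt G hBlt)
      · intro i hi
        exact rep_bound nT _ _ hne (hinf i hi)
    -- now the length bound
    set P := ∏ B' ∈ Finset.univ.filter (· < A), 9 * (G.rule B').size with hP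
    set S := (ps.map (fun pr => pr.1.length)).sum with hS
    have hblock : ∀ i ∈ rangeK k1 k2, (iterBlock ps i).length ≤ 3 * S := by
      intro i hi
      have h1 : (iterBlock ps i).length
          = (ps.map (fun pr => (repList pr.1 (i ^ pr.2)).length)).sum := by
        unfold iterBlock
        rw [List.length_flatten, List.map_map]
        rfl
      rw [h1]
      calc (ps.map (fun pr => (repList pr.1 (i ^ pr.2)).length)).sum
          ≤ (ps.map (fun pr => 3 * pr.1.length)).sum := by
            apply List.sum_le_sum
            intro pr hpr
            rw [repList_length]
            exact Nat.mul_le_mul_right _ ((key pr hpr).2.2 i hi)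
        _ = 3 * S := by
            rw [hS]
            exact List.sum_map_mul_left ps (fun pr => pr.1.length) 3 ▸ rfl
    have hrl : (rangeK k1 k2).length ≤ 3 := by
      by_cases hc : ∀ pr ∈ ps, pr.2 = 0
      · -- all exponents zero: w is a power of a fixed nonempty block
        obtain ⟨p0, ps', hps0⟩ : ∃ p0 ps', ps = p0 :: ps' := by
          cases ps with
          | nil => exact absurd rfl hps
          | cons p0 ps' => exact ⟨p0, ps', rfl⟩
        have hconst : ∀ i, iterBlock ps i = (ps.map Prod.fst).flatten := by
          intro i
          unfold iterBlock
          congr 1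
          apply List.map_congr_left
          intro pr hpr
          rw [hc pr hpr, pow_zero, repList_one]
        have hwrep : iterExpand k1 k2 ps = repList ((ps.map Prod.fst).flatten)
            (rangeK k1 k2).length := by
          unfold iterExpand
          rw [List.map_congr_left (fun i _ => hconst i)]
          rw [List.map_const']
          rfl
        have hbne : (ps.map Prod.fst).flatten ≠ [] := by
          rw [hps0]
          simp only [List.map_cons, List.flatten_cons]
          intro h0
          rcases List.append_eq_nil_iff.mp h0 with ⟨h1, _⟩
          exact (key p0 (hps0 ▸ List.mem_cons_self)).2.1 h1
        apply rep_bound nT _ _ hbne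
        rw [← hwrep]
        exact hw
      · push_neg at hc
        obtain ⟨pr, hpr, hc2⟩ := hc
        have hb : ∀ i ∈ rangeK k1 k2, i ≤ 3 := by
          intro i hi
          have h1 := (key pr hpr).2.2 i hi
          have h2 : i ≤ i ^ pr.2 := Nat.le_self_pow hc2 i
          omega
        exact rangeK_length_le hk1 hk2 (hb k1 (mem_rangeK_left k1 k2))
          (hb k2 (mem_rangeK_right k1 k2))
    have hwlen : (iterExpand k1 k2 ps).length ≤ 9 * S := by
      have h1 : (iterExpand k1 k2 ps).length
          = ((rangeK k1 k2).map (fun i => (iterBlock ps i).length)).sum := by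
        unfold iterExpand
        rw [List.length_flatten, List.map_map]
        rfl
      rw [h1]
      calc ((rangeK k1 k2).map (fun i => (iterBlock ps i).length)).sum
          ≤ ((rangeK k1 k2).map (fun i => (iterBlock ps i).length)).length • (3 * S) := by
            apply List.sum_le_card_nsmul
            intro x hx
            simp only [List.mem_map] at hx
            obtain ⟨i, hi, rfl⟩ := hx
            exact hblock i hi
        _ = (rangeK k1 k2).length • (3 * S) := by simp
        _ ≤ 3 * (3 * S) := by
            simp only [smul_eq_mul]
            exact Nat.mul_le_mul_right _ hrl
        _ = 9 * S := by ring
    have hSP : S ≤ ps.length * P := by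
      rw [hS]
      calc (ps.map (fun pr => pr.1.length)).sum ≤ (ps.map (fun pr => pr.1.length)).length • P := by
            apply List.sum_le_card_nsmul
            intro x hx
            simp only [List.mem_map] at hx
            obtain ⟨pr, hpr, rfl⟩ := hx
            exact (key pr hpr).1
        _ = ps.length * P := by simp
    calc (iterExpand k1 k2 ps).length ≤ 9 * S := hwlen
      _ ≤ 9 * (ps.length * P) := Nat.mul_le_mul_left _ hSP
      _ ≤ P * (9 * (2 + 2 * Bs.length)) := by rw [hlen]; ring_nf; nlinarith [pot_pos G A]
      _ = pot G A := by
          rw [pot_eq G A, hr]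
          rfl

lemma nine_mul_le_nine_pow {s : ℕ} (h : 1 ≤ s) : 9 * s ≤ 9 ^ s := by
  obtain ⟨m, rfl⟩ : ∃ m, s = m + 1 := ⟨s - 1, by omega⟩
  have h1 : m + 1 ≤ 9 ^ m := Nat.succ_le_of_lt (Nat.lt_pow_self (n := m) (a := 9) (by norm_num))
  calc 9 * (m + 1) ≤ 9 * 9 ^ m := Nat.mul_le_mul_left _ h1
    _ = 9 ^ (m + 1) := by rw [pow_succ]; ring

theorem gen_len_le {d : ℕ} (G : ISLP Bool d) (nT : ℕ) (h : G.Generates (fibWord nT)) :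
    (fibWord nT).length ≤ 9 ^ G.size := by
  have h1 : (fibWord nT).length ≤ pot G G.start :=
    expands_len_le G nT h (List.infix_refl _)
  have h2 : pot G G.start ≤ ∏ B : Fin G.N, 9 * (G.rule B).size := by
    apply Finset.prod_le_prod_of_subset_of_one_le'
    · exact Finset.filter_subset _ _
    · intro x _ _
      have := rule_size_pos G (G.rule x)
      omega
  have h3 : (∏ B : Fin G.N, 9 * (G.rule B).size) ≤ ∏ B : Fin G.N, 9 ^ (G.rule B).size := by
    apply Finset.prod_le_prod'
    intro i _
    exact nine_mul_le_nine_pow (rule_size_pos G (G.rule i))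
  have h4 : (∏ B : Fin G.N, 9 ^ (G.rule B).size) = 9 ^ G.size := by
    rw [ISLP.size, Finset.prod_pow_eq_pow_sum]
  omega

end ISLPPart

end Fib7



namespace Fib7

section Existence

variable (d : ℕ)

def slpRule (i : ℕ) : Fin (i + 1) → ISLPRule Bool (i + 1) := fun j =>
  if j.val = 0 then .term false
  else if j.val = 1 then .term true
  else .pair ⟨j.val - 1, by have := j.isLt; omega⟩ ⟨j.val - 2, by have := j.isLt; omega⟩

def slpG (i : ℕ) : ISLP Bool d where
  N := i + 1
  rule := slpRule i
  start := ⟨i, by omega⟩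
  ok := by
    intro A
    unfold slpRule
    split
    · trivial
    split
    · trivial
    · exact trivial
  acyclic := by
    intro A B hB
    unfold slpRule at hB
    split at hB
    · simp [ISLPRule.vars] at hB
    split at hB
    · simp [ISLPRule.vars] at hB
    · next h0 h1 =>
      simp [ISLPRule.vars] at hB
      rcases hB with rfl | rfl <;> (rw [Fin.lt_def]; dsimp only; omega)

lemma slp_expands (i : ℕ) : ∀ j : ℕ, ∀ (hj : j < i + 1),
    ISLP.Expands (slpRule i) ⟨j, hj⟩ (fibWord j) := by
  intro j
  induction j using Nat.strong_induction_on with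
  | _ j ih =>
    intro hj
    match j with
    | 0 => exact ISLP.Expands.term (by simp [slpRule])
    | 1 => exact ISLP.Expands.term (by simp [slpRule])
    | (k + 2) =>
      have e : fibWord (k + 2) = fibWord (k + 1) ++ fibWord k := rfl
      rw [e]
      refine ISLP.Expands.pair (B := ⟨k + 1, by omega⟩) (C := ⟨k, by omega⟩) ?_
        (ih (k + 1) (by omega) (by omega)) (ih k (by omega) (by omega))
      simp [slpRule]

lemma slpG_gen (i : ℕ) : (slpG d i).Generates (fibWord i) :=
  slp_expands i i (by omega)

lemma fib_gIt_lb (i : ℕ) : (fibWord i).length ≤ 9 ^ gIt Bool d (fibWord i) := by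
  have hne : {g : ℕ | ∃ G : ISLP Bool d, G.Generates (fibWord i) ∧ G.size = g}.Nonempty :=
    ⟨(slpG d i).size, slpG d i, slpG_gen d i, rfl⟩
  obtain ⟨G, hgen, hsz⟩ := Nat.sInf_mem hne
  rw [gIt, ← hsz]
  exact gen_len_le G i hgen

end Existence

section LSys

def enc : Bool → Fin 2 := fun b => if b then 1 else 0

def Lfib (i : ℕ) : LSystem Bool where
  m := 2
  phi := fun v => if v = 1 then [1, 0] else [1]
  phiNE := by
    intro v
    split <;> simp
  tau := fun v => decide (v = 1)
  start := 1
  depth := i - 1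
  len := (fibWord i).length

lemma flatMap_enc (i : ℕ) (w : List Bool) :
    (w.map enc).flatMap (Lfib i).phi = (subs w).map enc := by
  induction w with
  | nil => rfl
  | cons c w ih =>
    erw [List.map_cons, List.flatMap_cons, ih, subs_cons, List.map_append]
    congr 1
    cases c <;> rfl

lemma Lfib_word (i : ℕ) (hi : 1 ≤ i) : (Lfib i).word = (fibWord i).map enc := by
  have key : ∀ k, (fun w => w.flatMap (Lfib i).phi)^[k] [(1 : Fin 2)]
      = (fibWord (k + 1)).map enc := by
    intro k
    induction k with
    | zero => rfl
    | succ k ih =>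
      erw [Function.iterate_succ_apply', ih, flatMap_enc, ← fib_subst]
  have h2 := key (i - 1)
  rw [show i - 1 + 1 = i by omega] at h2
  exact h2

lemma Lfib_gen (i : ℕ) (hi : 1 ≤ i) : (Lfib i).Generates (fibWord i) := by
  have htau : (Lfib i).tau ∘ enc = id := by
    funext b
    cases b <;> rfl
  constructor
  · rw [Lfib_word i hi]
    simp [Lfib]
  · erw [Lfib_word i hi, List.map_map, htau, List.map_id]
    show fibWord i = (fibWord i).take (Lfib i).len
    rw [show (Lfib i).len = (fibWord i).length from rfl, List.take_length]

lemma Lfib_size (i : ℕ) : (Lfib i).size = 3 := by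
  show (∑ v : Fin 2, ((Lfib i).phi v).length) = 3
  rw [Fin.sum_univ_two]
  rfl

end LSys

lemma fib_len_pos : ∀ n, 0 < (fibWord n).length := by
  intro n
  match n with
  | 0 => simp [fibWord]
  | 1 => simp [fibWord]
  | (k + 2) =>
    have e : fibWord (k + 2) = fibWord (k + 1) ++ fibWord k := rfl
    rw [e]
    simp
    have := fib_len_pos k
    omega

end Fib7

/-- For every `d ≥ 0` there exist constants `C` and `c > 0`
such that for all `i ≥ 2`: `g_{it(d)}(F_i) ≥ c·log₂|F_i|` while `ℓ(F_i) ≤ C`;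
on Fibonacci words, `g_{it(d)} = Ω(log n)` while `ℓ = O(1)`. -/
theorem gIt_fibWord_vs_ell (d : ℕ) :
    ∃ (C : ℕ) (c : ℝ), 0 < c ∧ ∀ i : ℕ, 2 ≤ i →
      c * Real.logb 2 ((fibWord i).length) ≤ (gIt Bool d (fibWord i) : ℝ) ∧
      ell (fibWord i) ≤ C := by
  have hlogb : (0 : ℝ) < Real.logb 2 9 := Real.logb_pos (by norm_num) (by norm_num)
  refine ⟨3, (Real.logb 2 9)⁻¹, by positivity, ?_⟩
  intro i hi
  constructor
  · have hlen := Fib7.fib_gIt_lb d i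
    set g := gIt Bool d (fibWord i) with hg
    have hpos := Fib7.fib_len_pos i
    have hcast : ((fibWord i).length : ℝ) ≤ (9 : ℝ) ^ g := by exact_mod_cast hlen
    have hlog : Real.logb 2 ((fibWord i).length) ≤ Real.logb 2 ((9 : ℝ) ^ g) :=
      Real.logb_le_logb_of_le (by norm_num) (by exact_mod_cast hpos) hcast
    rw [Real.logb_pow] at hlog
    calc (Real.logb 2 9)⁻¹ * Real.logb 2 ((fibWord i).length)
        ≤ (Real.logb 2 9)⁻¹ * (g * Real.logb 2 9) := by
          apply mul_le_mul_of_nonneg_left hlog (by positivity)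
      _ = g := by field_simp
  · exact Nat.sInf_le ⟨Fib7.Lfib i, Fib7.Lfib_gen i (by omega), Fib7.Lfib_size i⟩
end

section
/- For every integer d ≥ 0 and every d-ISLP G of size g generating a string T, there exists a d-ISLP of size at most g generating the reversed string T^R. -/
section RevAux

open List

lemma zip_reverse_aux {β γ : Type*} : ∀ (l₁ : List β) (l₂ : List γ), l₁.length = l₂.length →
    l₁.reverse.zip l₂.reverse = (l₁.zip l₂).reverse := by
  intro l₁
  induction l₁ with
  | nil => intro l₂ h; simp
  | cons a l ih =>
    intro l₂ h
    cases l₂ with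
    | nil => simp at h
    | cons b l₂ =>
      simp only [length_cons, Nat.succ_inj] at h
      simp only [reverse_cons, zip_cons_cons]
      rw [List.zip_append (by simp [h]), ih l₂ h]
      simp

lemma repList_reverse {α : Type} (w : List α) (k : ℕ) :
    (repList w k).reverse = repList w.reverse k := by
  simp [repList, List.reverse_flatten, List.map_replicate, List.reverse_replicate]

lemma iterBlock_reverse {α : Type} (ps : List (List α × ℕ)) (i : ℕ) :
    (iterBlock ps i).reverse
      = iterBlock (ps.reverse.map (fun p => (p.1.reverse, p.2))) i := by
  simp only [iterBlock, List.reverse_flatten, ← List.map_reverse, List.map_map]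
  congr 1
  apply List.map_congr_left
  intro p _
  simp [Function.comp, repList_reverse]

lemma range_map_reverse (f : ℕ → ℕ) (n : ℕ) :
    ((List.range n).map f).reverse = (List.range n).map (fun j => f (n - 1 - j)) := by
  rw [← List.map_reverse]
  have : (List.range n).reverse = (List.range n).map (fun j => n - 1 - j) := by
    have h : (List.range' 0 n).reverse = _ := List.reverse_range'
    rw [← List.range_eq_range'] at h
    simpa using h
  rw [this, List.map_map]
  rfl

lemma rangeK_reverse (k1 k2 : ℕ) : (rangeK k1 k2).reverse = rangeK k2 k1 := by
  unfold rangeK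
  by_cases h : k1 ≤ k2
  · rw [if_pos h, range_map_reverse]
    by_cases h2 : k2 ≤ k1
    · rw [if_pos h2]
      obtain rfl : k1 = k2 := le_antisymm h h2
      apply List.map_congr_left
      intro j hj
      simp only [List.mem_range] at hj
      omega
    · rw [if_neg h2]
      apply List.map_congr_left
      intro j hj
      simp only [List.mem_range] at hj
      omega
  · rw [if_neg h, if_pos (by omega), range_map_reverse]
    apply List.map_congr_left
    intro j hj
    simp only [List.mem_range] at hj
    omega

lemma iterExpand_reverse {α : Type} (k1 k2 : ℕ) (ps : List (List α × ℕ)) :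
    (iterExpand k1 k2 ps).reverse
      = iterExpand k2 k1 (ps.reverse.map (fun p => (p.1.reverse, p.2))) := by
  simp only [iterExpand, List.reverse_flatten, ← List.map_reverse, rangeK_reverse,
    List.map_map]
  congr 1
  apply List.map_congr_left
  intro i _
  exact iterBlock_reverse ps i

/-- Reversal of a rule. -/
def revRule {α : Type} {N : ℕ} : ISLPRule α N → ISLPRule α N
  | .term a => .term a
  | .pair B C => .pair C B
  | .iter k1 k2 Bs => .iter k2 k1 Bs.reverse

lemma revRule_size {α : Type} {N : ℕ} (r : ISLPRule α N) : (revRule r).size = r.size := by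
  cases r <;> simp [revRule, ISLPRule.size]

lemma revRule_ok {α : Type} {N : ℕ} {d : ℕ} (r : ISLPRule α N) (h : r.Ok d) :
    (revRule r).Ok d := by
  cases r with
  | term a => trivial
  | pair B C => trivial
  | iter k1 k2 Bs =>
    obtain ⟨h1, h2, h3, h4⟩ := h
    exact ⟨h2, h1, by simpa using h3, fun p hp => h4 p (List.mem_reverse.mp hp)⟩

lemma revRule_vars {α : Type} {N : ℕ} (r : ISLPRule α N) {B : Fin N} :
    B ∈ (revRule r).vars ↔ B ∈ r.vars := by
  cases r <;> simp [revRule, ISLPRule.vars] <;> tauto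

lemma expands_reverse {α : Type} {N : ℕ} (rule : Fin N → ISLPRule α N)
    {A : Fin N} {w : List α} (h : ISLP.Expands rule A w) :
    ISLP.Expands (fun X => revRule (rule X)) A w.reverse := by
  induction h with
  | term hr => exact ISLP.Expands.term (show revRule _ = _ by rw [hr]; rfl)
  | pair hr _ _ ihu ihv =>
    rw [List.reverse_append]
    exact ISLP.Expands.pair (show revRule _ = _ by rw [hr]; rfl) ihv ihu
  | @iter A k1 k2 Bs ps hr hsnd _ ih =>
    rw [iterExpand_reverse]
    have hlen : Bs.length = ps.length := by
      have := congrArg List.length hsnd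
      simpa using this.symm
    refine ISLP.Expands.iter (rule := fun X => revRule (rule X)) (Bs := Bs.reverse)
      (ps := ps.reverse.map (fun p => (p.1.reverse, p.2)))
      (show revRule (rule A) = ISLPRule.iter k2 k1 Bs.reverse by rw [hr]; rfl) ?_ ?_
    · rw [List.map_map]
      have hpf : (Prod.snd ∘ fun p : List α × ℕ => (p.1.reverse, p.2)) = Prod.snd := rfl
      rw [hpf]
      have h2 := congrArg List.reverse hsnd
      simpa using h2
    · intro q hq
      rw [List.zip_map_right, zip_reverse_aux Bs ps hlen, List.mem_map] at hq
      obtain ⟨q', hq', rfl⟩ := hq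
      exact ih q' (List.mem_reverse.mp hq')

end RevAux

/-- For every `d ≥ 0` and every `d`-ISLP `G` generating `T`,
there is a `d`-ISLP of size at most that of `G` generating the reversal `T^R`. -/
theorem islp_reverse {α : Type} [Fintype α] (d : ℕ) (G : ISLP α d) (T : List α)
    (hG : G.Generates T) :
    ∃ G' : ISLP α d, G'.Generates T.reverse ∧ G'.size ≤ G.size := by
  refine ⟨⟨G.N, fun A => revRule (G.rule A), G.start,
    fun A => revRule_ok _ (G.ok A),
    fun A B hB => G.acyclic A B ((revRule_vars (G.rule A)).mp hB)⟩,
    expands_reverse G.rule hG, le_of_eq ?_⟩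
  exact Finset.sum_congr rfl fun A _ => revRule_size _
end
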